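/- arXiv:2209.04740 — 4 statements merged into one kernel-verified Lean document; each statement's English description precedes it below -/
import Mathlib

section
/- Let Z_3 ⊆ {0,1}^2 be the configuration consisting of two adjacent vertices of Q_2, e.g. Z_3 = {(0,0),(0,1)}. Then the 2-cube density of Z_3 satisfies λ(Z_3,2) = 1/2. -/
open Filter

namespace CubeDensity

/-- The automorphism of `Q_d` given by permuting coordinates by `σ` and then
complementing the values in the coordinates where `ε` is `true`. -/
def autMap (d : ℕ) (σ : Equiv.Perm (Fin d)) (ε : Fin d → Bool) (v : Fin d → Bool) :
    Fin d → Bool :=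
  fun i => xor (v (σ⁻¹ i)) (ε i)

/-- `K` is an exact copy of `H` in `Q_d`: some automorphism of `Q_d` maps `H` onto `K`. -/
def ExactCopy (d : ℕ) (H K : Set (Fin d → Bool)) : Prop :=
  ∃ σ : Equiv.Perm (Fin d), ∃ ε : Fin d → Bool, autMap d σ ε '' H = K

/-- The vertex of `Q_n` in the sub-`d`-cube with flip coordinates `F` (and fixed values `g`
outside `F`) corresponding to the vertex `u` of `Q_d`, identifying the flip coordinates
with `Fin d` in increasing order. -/
def embed {n d : ℕ} (F : Finset (Fin n)) (hF : F.card = d) (g : Fin n → Bool)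
    (u : Fin d → Bool) : Fin n → Bool :=
  fun i => if h : i ∈ F then u ((F.orderIsoOfFin hF).symm ⟨i, h⟩) else g i

/-- The sub-`d`-cube of `Q_n` with flip coordinates `F` and fixed values `g` outside `F`
is `H`-good for `S`: the configuration induced by `S` on it is an exact copy of `H`. -/
def IsGood {n d : ℕ} (H : Set (Fin d → Bool)) (S : Set (Fin n → Bool))
    (F : Finset (Fin n)) (hF : F.card = d) (g : Fin n → Bool) : Prop :=
  ExactCopy d H {u : Fin d → Bool | embed F hF g u ∈ S}

/-- The number of `H`-good sub-`d`-cubes of `Q_n`, where a sub-`d`-cube is encoded as a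
pair `(F, g)` with `F` the `d`-element set of flip coordinates and `g` the fixed values
outside `F` (normalized to be `false` on `F`). -/
noncomputable def goodCount (d : ℕ) (H : Set (Fin d → Bool)) (n : ℕ)
    (S : Set (Fin n → Bool)) : ℕ :=
  Nat.card {p : Finset (Fin n) × (Fin n → Bool) //
    ∃ hF : p.1.card = d, (∀ i ∈ p.1, p.2 i = false) ∧ IsGood H S p.1 hF p.2}

/-- `g(H,d,n,S)`: the fraction of the `C(n,d) * 2^(n-d)` sub-`d`-cubes of `Q_n` that are
`H`-good for `S`. -/
noncomputable def gFrac (d : ℕ) (H : Set (Fin d → Bool)) (n : ℕ)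
    (S : Set (Fin n → Bool)) : ℝ :=
  (goodCount d H n S : ℝ) / ((n.choose d : ℝ) * 2 ^ (n - d))

/-- `ex(H,d,n)`: the maximum over all `S ⊆ {0,1}^n` of the fraction of `H`-good
sub-`d`-cubes. -/
noncomputable def exD (d : ℕ) (H : Set (Fin d → Bool)) (n : ℕ) : ℝ :=
  ⨆ S : Set (Fin n → Bool), gFrac d H n S

/-! ### Auxiliary material for the proof of `dCubeDensity_Z3` -/

open Finset
open scoped Classical

/-- The configuration `Z₃`. -/
def Z3 : Set (Fin 2 → Bool) := {![false, false], ![false, true]}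

lemma autMap_image (d : ℕ) (σ : Equiv.Perm (Fin d)) (ε : Fin d → Bool) (k : Fin d) (c : Bool) :
    autMap d σ ε '' {v | v k = c} = {w | w (σ k) = xor c (ε (σ k))} := by
  ext w
  constructor
  · rintro ⟨v, hv, rfl⟩
    simp only [Set.mem_setOf_eq] at hv ⊢
    simp [autMap, hv]
  · intro hw
    refine ⟨fun i => xor (w (σ i)) (ε (σ i)), ?_, ?_⟩
    · simp only [Set.mem_setOf_eq] at hw ⊢
      rw [hw]
      cases c <;> cases ε (σ k) <;> rfl
    · funext i
      simp [autMap]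

lemma eta2 (v : Fin 2 → Bool) : v = ![v 0, v 1] := by
  funext i
  fin_cases i <;> simp

lemma Z3_eq : Z3 = {v | v 0 = false} := by
  ext v
  rw [eta2 v]
  cases h0 : v 0 <;> cases h1 : v 1 <;>
    simp [Z3, Set.mem_insert_iff, funext_iff, Fin.forall_fin_two]

lemma exactCopy_iff (K : Set (Fin 2 → Bool)) :
    ExactCopy 2 Z3 K ↔ ∃ (k : Fin 2) (c : Bool), K = {v | v k = c} := by
  rw [Z3_eq]
  constructor
  · rintro ⟨σ, ε, rfl⟩
    exact ⟨σ 0, xor false (ε (σ 0)), autMap_image 2 σ ε 0 false⟩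
  · rintro ⟨k, c, rfl⟩
    refine ⟨Equiv.swap 0 k, fun _ => c, ?_⟩
    rw [autMap_image]
    simp [Equiv.swap_apply_left]

lemma setform_iff (K : Set (Fin 2 → Bool)) :
    (∃ (k : Fin 2) (c : Bool), K = {v | v k = c}) ↔
      ((![false, false] ∈ K ↔ ![true, true] ∉ K) ∧ (![false, true] ∈ K ↔ ![true, false] ∉ K)) := by
  constructor
  · rintro ⟨k, c, rfl⟩
    fin_cases k <;> cases c <;> simp [Set.mem_setOf_eq]
  · rintro ⟨h1, h2⟩
    by_cases hp : ![false, false] ∈ K <;> by_cases hq : ![false, true] ∈ K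
    · refine ⟨0, false, ?_⟩
      have hr := h2.mp hq
      have hs := h1.mp hp
      ext v
      rw [eta2 v]
      cases h0 : v 0 <;> cases h1' : v 1 <;> simp [Set.mem_setOf_eq, hp, hq, hr, hs]
    · refine ⟨1, false, ?_⟩
      have hr : ![true, false] ∈ K := by
        by_contra hr; exact hq (h2.mpr hr)
      have hs := h1.mp hp
      ext v
      rw [eta2 v]
      cases h0 : v 0 <;> cases h1' : v 1 <;> simp [Set.mem_setOf_eq, hp, hq, hr, hs]
    · refine ⟨1, true, ?_⟩
      have hs : ![true, true] ∈ K := by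
        by_contra hs; exact hp (h1.mpr hs)
      have hr := h2.mp hq
      ext v
      rw [eta2 v]
      cases h0 : v 0 <;> cases h1' : v 1 <;> simp [Set.mem_setOf_eq, hp, hq, hr, hs]
    · refine ⟨0, true, ?_⟩
      have hs : ![true, true] ∈ K := by
        by_contra hs; exact hp (h1.mpr hs)
      have hr : ![true, false] ∈ K := by
        by_contra hr; exact hq (h2.mpr hr)
      ext v
      rw [eta2 v]
      cases h0 : v 0 <;> cases h1' : v 1 <;> simp [Set.mem_setOf_eq, hp, hq, hr, hs]

section Pairs

variable {n : ℕ}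

lemma orderEmb_pair {i j : Fin n} (hij : i < j)
    (hF : ({i, j} : Finset (Fin n)).card = 2) :
    ∀ m : Fin 2, ({i, j} : Finset (Fin n)).orderEmbOfFin hF m = ![i, j] m := by
  intro m
  rw [← orderEmbOfFin_unique hF (f := ![i, j]) ?_ ?_]
  · intro x; fin_cases x <;> simp
  · intro a b hab
    fin_cases a <;> fin_cases b <;> simp_all

lemma iso_symm_pair_left {i j : Fin n} (hij : i < j)
    (hF : ({i, j} : Finset (Fin n)).card = 2) (h : i ∈ ({i, j} : Finset (Fin n))) :
    (({i, j} : Finset (Fin n)).orderIsoOfFin hF).symm ⟨i, h⟩ = 0 := by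
  have := orderEmb_pair hij hF 0
  rw [OrderIso.symm_apply_eq]
  exact Subtype.ext (by simpa using this.symm)

lemma iso_symm_pair_right {i j : Fin n} (hij : i < j)
    (hF : ({i, j} : Finset (Fin n)).card = 2) (h : j ∈ ({i, j} : Finset (Fin n))) :
    (({i, j} : Finset (Fin n)).orderIsoOfFin hF).symm ⟨j, h⟩ = 1 := by
  have := orderEmb_pair hij hF 1
  rw [OrderIso.symm_apply_eq]
  exact Subtype.ext (by simpa using this.symm)

lemma embed_pair {i j : Fin n} (hij : i < j)
    (hF : ({i, j} : Finset (Fin n)).card = 2) (g : Fin n → Bool) (u : Fin 2 → Bool) :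
    embed {i, j} hF g u = fun k => if k = i then u 0 else if k = j then u 1 else g k := by
  funext k
  by_cases hk : k ∈ ({i, j} : Finset (Fin n))
  · rcases Finset.mem_insert.mp hk with rfl | hk'
    · simp [embed, hk, iso_symm_pair_left hij hF, hij.ne']
    · have : k = j := Finset.mem_singleton.mp hk'
      subst this
      simp [embed, hk, iso_symm_pair_right hij hF, hij.ne']
  · have h1 : k ≠ i := by rintro rfl; exact hk (by simp)
    have h2 : k ≠ j := by rintro rfl; exact hk (by simp)
    simp [embed, hk, h1, h2]

lemma pair_min' {i j : Fin n} (hij : i < j) (h : ({i, j} : Finset (Fin n)).Nonempty) :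
    ({i, j} : Finset (Fin n)).min' h = i := by
  apply le_antisymm
  · exact Finset.min'_le _ _ (by simp)
  · apply Finset.le_min'
    intro y hy
    rcases Finset.mem_insert.mp hy with rfl | hy'
    · exact le_rfl
    · rw [Finset.mem_singleton.mp hy']
      exact hij.le

lemma pair_max' {i j : Fin n} (hij : i < j) (h : ({i, j} : Finset (Fin n)).Nonempty) :
    ({i, j} : Finset (Fin n)).max' h = j := by
  apply le_antisymm
  · apply Finset.max'_le
    intro y hy
    rcases Finset.mem_insert.mp hy with rfl | hy'
    · exact hij.le
    · rw [Finset.mem_singleton.mp hy']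
  · exact Finset.le_max' _ _ (by simp)

lemma card_two_struct (F : Finset (Fin n)) (hF : F.card = 2) :
    ∃ a b : Fin n, a < b ∧ F = {a, b} := by
  rcases Finset.card_eq_two.mp hF with ⟨a, b, hab, rfl⟩
  rcases lt_or_gt_of_ne hab with h | h
  · exact ⟨a, b, h, rfl⟩
  · exact ⟨b, a, h, Finset.pair_comm a b⟩

end Pairs

section Flips

variable {n : ℕ}

/-- Flip coordinate `i`. -/
def flp (i : Fin n) (x : Fin n → Bool) : Fin n → Bool := fun k => if k = i then !x i else x k

lemma flp_self (i : Fin n) (x : Fin n → Bool) : flp i x i = !x i := by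
  simp [flp]

lemma flp_ne {i k : Fin n} (h : k ≠ i) (x : Fin n → Bool) : flp i x k = x k := by
  simp [flp, h]

lemma flp_flp (i : Fin n) (x : Fin n → Bool) : flp i (flp i x) = x := by
  funext k
  by_cases h : k = i
  · subst h; simp [flp_self]
  · rw [flp_ne h, flp_ne h]

lemma flp_comm {i j : Fin n} (h : i ≠ j) (x : Fin n → Bool) :
    flp i (flp j x) = flp j (flp i x) := by
  funext k
  by_cases h1 : k = i <;> by_cases h2 : k = j <;>
    simp [flp, h1, h2, h, Ne.symm h]

lemma flp4 {i j : Fin n} (hij : i ≠ j) (x : Fin n → Bool) :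
    flp i (flp j (flp i (flp j x))) = x := by
  rw [← flp_comm hij (flp j x), flp_flp j x, flp_flp i x]

/-- The base predicate for the triple encoding of a sub-2-cube. -/
def Bse (q : (Fin n × Fin n) × (Fin n → Bool)) : Prop :=
  q.1.1 < q.1.2 ∧ q.2 q.1.1 = false ∧ q.2 q.1.2 = false

/-- The goodness predicate for `Z3`, in terms of the triple encoding. -/
def GoodT (S : Set (Fin n → Bool)) (q : (Fin n × Fin n) × (Fin n → Bool)) : Prop :=
  (q.2 ∈ S ↔ flp q.1.1 (flp q.1.2 q.2) ∉ S) ∧ (flp q.1.2 q.2 ∈ S ↔ flp q.1.1 q.2 ∉ S)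

lemma vtx_ff_ff {i j : Fin n} (hij : i ≠ j) (x : Fin n → Bool)
    (hi : x i = false) (hj : x j = false) :
    (fun k => if k = i then false else if k = j then false else x k) = x := by
  funext k
  by_cases h1 : k = i
  · subst h1; simp [hi]
  · by_cases h2 : k = j
    · subst h2; simp [h1, hj]
    · simp [h1, h2]

lemma vtx_ff_tt {i j : Fin n} (hij : i ≠ j) (x : Fin n → Bool)
    (hi : x i = false) (hj : x j = false) :
    (fun k => if k = i then false else if k = j then true else x k) = flp j x := by
  funext k
  by_cases h1 : k = i
  · subst h1; simp [hij, flp_ne hij, hi]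
  · by_cases h2 : k = j
    · subst h2; simp [h1, flp_self, hj]
    · simp [h1, h2, flp_ne h2]

lemma vtx_tt_ff {i j : Fin n} (hij : i ≠ j) (x : Fin n → Bool)
    (hi : x i = false) (hj : x j = false) :
    (fun k => if k = i then true else if k = j then false else x k) = flp i x := by
  funext k
  by_cases h1 : k = i
  · subst h1; simp [flp_self, hi]
  · by_cases h2 : k = j
    · subst h2; simp [h1, flp_ne (Ne.symm hij), hj]
    · simp [h1, h2, flp_ne h1]

lemma vtx_tt_tt {i j : Fin n} (hij : i ≠ j) (x : Fin n → Bool)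
    (hi : x i = false) (hj : x j = false) :
    (fun k => if k = i then true else if k = j then true else x k) = flp i (flp j x) := by
  funext k
  by_cases h1 : k = i
  · subst h1; simp [flp_self, flp_ne hij, hi]
  · by_cases h2 : k = j
    · subst h2; rw [flp_ne h1, flp_self, hj]; simp [h1]
    · rw [flp_ne h1, flp_ne h2]; simp [h1, h2]

lemma isGood_iff {S : Set (Fin n → Bool)} {i j : Fin n} (hij : i < j)
    (hF : ({i, j} : Finset (Fin n)).card = 2) {g : Fin n → Bool}
    (hgi : g i = false) (hgj : g j = false) :
    IsGood Z3 S {i, j} hF g ↔ GoodT S ((i, j), g) := by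
  have hne : i ≠ j := hij.ne
  rw [IsGood, exactCopy_iff, setform_iff]
  have e00 : embed {i, j} hF g ![false, false] = g := by
    rw [embed_pair hij hF]
    simpa using vtx_ff_ff hne g hgi hgj
  have e01 : embed {i, j} hF g ![false, true] = flp j g := by
    rw [embed_pair hij hF]
    simpa using vtx_ff_tt hne g hgi hgj
  have e10 : embed {i, j} hF g ![true, false] = flp i g := by
    rw [embed_pair hij hF]
    simpa using vtx_tt_ff hne g hgi hgj
  have e11 : embed {i, j} hF g ![true, true] = flp i (flp j g) := by
    rw [embed_pair hij hF]
    simpa using vtx_tt_tt hne g hgi hgj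
  simp only [Set.mem_setOf_eq, e00, e01, e10, e11]
  exact Iff.rfl

lemma goodCount_eq (S : Set (Fin n → Bool)) :
    goodCount 2 Z3 n S =
      ((Finset.univ : Finset ((Fin n × Fin n) × (Fin n → Bool))).filter
        (fun q => Bse q ∧ GoodT S q)).card := by
  classical
  rw [goodCount, Nat.card_eq_fintype_card, Fintype.card_subtype]
  have hne : ∀ p ∈ (Finset.univ : Finset (Finset (Fin n) × (Fin n → Bool))).filter
      (fun p => ∃ hF : p.1.card = 2, (∀ i ∈ p.1, p.2 i = false) ∧ IsGood Z3 S p.1 hF p.2),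
      p.1.Nonempty := by
    intro p hp
    obtain ⟨hF, -, -⟩ := (Finset.mem_filter.mp hp).2
    exact Finset.card_pos.mp (by omega)
  refine Finset.card_bij (fun (p : Finset (Fin n) × (Fin n → Bool)) hp =>
      ((p.1.min' (hne p hp), p.1.max' (hne p hp)), p.2)) ?_ ?_ ?_
  · -- maps into the target filter
    intro p hp
    obtain ⟨F, g⟩ := p
    obtain ⟨hF, hnorm, hgood⟩ := (Finset.mem_filter.mp hp).2
    obtain ⟨a, b, hab, hFab⟩ := card_two_struct F hF
    subst hFab
    have hga : g a = false := hnorm a (by simp)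
    have hgb : g b = false := hnorm b (by simp)
    rw [Finset.mem_filter]
    refine ⟨Finset.mem_univ _, ?_⟩
    simp only [pair_min' hab, pair_max' hab]
    refine ⟨⟨hab, hga, hgb⟩, ?_⟩
    rw [← isGood_iff hab hF hga hgb]
    exact hgood
  · -- injective
    intro p hp p' hp' heq
    obtain ⟨F, g⟩ := p
    obtain ⟨F', g'⟩ := p'
    obtain ⟨hF, -, -⟩ := (Finset.mem_filter.mp hp).2
    obtain ⟨hF', -, -⟩ := (Finset.mem_filter.mp hp').2
    obtain ⟨a, b, hab, hFab⟩ := card_two_struct F hF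
    obtain ⟨a', b', hab', hFab'⟩ := card_two_struct F' hF'
    subst hFab; subst hFab'
    simp only [pair_min' hab, pair_max' hab, pair_min' hab', pair_max' hab',
      Prod.mk.injEq] at heq
    obtain ⟨⟨h1, h2⟩, h3⟩ := heq
    subst h1; subst h2; subst h3
    rfl
  · -- surjective
    intro q hq
    obtain ⟨-, ⟨hlt, hqi, hqj⟩, hgood⟩ := Finset.mem_filter.mp hq
    have hcard : ({q.1.1, q.1.2} : Finset (Fin n)).card = 2 := Finset.card_pair hlt.ne
    refine ⟨({q.1.1, q.1.2}, q.2), ?_, ?_⟩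
    · rw [Finset.mem_filter]
      refine ⟨Finset.mem_univ _, hcard, ?_, ?_⟩
      · intro k hk
        rcases Finset.mem_insert.mp hk with rfl | hk'
        · exact hqi
        · rw [Finset.mem_singleton.mp hk']; exact hqj
      · rw [isGood_iff hlt hcard hqi hqj]
        exact hgood
    · simp only [pair_min' hlt, pair_max' hlt]

end Flips

section Sums

variable {n : ℕ}

/-- `±1` indicator of `S`. -/
noncomputable def sg (S : Set (Fin n → Bool)) (x : Fin n → Bool) : ℝ :=
  if x ∈ S then 1 else -1

lemma sg_sq (S : Set (Fin n → Bool)) (x : Fin n → Bool) : sg S x * sg S x = 1 := by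
  by_cases h : x ∈ S <;> simp [sg, h]

lemma sg_mul_le_one (S : Set (Fin n → Bool)) (x y : Fin n → Bool) :
    sg S x * sg S y ≤ 1 := by
  by_cases h : x ∈ S <;> by_cases h' : y ∈ S <;> simp [sg, h, h'] <;> norm_num

/-- The set of ordered pairs `i < j`. -/
def Pairs (n : ℕ) : Finset (Fin n × Fin n) :=
  Finset.univ.filter (fun p => p.1 < p.2)

lemma sum_base (h : ((Fin n × Fin n) × (Fin n → Bool)) → ℝ) :
    ∑ q ∈ Finset.univ.filter (fun q : (Fin n × Fin n) × (Fin n → Bool) => Bse q), h q =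
      ∑ p ∈ Pairs n, ∑ x ∈ Finset.univ.filter
        (fun x : Fin n → Bool => x p.1 = false ∧ x p.2 = false), h (p, x) := by
  rw [Finset.sum_filter, Fintype.sum_prod_type, Pairs, Finset.sum_filter]
  apply Finset.sum_congr rfl
  intro p _
  by_cases hp : p.1 < p.2
  · rw [if_pos hp, Finset.sum_filter]
    apply Finset.sum_congr rfl
    intro x _
    simp [Bse, hp]
  · rw [if_neg hp]
    apply Finset.sum_eq_zero
    intro x _
    simp [Bse, hp]

lemma pointwise (S : Set (Fin n → Bool)) (q : (Fin n × Fin n) × (Fin n → Bool)) :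
    (if GoodT S q then (1 : ℝ) else 0) ≤
      (2 - sg S q.2 * sg S (flp q.1.1 (flp q.1.2 q.2))
        - sg S (flp q.1.2 q.2) * sg S (flp q.1.1 q.2)) / 4 := by
  by_cases h1 : q.2 ∈ S <;> by_cases h2 : flp q.1.2 q.2 ∈ S <;>
    by_cases h3 : flp q.1.1 q.2 ∈ S <;> by_cases h4 : flp q.1.1 (flp q.1.2 q.2) ∈ S <;>
    simp [GoodT, sg, h1, h2, h3, h4] <;> norm_num

lemma claimA (S : Set (Fin n → Bool)) {i j : Fin n} (hij : i ≠ j) :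
    ∑ x ∈ Finset.univ.filter (fun x : Fin n → Bool => x i = false ∧ x j = false),
      (sg S x * sg S (flp i (flp j x)) + sg S (flp j x) * sg S (flp i x)) =
    ∑ x ∈ Finset.univ.filter (fun x : Fin n → Bool => x i = false),
      sg S x * sg S (flp i (flp j x)) := by
  have hsplit := Finset.sum_filter_add_sum_filter_not
    (Finset.univ.filter (fun x : Fin n → Bool => x i = false))
    (fun x => x j = false) (fun x => sg S x * sg S (flp i (flp j x)))
  rw [Finset.filter_filter] at hsplit
  have h2 : ∑ x ∈ (Finset.univ.filter (fun x : Fin n → Bool => x i = false)).filter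
      (fun x => ¬ x j = false), sg S x * sg S (flp i (flp j x)) =
      ∑ x ∈ Finset.univ.filter (fun x : Fin n → Bool => x i = false ∧ x j = false),
        sg S (flp j x) * sg S (flp i x) := by
    symm
    refine Finset.sum_nbij' (flp j) (flp j) ?_ ?_ ?_ ?_ ?_
    · intro x hx
      simp only [Finset.mem_filter, Finset.mem_univ, true_and] at hx ⊢
      refine ⟨?_, ?_⟩
      · rw [flp_ne hij]; exact hx.1
      · rw [flp_self, hx.2]; simp
    · intro x hx
      simp only [Finset.mem_filter, Finset.mem_univ, true_and] at hx ⊢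
      obtain ⟨hxi, hxj⟩ := hx
      refine ⟨?_, ?_⟩
      · rw [flp_ne hij]; exact hxi
      · rw [flp_self]; simpa using hxj
    · intro x _; exact flp_flp j x
    · intro x _; exact flp_flp j x
    · intro x _
      rw [flp_flp j x]
  rw [h2] at hsplit
  rw [← hsplit, Finset.sum_add_distrib]

lemma claimB (S : Set (Fin n → Bool)) {i j : Fin n} (hij : i ≠ j) :
    ∑ x : Fin n → Bool, sg S x * sg S (flp i (flp j x)) =
      2 * ∑ x ∈ Finset.univ.filter (fun x : Fin n → Bool => x i = false),
        sg S x * sg S (flp i (flp j x)) := by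
  have hsplit := Finset.sum_filter_add_sum_filter_not
    (Finset.univ : Finset (Fin n → Bool))
    (fun x => x i = false) (fun x => sg S x * sg S (flp i (flp j x)))
  have h2 : ∑ x ∈ Finset.univ.filter (fun x : Fin n → Bool => ¬ x i = false),
      sg S x * sg S (flp i (flp j x)) =
      ∑ x ∈ Finset.univ.filter (fun x : Fin n → Bool => x i = false),
        sg S x * sg S (flp i (flp j x)) := by
    refine Finset.sum_nbij' (fun x => flp i (flp j x)) (fun x => flp i (flp j x)) ?_ ?_ ?_ ?_ ?_
    · intro x hx
      simp only [Finset.mem_filter, Finset.mem_univ, true_and] at hx ⊢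
      rw [flp_self, flp_ne hij]
      simp only [Bool.not_eq_false] at hx
      simp [hx]
    · intro x hx
      simp only [Finset.mem_filter, Finset.mem_univ, true_and] at hx ⊢
      rw [flp_self, flp_ne hij, hx]
      simp
    · intro x _
      exact flp4 hij x
    · intro x _
      exact flp4 hij x
    · intro x _
      rw [flp4 hij x, mul_comm]
  rw [h2] at hsplit
  rw [← hsplit, two_mul]

lemma claimC (S : Set (Fin n → Bool)) :
    -((n : ℝ) * 2 ^ n) / 2 ≤
      ∑ p ∈ Pairs n, ∑ x : Fin n → Bool, sg S x * sg S (flp p.1 (flp p.2 x)) := by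
  set g : Fin n × Fin n → ℝ := fun p => ∑ x : Fin n → Bool, sg S x * sg S (flp p.1 (flp p.2 x))
    with hg
  set g' : Fin n × Fin n → ℝ := fun p => ∑ x : Fin n → Bool, sg S (flp p.1 x) * sg S (flp p.2 x)
    with hg'
  have hcard : (Finset.univ : Finset (Fin n → Bool)).card = 2 ^ n := by
    rw [Finset.card_univ, Fintype.card_fun]
    simp
  -- on off-diagonal pairs, g = g'
  have hgg' : ∀ p : Fin n × Fin n, p.1 ≠ p.2 → g p = g' p := by
    intro p hp
    rw [hg, hg']
    refine Finset.sum_nbij' (flp p.1) (flp p.1) (by simp) (by simp) ?_ ?_ ?_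
    · intro x _; exact flp_flp _ _
    · intro x _; exact flp_flp _ _
    · intro x _
      rw [flp_flp, flp_comm hp]
  -- diagonal of g'
  have hdiag' : ∀ i : Fin n, g' (i, i) = 2 ^ n := by
    intro i
    rw [hg']
    simp only [sg_sq]
    rw [Finset.sum_const, hcard]
    simp
  -- total sum of g' is a sum of squares
  have htot : 0 ≤ ∑ p : Fin n × Fin n, g' p := by
    rw [Fintype.sum_prod_type]
    simp only [hg']
    have swap : ∀ i : Fin n, ∑ j : Fin n, ∑ x : Fin n → Bool,
        sg S (flp i x) * sg S (flp j x) = ∑ x : Fin n → Bool, ∑ j : Fin n,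
        sg S (flp i x) * sg S (flp j x) := fun i => Finset.sum_comm
    rw [Finset.sum_congr rfl (fun i _ => swap i), Finset.sum_comm]
    apply Finset.sum_nonneg
    intro x _
    have : ∑ i : Fin n, ∑ j : Fin n, sg S (flp i x) * sg S (flp j x) =
        (∑ i : Fin n, sg S (flp i x)) * (∑ j : Fin n, sg S (flp j x)) := by
      rw [Finset.sum_mul_sum]
    rw [this]
    exact mul_self_nonneg _
  -- sum over the diagonal
  have hdiagsum : ∑ p ∈ Finset.univ.filter (fun p : Fin n × Fin n => p.1 = p.2), g' p =
      (n : ℝ) * 2 ^ n := by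
    have : ∑ p ∈ Finset.univ.filter (fun p : Fin n × Fin n => p.1 = p.2), g' p =
        ∑ i : Fin n, g' (i, i) := by
      refine Finset.sum_nbij' (fun p => p.1) (fun i => (i, i)) (by simp) (by simp) ?_ ?_ ?_
      · rintro ⟨a, b⟩ hp
        simp only [Finset.mem_filter] at hp
        simp [hp.2]
      · intro i _; rfl
      · rintro ⟨a, b⟩ hp
        simp only [Finset.mem_filter] at hp
        obtain ⟨-, h⟩ := hp
        subst h
        rfl
    rw [this]
    simp only [hdiag']
    rw [Finset.sum_const]
    simp [mul_comm]
  -- off-diagonal sum of g' is ≥ -n 2^n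
  have hoff : -((n : ℝ) * 2 ^ n) ≤
      ∑ p ∈ Finset.univ.filter (fun p : Fin n × Fin n => ¬ p.1 = p.2), g' p := by
    have hsplit := Finset.sum_filter_add_sum_filter_not
      (Finset.univ : Finset (Fin n × Fin n)) (fun p => p.1 = p.2) g'
    have : ∑ p : Fin n × Fin n, g' p = ∑ p ∈ Finset.univ, g' p := rfl
    nlinarith [htot, hdiagsum, hsplit]
  -- off-diagonal g' sum equals twice the Pairs-sum of g
  have hswap : ∑ p ∈ Finset.univ.filter (fun p : Fin n × Fin n => p.2 < p.1), g p =
      ∑ p ∈ Pairs n, g p := by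
    refine Finset.sum_nbij' Prod.swap Prod.swap ?_ ?_ ?_ ?_ ?_
    · intro p hp
      simp only [Finset.mem_filter, Finset.mem_univ, true_and] at hp
      simp [Pairs, hp]
    · intro p hp
      simp only [Pairs, Finset.mem_filter, Finset.mem_univ, true_and] at hp
      simp [hp]
    · intro p _; simp
    · intro p _; simp
    · intro p hp
      simp only [Finset.mem_filter, Finset.mem_univ, true_and] at hp
      simp only [hg, Prod.fst_swap, Prod.snd_swap]
      apply Finset.sum_congr rfl
      intro x _
      rw [flp_comm (ne_of_gt hp)]
  have hne_split : ∑ p ∈ Finset.univ.filter (fun p : Fin n × Fin n => ¬ p.1 = p.2), g p =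
      ∑ p ∈ Pairs n, g p + ∑ p ∈ Finset.univ.filter (fun p : Fin n × Fin n => p.2 < p.1), g p := by
    have hsplit := Finset.sum_filter_add_sum_filter_not
      (Finset.univ.filter (fun p : Fin n × Fin n => ¬ p.1 = p.2))
      (fun p => p.1 < p.2) g
    rw [Finset.filter_filter, Finset.filter_filter] at hsplit
    have e1 : Finset.univ.filter (fun p : Fin n × Fin n => ¬ p.1 = p.2 ∧ p.1 < p.2) = Pairs n := by
      apply Finset.filter_congr
      intro p _
      constructor
      · exact fun h => h.2
      · exact fun h => ⟨ne_of_lt h, h⟩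
    have e2 : Finset.univ.filter (fun p : Fin n × Fin n => ¬ p.1 = p.2 ∧ ¬ p.1 < p.2) =
        Finset.univ.filter (fun p : Fin n × Fin n => p.2 < p.1) := by
      apply Finset.filter_congr
      intro p _
      constructor
      · rintro ⟨h1, h2⟩
        exact lt_of_le_of_ne (le_of_not_gt h2) (fun h => h1 h.symm)
      · intro h
        exact ⟨fun he => absurd h (he ▸ lt_irrefl _), asymm h⟩
    rw [e1, e2] at hsplit
    rw [← hsplit]
  -- also g = g' on the off-diagonal filter sums
  have hgg'sum : ∑ p ∈ Finset.univ.filter (fun p : Fin n × Fin n => ¬ p.1 = p.2), g p =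
      ∑ p ∈ Finset.univ.filter (fun p : Fin n × Fin n => ¬ p.1 = p.2), g' p := by
    apply Finset.sum_congr rfl
    intro p hp
    simp only [Finset.mem_filter] at hp
    exact hgg' p hp.2
  have := hoff
  rw [← hgg'sum, hne_split, hswap] at this
  linarith
end Sums

section Counting

variable {n : ℕ}

lemma cardBoolFun : (Finset.univ : Finset (Fin n → Bool)).card = 2 ^ n := by
  rw [Finset.card_univ, Fintype.card_fun]
  simp

lemma double (i : Fin n) (P : (Fin n → Bool) → Prop) [DecidablePred P]
    (hP : ∀ x, P (flp i x) ↔ P x) :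
    (Finset.univ.filter P).card =
      2 * (Finset.univ.filter (fun x => P x ∧ x i = false)).card := by
  classical
  have hsplit := Finset.card_filter_add_card_filter_not
    (s := Finset.univ.filter P) (p := fun x => x i = false)
  have heq : ((Finset.univ.filter P).filter (fun x => ¬ x i = false)).card =
      ((Finset.univ.filter P).filter (fun x => x i = false)).card := by
    refine Finset.card_nbij' (flp i) (flp i) ?_ ?_ ?_ ?_
    · intro x hx
      simp only [Finset.mem_coe, Finset.mem_filter, Finset.mem_univ, true_and] at hx ⊢
      refine ⟨(hP x).mpr hx.1, ?_⟩
      rw [flp_self]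
      simp only [Bool.not_eq_false] at hx
      simp [hx.2]
    · intro x hx
      simp only [Finset.mem_coe, Finset.mem_filter, Finset.mem_univ, true_and] at hx ⊢
      refine ⟨(hP x).mpr hx.1, ?_⟩
      rw [flp_self, hx.2]
      simp
    · intro x _; exact flp_flp i x
    · intro x _; exact flp_flp i x
  rw [heq] at hsplit
  rw [Finset.filter_filter] at hsplit
  rw [← two_mul] at hsplit
  exact hsplit.symm

lemma card_X2 {i j : Fin n} (hij : i ≠ j) :
    4 * (Finset.univ.filter (fun x : Fin n → Bool => x i = false ∧ x j = false)).card = 2 ^ n := by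
  have h1 : (Finset.univ : Finset (Fin n → Bool)).card =
      2 * (Finset.univ.filter (fun x : Fin n → Bool => x i = false)).card := by
    have := double i (fun _ => True) (by simp)
    simpa using this
  have h2 : (Finset.univ.filter (fun x : Fin n → Bool => x i = false)).card =
      2 * (Finset.univ.filter (fun x : Fin n → Bool => x i = false ∧ x j = false)).card := by
    refine double j (fun x => x i = false) (fun x => ?_)
    show (flp j x) i = false ↔ x i = false
    rw [flp_ne hij]
  rw [cardBoolFun] at h1
  rw [h1, h2]
  ring

lemma card_X2_real {i j : Fin n} (hij : i ≠ j) :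
    ((Finset.univ.filter (fun x : Fin n → Bool => x i = false ∧ x j = false)).card : ℝ)
      = 2 ^ n / 4 := by
  have h := card_X2 (n := n) hij
  have h' : (4 : ℝ) * ((Finset.univ.filter
      (fun x : Fin n → Bool => x i = false ∧ x j = false)).card : ℝ) = 2 ^ n := by
    exact_mod_cast congrArg (Nat.cast : ℕ → ℝ) h
  linarith

lemma card_base_real :
    ((Finset.univ.filter (fun q : (Fin n × Fin n) × (Fin n → Bool) => Bse q)).card : ℝ)
      = ((Pairs n).card : ℝ) * 2 ^ n / 4 := by
  have hsum := sum_base (n := n) (fun _ => (1 : ℝ))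
  have hL : ((Finset.univ.filter
      (fun q : (Fin n × Fin n) × (Fin n → Bool) => Bse q)).card : ℝ) =
      ∑ q ∈ Finset.univ.filter (fun q : (Fin n × Fin n) × (Fin n → Bool) => Bse q), (1 : ℝ) := by
    rw [Finset.sum_const, nsmul_eq_mul, mul_one]
  rw [hL, hsum]
  have : ∀ p ∈ Pairs n, ∑ _x ∈ Finset.univ.filter
      (fun x : Fin n → Bool => x p.1 = false ∧ x p.2 = false), (1 : ℝ) = 2 ^ n / 4 := by
    intro p hp
    have hij : p.1 ≠ p.2 := ne_of_lt (Finset.mem_filter.mp hp).2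
    rw [Finset.sum_const, nsmul_eq_mul, mul_one, card_X2_real hij]
  rw [Finset.sum_congr rfl this, Finset.sum_const, nsmul_eq_mul]
  ring

lemma two_mul_pairs_card : 2 * (Pairs n).card + n = n * n := by
  classical
  have htot : (Finset.univ : Finset (Fin n × Fin n)).card = n * n := by
    rw [Finset.card_univ, Fintype.card_prod, Fintype.card_fin]
  have h1 := Finset.card_filter_add_card_filter_not
    (s := (Finset.univ : Finset (Fin n × Fin n))) (p := fun p => p.1 = p.2)
  have hdiag : ((Finset.univ : Finset (Fin n × Fin n)).filter (fun p => p.1 = p.2)).card = n := by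
    have : ((Finset.univ : Finset (Fin n × Fin n)).filter (fun p => p.1 = p.2)).card =
        (Finset.univ : Finset (Fin n)).card := by
      refine Finset.card_nbij' (fun p => p.1) (fun i => (i, i)) (by simp) (by simp) ?_ ?_
      · rintro ⟨a, b⟩ hp
        simp only [Finset.mem_coe, Finset.mem_filter] at hp
        simp [hp.2]
      · intro i _; rfl
    rw [this, Finset.card_univ, Fintype.card_fin]
  have h2 := Finset.card_filter_add_card_filter_not
    (s := (Finset.univ : Finset (Fin n × Fin n)).filter (fun p => ¬ p.1 = p.2))
    (p := fun p => p.1 < p.2)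
  rw [Finset.filter_filter, Finset.filter_filter] at h2
  have e1 : (Finset.univ : Finset (Fin n × Fin n)).filter (fun p => ¬ p.1 = p.2 ∧ p.1 < p.2) =
      Pairs n := by
    apply Finset.filter_congr
    intro p _
    constructor
    · exact fun h => h.2
    · exact fun h => ⟨ne_of_lt h, h⟩
  have e2 : (Finset.univ : Finset (Fin n × Fin n)).filter (fun p => ¬ p.1 = p.2 ∧ ¬ p.1 < p.2) =
      (Finset.univ : Finset (Fin n × Fin n)).filter (fun p => p.2 < p.1) := by
    apply Finset.filter_congr
    intro p _
    constructor
    · rintro ⟨ha, hb⟩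
      exact lt_of_le_of_ne (le_of_not_gt hb) (fun h => ha h.symm)
    · intro h
      exact ⟨fun he => absurd h (he ▸ lt_irrefl _), asymm h⟩
  have e3 : ((Finset.univ : Finset (Fin n × Fin n)).filter (fun p => p.2 < p.1)).card =
      (Pairs n).card := by
    refine Finset.card_nbij' Prod.swap Prod.swap ?_ ?_ ?_ ?_
    · intro p hp
      simp only [Finset.mem_coe, Finset.mem_filter, Finset.mem_univ, true_and] at hp
      simp [Pairs, hp]
    · intro p hp
      simp only [Finset.mem_coe, Pairs, Finset.mem_filter, Finset.mem_univ, true_and] at hp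
      simp [hp]
    · intro p _; simp
    · intro p _; simp
  rw [e1, e2, e3] at h2
  omega

lemma pairs_card_real : ((Pairs n).card : ℝ) = (n : ℝ) * ((n : ℝ) - 1) / 2 := by
  have h := two_mul_pairs_card (n := n)
  have h' : 2 * ((Pairs n).card : ℝ) + (n : ℝ) = (n : ℝ) * (n : ℝ) := by
    exact_mod_cast congrArg (Nat.cast : ℕ → ℝ) h
  linarith

end Counting

section UpperBound

variable {n : ℕ}

lemma pow_sub_two (hn : 2 ≤ n) : (2 : ℝ) ^ (n - 2) * 4 = 2 ^ n := by
  have h : n - 2 + 2 = n := by omega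
  calc (2 : ℝ) ^ (n - 2) * 4 = 2 ^ (n - 2) * 2 ^ 2 := by norm_num
  _ = 2 ^ (n - 2 + 2) := by rw [pow_add]
  _ = 2 ^ n := by rw [h]

lemma goodCount_le (S : Set (Fin n → Bool)) :
    (goodCount 2 Z3 n S : ℝ) ≤
      (((Finset.univ.filter (fun q : (Fin n × Fin n) × (Fin n → Bool) => Bse q)).card : ℝ) * 2
        + (n : ℝ) * 2 ^ n / 4) / 4 := by
  classical
  have hcount := goodCount_eq S
  have hfil : Finset.univ.filter (fun q : (Fin n × Fin n) × (Fin n → Bool) => Bse q ∧ GoodT S q) =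
      (Finset.univ.filter (fun q => Bse q)).filter (fun q => GoodT S q) := by
    rw [Finset.filter_filter]
  have hcard : (goodCount 2 Z3 n S : ℝ) =
      ∑ q ∈ Finset.univ.filter (fun q : (Fin n × Fin n) × (Fin n → Bool) => Bse q),
        (if GoodT S q then (1 : ℝ) else 0) := by
    rw [hcount, hfil, Finset.card_filter]
    push_cast
    rfl
  rw [hcard]
  have hstep : ∑ q ∈ Finset.univ.filter (fun q : (Fin n × Fin n) × (Fin n → Bool) => Bse q),
      (if GoodT S q then (1 : ℝ) else 0) ≤
      ∑ q ∈ Finset.univ.filter (fun q : (Fin n × Fin n) × (Fin n → Bool) => Bse q),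
        (2 - sg S q.2 * sg S (flp q.1.1 (flp q.1.2 q.2))
          - sg S (flp q.1.2 q.2) * sg S (flp q.1.1 q.2)) / 4 :=
    Finset.sum_le_sum (fun q _ => pointwise S q)
  refine hstep.trans ?_
  have hD : -((n : ℝ) * 2 ^ n) / 4 ≤
      ∑ q ∈ Finset.univ.filter (fun q : (Fin n × Fin n) × (Fin n → Bool) => Bse q),
      (sg S q.2 * sg S (flp q.1.1 (flp q.1.2 q.2))
        + sg S (flp q.1.2 q.2) * sg S (flp q.1.1 q.2)) := by
    rw [sum_base (n := n) (fun q => sg S q.2 * sg S (flp q.1.1 (flp q.1.2 q.2))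
      + sg S (flp q.1.2 q.2) * sg S (flp q.1.1 q.2))]
    have hAB : ∀ p ∈ Pairs n,
        ∑ x ∈ Finset.univ.filter (fun x : Fin n → Bool => x p.1 = false ∧ x p.2 = false),
          (sg S x * sg S (flp p.1 (flp p.2 x)) + sg S (flp p.2 x) * sg S (flp p.1 x)) =
        (1 / 2) * ∑ x : Fin n → Bool, sg S x * sg S (flp p.1 (flp p.2 x)) := by
      intro p hp
      have hij : p.1 ≠ p.2 := ne_of_lt (Finset.mem_filter.mp hp).2
      rw [claimA S hij, claimB S hij]
      ring
    rw [Finset.sum_congr rfl hAB, ← Finset.mul_sum]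
    have hC := claimC (n := n) S
    linarith
  have hexp : ∑ q ∈ Finset.univ.filter (fun q : (Fin n × Fin n) × (Fin n → Bool) => Bse q),
      (2 - sg S q.2 * sg S (flp q.1.1 (flp q.1.2 q.2))
        - sg S (flp q.1.2 q.2) * sg S (flp q.1.1 q.2)) / 4 =
      (((Finset.univ.filter (fun q : (Fin n × Fin n) × (Fin n → Bool) => Bse q)).card : ℝ) * 2
        - ∑ q ∈ Finset.univ.filter (fun q : (Fin n × Fin n) × (Fin n → Bool) => Bse q),
          (sg S q.2 * sg S (flp q.1.1 (flp q.1.2 q.2))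
            + sg S (flp q.1.2 q.2) * sg S (flp q.1.1 q.2))) / 4 := by
    rw [← Finset.sum_div]
    congr 1
    have hcong : ∀ q ∈ Finset.univ.filter
        (fun q : (Fin n × Fin n) × (Fin n → Bool) => Bse q),
        2 - sg S q.2 * sg S (flp q.1.1 (flp q.1.2 q.2))
          - sg S (flp q.1.2 q.2) * sg S (flp q.1.1 q.2) =
        2 - (sg S q.2 * sg S (flp q.1.1 (flp q.1.2 q.2))
          + sg S (flp q.1.2 q.2) * sg S (flp q.1.1 q.2)) := by
      intro q _
      ring
    rw [Finset.sum_congr rfl hcong, Finset.sum_sub_distrib, Finset.sum_const, nsmul_eq_mul]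
  rw [hexp]
  linarith

lemma gFrac_le (hn : 2 ≤ n) (S : Set (Fin n → Bool)) :
    gFrac 2 Z3 n S ≤ 1 / 2 + 1 / (2 * ((n : ℝ) - 1)) := by
  have hn2 : (2 : ℝ) ≤ (n : ℝ) := by exact_mod_cast hn
  have hn1 : (1 : ℝ) ≤ (n : ℝ) - 1 := by linarith
  have hpow : (0 : ℝ) < 2 ^ n := by positivity
  have hden : ((n.choose 2 : ℕ) : ℝ) * 2 ^ (n - 2) =
      (n : ℝ) * ((n : ℝ) - 1) * 2 ^ n / 8 := by
    rw [Nat.cast_choose_two]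
    have h4 : (2 : ℝ) ^ (n - 2) = 2 ^ n / 4 := by
      have := pow_sub_two hn
      linarith
    rw [h4]
    ring
  have hdenpos : (0 : ℝ) < (n : ℝ) * ((n : ℝ) - 1) * 2 ^ n / 8 := by
    have : (0 : ℝ) < (n : ℝ) := by linarith
    have h1 : (0 : ℝ) < (n : ℝ) - 1 := by linarith
    positivity
  have hB : ((Finset.univ.filter (fun q : (Fin n × Fin n) × (Fin n → Bool) => Bse q)).card : ℝ)
      = (n : ℝ) * ((n : ℝ) - 1) * 2 ^ n / 8 := by
    rw [card_base_real, pairs_card_real]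
    ring
  have hgc := goodCount_le S
  rw [hB] at hgc
  rw [gFrac, hden]
  rw [div_le_iff₀ hdenpos]
  have hkey : (1 / 2 + 1 / (2 * ((n : ℝ) - 1))) * ((n : ℝ) * ((n : ℝ) - 1) * 2 ^ n / 8) =
      ((n : ℝ) * ((n : ℝ) - 1) * 2 ^ n / 8) / 2 + (n : ℝ) * 2 ^ n / 16 := by
    have hne : (n : ℝ) - 1 ≠ 0 := by linarith
    field_simp
    ring
  rw [hkey]
  linarith

end UpperBound


section LowerBound

variable {n : ℕ}

/-- The parity construction: parity of the low coordinates. -/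
def Spar (n : ℕ) : Set (Fin n → Bool) :=
  {x | Even ((Finset.univ.filter (fun k : Fin n => (k : ℕ) < n / 2 ∧ x k = true)).card)}

lemma parity_flip_low {i : Fin n} (hi : (i : ℕ) < n / 2) (x : Fin n → Bool)
    (hx : x i = false) : flp i x ∈ Spar n ↔ ¬ (x ∈ Spar n) := by
  have hins : Finset.univ.filter (fun k : Fin n => (k : ℕ) < n / 2 ∧ flp i x k = true) =
      insert i (Finset.univ.filter (fun k : Fin n => (k : ℕ) < n / 2 ∧ x k = true)) := by
    ext k
    by_cases hk : k = i
    · subst hk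
      simp [flp_self, hx, hi]
    · simp only [Finset.mem_filter, Finset.mem_univ, true_and, Finset.mem_insert, hk,
        false_or]
      rw [flp_ne hk]
  have hnotmem : i ∉ Finset.univ.filter (fun k : Fin n => (k : ℕ) < n / 2 ∧ x k = true) := by
    simp [hx]
  simp only [Spar, Set.mem_setOf_eq, hins, Finset.card_insert_of_notMem hnotmem]
  rw [Nat.even_add_one]

lemma parity_flip_high {j : Fin n} (hj : n / 2 ≤ (j : ℕ)) (x : Fin n → Bool) :
    flp j x ∈ Spar n ↔ x ∈ Spar n := by
  have hfil : Finset.univ.filter (fun k : Fin n => (k : ℕ) < n / 2 ∧ flp j x k = true) =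
      Finset.univ.filter (fun k : Fin n => (k : ℕ) < n / 2 ∧ x k = true) := by
    ext k
    by_cases hk : k = j
    · subst hk
      have : ¬ ((k : ℕ) < n / 2) := by omega
      simp [this]
    · simp only [Finset.mem_filter, Finset.mem_univ, true_and]
      rw [flp_ne hk]
  simp only [Spar, Set.mem_setOf_eq, hfil]

lemma goodT_spar {i j : Fin n} (hi : (i : ℕ) < n / 2) (hj : n / 2 ≤ (j : ℕ))
    {x : Fin n → Bool} (hxi : x i = false) (hxj : x j = false) :
    GoodT (Spar n) ((i, j), x) := by
  have hne : i ≠ j := by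
    intro h
    subst h
    omega
  have hfji : (flp j x) i = false := by rw [flp_ne hne]; exact hxi
  have m1 : flp i (flp j x) ∈ Spar n ↔ ¬ (flp j x ∈ Spar n) :=
    parity_flip_low hi (flp j x) hfji
  have m2 : flp j x ∈ Spar n ↔ x ∈ Spar n := parity_flip_high hj x
  have m3 : flp i x ∈ Spar n ↔ ¬ (x ∈ Spar n) := parity_flip_low hi x hxi
  constructor
  · show x ∈ Spar n ↔ ¬ (flp i (flp j x) ∈ Spar n)
    tauto
  · show flp j x ∈ Spar n ↔ ¬ (flp i x ∈ Spar n)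
    tauto

/-- The lower-bound index set. -/
def TLM (n : ℕ) : Finset ((Fin n × Fin n) × (Fin n → Bool)) :=
  Finset.univ.filter (fun q => ((q.1.1 : ℕ) < n / 2 ∧ n / 2 ≤ (q.1.2 : ℕ))
    ∧ q.2 q.1.1 = false ∧ q.2 q.1.2 = false)

def PairsLM (n : ℕ) : Finset (Fin n × Fin n) :=
  Finset.univ.filter (fun p => (p.1 : ℕ) < n / 2 ∧ n / 2 ≤ (p.2 : ℕ))

lemma card_TLM_real :
    ((TLM n).card : ℝ) = ((PairsLM n).card : ℝ) * 2 ^ n / 4 := by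
  have hsum : ∑ q ∈ TLM n, (1 : ℝ) =
      ∑ p ∈ PairsLM n, ∑ x ∈ Finset.univ.filter
        (fun x : Fin n → Bool => x p.1 = false ∧ x p.2 = false), (1 : ℝ) := by
    rw [TLM, PairsLM, Finset.sum_filter, Fintype.sum_prod_type, Finset.sum_filter]
    apply Finset.sum_congr rfl
    intro p _
    by_cases hp : (p.1 : ℕ) < n / 2 ∧ n / 2 ≤ (p.2 : ℕ)
    · rw [if_pos hp, Finset.sum_filter]
      apply Finset.sum_congr rfl
      intro x _
      simp [hp]
    · rw [if_neg hp]
      apply Finset.sum_eq_zero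
      intro x _
      simp [hp]
  have hL : ((TLM n).card : ℝ) = ∑ q ∈ TLM n, (1 : ℝ) := by
    rw [Finset.sum_const, nsmul_eq_mul, mul_one]
  rw [hL, hsum]
  have hinner : ∀ p ∈ PairsLM n, ∑ _x ∈ Finset.univ.filter
      (fun x : Fin n → Bool => x p.1 = false ∧ x p.2 = false), (1 : ℝ) = 2 ^ n / 4 := by
    intro p hp
    have hp' := (Finset.mem_filter.mp hp).2
    have hij : p.1 ≠ p.2 := by
      intro h
      rw [h] at hp'
      omega
    rw [Finset.sum_const, nsmul_eq_mul, mul_one, card_X2_real hij]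
  rw [Finset.sum_congr rfl hinner, Finset.sum_const, nsmul_eq_mul]
  ring

lemma card_pairsLM (hn : 2 ≤ n) : (PairsLM n).card = (n / 2) * (n - n / 2) := by
  have hmn : n / 2 < n := Nat.div_lt_self (by omega) (by omega)
  have e1 : Finset.univ.filter (fun i : Fin n => (i : ℕ) < n / 2) =
      Finset.Iio (⟨n / 2, hmn⟩ : Fin n) := by
    ext k
    simp [Fin.lt_def]
  have e2 : Finset.univ.filter (fun j : Fin n => n / 2 ≤ (j : ℕ)) =
      Finset.Ici (⟨n / 2, hmn⟩ : Fin n) := by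
    ext k
    simp [Fin.le_def]
  have hprod : PairsLM n =
      (Finset.univ.filter (fun i : Fin n => (i : ℕ) < n / 2)) ×ˢ
        (Finset.univ.filter (fun j : Fin n => n / 2 ≤ (j : ℕ))) := by
    ext ⟨i, j⟩
    simp [PairsLM, Finset.mem_product]
  rw [hprod, Finset.card_product, e1, e2, Fin.card_Iio, Fin.card_Ici]

lemma goodCount_spar_ge (hn : 2 ≤ n) :
    ((TLM n).card : ℝ) ≤ (goodCount 2 Z3 n (Spar n) : ℝ) := by
  have hsub : TLM n ⊆ Finset.univ.filter
      (fun q : (Fin n × Fin n) × (Fin n → Bool) => Bse q ∧ GoodT (Spar n) q) := by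
    intro q hq
    rw [TLM, Finset.mem_filter] at hq
    obtain ⟨-, ⟨hq1, hq2⟩, hx1, hx2⟩ := hq
    rw [Finset.mem_filter]
    refine ⟨Finset.mem_univ _, ⟨?_, hx1, hx2⟩, goodT_spar hq1 hq2 hx1 hx2⟩
    rw [Fin.lt_def]
    omega
  have := Finset.card_le_card hsub
  rw [goodCount_eq]
  exact_mod_cast this

lemma gFrac_spar_ge (hn : 2 ≤ n) :
    1 / 2 - (2 * (n : ℝ))⁻¹ ≤ gFrac 2 Z3 n (Spar n) := by
  have hn2 : (2 : ℝ) ≤ (n : ℝ) := by exact_mod_cast hn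
  have hpow : (0 : ℝ) < 2 ^ n := by positivity
  have hden : ((n.choose 2 : ℕ) : ℝ) * 2 ^ (n - 2) =
      (n : ℝ) * ((n : ℝ) - 1) * 2 ^ n / 8 := by
    rw [Nat.cast_choose_two]
    have h4 : (2 : ℝ) ^ (n - 2) = 2 ^ n / 4 := by
      have := pow_sub_two hn
      linarith
    rw [h4]
    ring
  have hdenpos : (0 : ℝ) < (n : ℝ) * ((n : ℝ) - 1) * 2 ^ n / 8 := by
    have h0 : (0 : ℝ) < (n : ℝ) := by linarith
    have h1 : (0 : ℝ) < (n : ℝ) - 1 := by linarith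
    positivity
  -- the counting lower bound
  have habR : ((n : ℝ) - 1) * ((n : ℝ) - 1) ≤
      4 * (((n / 2 : ℕ) : ℝ) * (((n - n / 2 : ℕ) : ℝ))) := by
    have ha1 : (n : ℕ) ≤ 2 * (n / 2) + 1 := by omega
    have ha2 : 2 * (n / 2) ≤ n := by omega
    have hA1 : (n : ℝ) ≤ 2 * ((n / 2 : ℕ) : ℝ) + 1 := by exact_mod_cast ha1
    have hA2 : 2 * ((n / 2 : ℕ) : ℝ) ≤ (n : ℝ) := by exact_mod_cast ha2
    have hbeq : ((n - n / 2 : ℕ) : ℝ) = (n : ℝ) - ((n / 2 : ℕ) : ℝ) := by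
      have hle : n / 2 ≤ n := by omega
      push_cast [hle]
      ring
    rw [hbeq]
    nlinarith [mul_nonneg (by linarith : (0 : ℝ) ≤ 2 * ((n / 2 : ℕ) : ℝ) + 1 - (n : ℝ))
      (by linarith : (0 : ℝ) ≤ (n : ℝ) - 2 * ((n / 2 : ℕ) : ℝ))]
  have hTLM : ((TLM n).card : ℝ) =
      ((n / 2 : ℕ) : ℝ) * (((n - n / 2 : ℕ) : ℝ)) * 2 ^ n / 4 := by
    rw [card_TLM_real, card_pairsLM hn]
    push_cast
    ring
  have hgc := goodCount_spar_ge hn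
  rw [hTLM] at hgc
  rw [gFrac, hden]
  rw [le_div_iff₀ hdenpos]
  have hkey : (1 / 2 - (2 * (n : ℝ))⁻¹) * ((n : ℝ) * ((n : ℝ) - 1) * 2 ^ n / 8) =
      ((n : ℝ) - 1) * ((n : ℝ) - 1) * 2 ^ n / 16 := by
    have hne : (n : ℝ) ≠ 0 := by linarith
    field_simp
    ring
  rw [hkey]
  nlinarith [hgc, hpow, habR]

end LowerBound

section ExD

variable {n : ℕ}

lemma bddAbove_gFrac (hn : 2 ≤ n) :
    BddAbove (Set.range (fun S : Set (Fin n → Bool) => gFrac 2 Z3 n S)) := by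
  refine ⟨1 / 2 + (2 * ((n : ℝ) - 1))⁻¹, ?_⟩
  rintro y ⟨S, rfl⟩
  have := gFrac_le hn S
  rw [one_div (2 * ((n : ℝ) - 1))] at this
  exact this

lemma exD_le (hn : 2 ≤ n) : exD 2 Z3 n ≤ 1 / 2 + (2 * ((n : ℝ) - 1))⁻¹ := by
  apply ciSup_le
  intro S
  have := gFrac_le hn S
  rw [one_div (2 * ((n : ℝ) - 1))] at this
  exact this

lemma exD_ge (hn : 2 ≤ n) : 1 / 2 - (2 * (n : ℝ))⁻¹ ≤ exD 2 Z3 n :=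
  le_ciSup_of_le (bddAbove_gFrac hn) (Spar n) (gFrac_spar_ge hn)

end ExD

end CubeDensity

/-- λ(Z₃, 2) = 1/2, where Z₃ = {(0,0),(0,1)} consists of two adjacent vertices of Q₂. -/
theorem dCubeDensity_Z3 :
    Filter.Tendsto
      (fun n => CubeDensity.exD 2 ({![false, false], ![false, true]} : Set (Fin 2 → Bool)) n)
      Filter.atTop (nhds (1 / 2 : ℝ)) := by
  have hlo : Filter.Tendsto (fun n : ℕ => 1 / 2 - (2 * (n : ℝ))⁻¹) Filter.atTop
      (nhds (1 / 2 : ℝ)) := by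
    have h1 : Filter.Tendsto (fun n : ℕ => 2 * (n : ℝ)) Filter.atTop Filter.atTop :=
      (tendsto_natCast_atTop_atTop (R := ℝ)).const_mul_atTop (by norm_num)
    have h2 := h1.inv_tendsto_atTop
    have := (tendsto_const_nhds (x := (1 / 2 : ℝ)) (f := Filter.atTop (α := ℕ))).sub h2
    simpa using this
  have hhi : Filter.Tendsto (fun n : ℕ => 1 / 2 + (2 * ((n : ℝ) - 1))⁻¹) Filter.atTop
      (nhds (1 / 2 : ℝ)) := by
    have h0 : Filter.Tendsto (fun n : ℕ => (n : ℝ) - 1) Filter.atTop Filter.atTop :=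
      Filter.tendsto_atTop_add_const_right _ (-1) (tendsto_natCast_atTop_atTop (R := ℝ))
    have h1 : Filter.Tendsto (fun n : ℕ => 2 * ((n : ℝ) - 1)) Filter.atTop Filter.atTop :=
      h0.const_mul_atTop (by norm_num)
    have h2 := h1.inv_tendsto_atTop
    have := (tendsto_const_nhds (x := (1 / 2 : ℝ)) (f := Filter.atTop (α := ℕ))).add h2
    simpa using this
  refine tendsto_of_tendsto_of_tendsto_of_le_of_le' hlo hhi ?_ ?_
  · filter_upwards [Filter.eventually_ge_atTop 2] with n hn
    exact CubeDensity.exD_ge hn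
  · filter_upwards [Filter.eventually_ge_atTop 2] with n hn
    exact CubeDensity.exD_le hn
end

section
/- Let d and i be integers with 1 ≤ i < d, and let H(d,i) = {(v_1,...,v_d) ∈ {0,1}^d : v_1 + v_2 + ... + v_i is even}. Then λ(H(d,i),d) = C(d,i) · i^i · (d−i)^{d−i} / d^d. -/
open Filter

open Finset CubeDensity

namespace CDProof
attribute [local instance] Classical.propDecidable
set_option linter.unusedVariables false


def bz (b : Bool) : ZMod 2 := if b then 1 else 0

lemma bz_xor (a b : Bool) : bz (xor a b) = bz a + bz b := by
  cases a <;> cases b <;> decide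

lemma bz_not (a : Bool) : bz (!a) = bz a + 1 := by cases a <;> decide

def parSet (d : ℕ) (A : Finset (Fin d)) (c : ZMod 2) : Set (Fin d → Bool) :=
  {u | ∑ j ∈ A, bz (u j) = c}

lemma mem_parSet {d : ℕ} {A : Finset (Fin d)} {c : ZMod 2} {u : Fin d → Bool} :
    u ∈ parSet d A c ↔ ∑ j ∈ A, bz (u j) = c := Iff.rfl

lemma card_filter_lt (n m : ℕ) (h : m ≤ n) :
    ((Finset.univ : Finset (Fin n)).filter (fun j : Fin n => (j : ℕ) < m)).card = m := by
  rw [Finset.card_filter, Fin.sum_univ_eq_sum_range (fun j => if j < m then (1:ℕ) else 0) n,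
    ← Finset.card_filter]
  have : (Finset.range n).filter (fun j => j < m) = Finset.range m := by
    ext j; simp only [Finset.mem_filter, Finset.mem_range]; omega
  rw [this, Finset.card_range]

/-- The theorem's configuration H equals a parity set. -/
lemma H_eq_parSet (d i : ℕ) :
    {v : Fin d → Bool |
        Even (∑ j ∈ Finset.univ.filter (fun j : Fin d => (j : ℕ) < i), (v j).toNat)}
      = parSet d (Finset.univ.filter (fun j : Fin d => (j : ℕ) < i)) 0 := by
  ext v
  simp only [Set.mem_setOf_eq, mem_parSet]
  have h1 : ∀ j ∈ Finset.univ.filter (fun j : Fin d => (j : ℕ) < i),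
      bz (v j) = (((v j).toNat : ℕ) : ZMod 2) := by
    intro j _; cases v j <;> decide
  rw [Finset.sum_congr rfl h1, ← Nat.cast_sum, ZMod.natCast_eq_zero_iff,
    ← even_iff_two_dvd]

lemma autMap_image_parSet (d : ℕ) (σ : Equiv.Perm (Fin d)) (ε : Fin d → Bool)
    (A : Finset (Fin d)) (c : ZMod 2) :
    autMap d σ ε '' parSet d A c
      = parSet d (A.image σ) (c + ∑ a ∈ A, bz (ε (σ a))) := by
  ext w
  constructor
  · rintro ⟨v, hv, rfl⟩
    simp only [mem_parSet] at hv ⊢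
    rw [Finset.sum_image (fun a _ b _ h => σ.injective h)]
    have : ∀ a ∈ A, bz (autMap d σ ε v (σ a)) = bz (v a) + bz (ε (σ a)) := by
      intro a _
      simp [autMap, bz_xor]
    rw [Finset.sum_congr rfl this, Finset.sum_add_distrib, hv]
  · intro hw
    refine ⟨fun a => xor (w (σ a)) (ε (σ a)), ?_, ?_⟩
    · simp only [mem_parSet] at hw ⊢
      have : ∀ a ∈ A, bz (xor (w (σ a)) (ε (σ a))) = bz (w (σ a)) + bz (ε (σ a)) := by
        intro a _; rw [bz_xor]
      rw [Finset.sum_congr rfl this, Finset.sum_add_distrib]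
      rw [← Finset.sum_image (f := fun j => bz (w j)) (fun a _ b _ h => σ.injective h), hw]
      rw [add_assoc, CharTwo.add_self_eq_zero, add_zero]
    · funext j
      simp [autMap, Bool.xor_assoc]


lemma exactCopy_parSet_iff (d i : ℕ) (h1 : 1 ≤ i) (hi : i ≤ d) (K : Set (Fin d → Bool)) :
    ExactCopy d (parSet d (Finset.univ.filter (fun j : Fin d => (j : ℕ) < i)) 0) K
      ↔ ∃ A : Finset (Fin d), A.card = i ∧ ∃ c : ZMod 2, K = parSet d A c := by
  set A0 : Finset (Fin d) := Finset.univ.filter (fun j : Fin d => (j : ℕ) < i) with hA0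
  have hA0card : A0.card = i := card_filter_lt d i hi
  constructor
  · rintro ⟨σ, ε, h⟩
    rw [autMap_image_parSet] at h
    exact ⟨A0.image σ, by rw [Finset.card_image_of_injective _ σ.injective, hA0card], _, h.symm⟩
  · rintro ⟨A, hA, c, rfl⟩
    have hAne : A.Nonempty := Finset.card_pos.mp (hA ▸ h1)
    obtain ⟨b₀, hb₀⟩ := hAne
    have hcards : A0.card = A.card := by rw [hA0card, hA]
    classical
    let e : {x // x ∈ A0} ≃ {x // x ∈ A} := Finset.equivOfCardEq hcards
    let σ : Equiv.Perm (Fin d) := e.extendSubtype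
    have himg : A0.image σ = A := by
      apply Finset.eq_of_subset_of_card_le
      · intro j hj
        obtain ⟨a, ha, rfl⟩ := Finset.mem_image.mp hj
        exact e.extendSubtype_mem a ha
      · rw [Finset.card_image_of_injective _ σ.injective, hA0card, hA]
    refine ⟨σ, fun j => if j = b₀ ∧ c = 1 then true else false, ?_⟩
    rw [autMap_image_parSet, himg]
    have hsum : (∑ a ∈ A0, bz ((fun j => if j = b₀ ∧ c = 1 then true else false) (σ a))) = c := by
      rw [← Finset.sum_image (f := fun j => bz (if j = b₀ ∧ c = 1 then true else false))
        (fun a _ b _ h => σ.injective h), himg]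
      rw [Finset.sum_eq_single_of_mem b₀ hb₀ ?_]
      · have h01 : ∀ x : ZMod 2, x = 0 ∨ x = 1 := by decide
        rcases h01 c with hc | hc <;> simp [hc, bz]
      · intro b _ hb
        simp [hb, bz]
    rw [hsum, zero_add]

noncomputable def Bset {n : ℕ} (S : Set (Fin n → Bool)) (x : Fin n → Bool) : Finset (Fin n) :=
  @Finset.filter _ (fun j => ¬ (Function.update x j (!(x j)) ∈ S ↔ x ∈ S))
    (Classical.decPred _) Finset.univ

lemma mem_Bset {n : ℕ} {S : Set (Fin n → Bool)} {x : Fin n → Bool} {j : Fin n} :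
    j ∈ Bset S x ↔ ¬ (Function.update x j (!(x j)) ∈ S ↔ x ∈ S) := by
  classical
  simp [Bset]

lemma parSet_flip {d : ℕ} (A : Finset (Fin d)) (c : ZMod 2) (u : Fin d → Bool) (a : Fin d) :
    (Function.update u a (!(u a)) ∈ parSet d A c ↔ u ∈ parSet d A c) ↔ a ∉ A := by
  by_cases ha : a ∈ A
  · have hsum : ∑ j ∈ A, bz (Function.update u a (!(u a)) j)
        = (∑ j ∈ A, bz (u j)) + 1 := by
      classical
      have h1 : ∀ j ∈ A, bz (Function.update u a (!(u a)) j)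
          = Function.update (fun j => bz (u j)) a (bz (u a) + 1) j := by
        intro j _
        rcases eq_or_ne j a with rfl | hne
        · simp [Function.update_self, bz_not]
        · simp [Function.update_of_ne hne]
      rw [Finset.sum_congr rfl h1, Finset.sum_update_of_mem ha,
        Finset.sum_eq_sum_sdiff_singleton_add ha (fun j => bz (u j))]
      ring
    simp only [parSet, Set.mem_setOf_eq, hsum, ha]
    have : ∀ s c : ZMod 2, ((s + 1 = c ↔ s = c) ↔ ¬True) := by decide
    exact this _ _
  · have hsum : ∑ j ∈ A, bz (Function.update u a (!(u a)) j) = ∑ j ∈ A, bz (u j) := by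
      refine Finset.sum_congr rfl fun j hj => ?_
      have hne : j ≠ a := fun h => ha (h ▸ hj)
      simp [Function.update_of_ne hne]
    simp only [parSet, Set.mem_setOf_eq, hsum, ha, not_false_iff, iff_true]

def phi {n d : ℕ} (F : Finset (Fin n)) (hF : F.card = d) : Fin d → Fin n :=
  fun j' => ((F.orderIsoOfFin hF) j' : Fin n)

lemma phi_inj {n d : ℕ} (F : Finset (Fin n)) (hF : F.card = d) :
    Function.Injective (phi F hF) := fun a b h =>
  (F.orderIsoOfFin hF).injective (Subtype.ext h)

lemma phi_mem {n d : ℕ} (F : Finset (Fin n)) (hF : F.card = d) (j' : Fin d) :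
    phi F hF j' ∈ F := ((F.orderIsoOfFin hF) j').2

lemma phi_symm {n d : ℕ} (F : Finset (Fin n)) (hF : F.card = d) (j : Fin n) (hj : j ∈ F) :
    phi F hF ((F.orderIsoOfFin hF).symm ⟨j, hj⟩) = j := by
  simp [phi]

lemma symm_phi {n d : ℕ} (F : Finset (Fin n)) (hF : F.card = d) (a : Fin d) :
    (F.orderIsoOfFin hF).symm ⟨phi F hF a, phi_mem F hF a⟩ = a := by
  have : (⟨phi F hF a, phi_mem F hF a⟩ : {x // x ∈ F}) = (F.orderIsoOfFin hF) a :=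
    Subtype.ext rfl
  rw [this, OrderIso.symm_apply_apply]

lemma embed_update {n d : ℕ} (F : Finset (Fin n)) (hF : F.card = d) (g : Fin n → Bool)
    (u : Fin d → Bool) (j : Fin n) (hj : j ∈ F) :
    Function.update (embed F hF g u) j (!(embed F hF g u j))
      = embed F hF g (Function.update u ((F.orderIsoOfFin hF).symm ⟨j, hj⟩)
          (!(u ((F.orderIsoOfFin hF).symm ⟨j, hj⟩)))) := by
  set j' := (F.orderIsoOfFin hF).symm ⟨j, hj⟩ with hj'
  funext k
  rcases eq_or_ne k j with rfl | hne
  · rw [Function.update_self]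
    have h1 : embed F hF g u k = u j' := by simp [embed, hj, hj']
    have h2 : embed F hF g (Function.update u j' (!(u j'))) k = !(u j') := by
      simp [embed, hj, hj']
    rw [h1, h2]
  · rw [Function.update_of_ne hne]
    by_cases hk : k ∈ F
    · have hne' : (F.orderIsoOfFin hF).symm ⟨k, hk⟩ ≠ j' := by
        intro hcontra
        apply hne
        have := congrArg (phi F hF) hcontra
        rwa [phi_symm, hj', phi_symm] at this
      simp [embed, hk, Function.update_of_ne hne']
    · simp [embed, hk]

lemma inter_Bset_of_parSet {n d i : ℕ} (F : Finset (Fin n)) (hF : F.card = d)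
    (g : Fin n → Bool) (S : Set (Fin n → Bool)) (A : Finset (Fin d)) (c : ZMod 2)
    (hK : {u : Fin d → Bool | embed F hF g u ∈ S} = parSet d A c) (hA : A.card = i)
    (u : Fin d → Bool) :
    (F ∩ Bset S (embed F hF g u)).card = i := by
  have hmem : ∀ w : Fin d → Bool, embed F hF g w ∈ S ↔ w ∈ parSet d A c := by
    intro w
    rw [← hK]; rfl
  have key : ∀ (j : Fin n) (hj : j ∈ F),
      (j ∈ Bset S (embed F hF g u) ↔ (F.orderIsoOfFin hF).symm ⟨j, hj⟩ ∈ A) := by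
    intro j hj
    rw [mem_Bset, embed_update F hF g u j hj, hmem, hmem,
      parSet_flip A c u ((F.orderIsoOfFin hF).symm ⟨j, hj⟩), not_not]
  have him : F ∩ Bset S (embed F hF g u) = A.image (phi F hF) := by
    ext j
    simp only [Finset.mem_inter, Finset.mem_image]
    constructor
    · rintro ⟨hjF, hjB⟩
      exact ⟨_, (key j hjF).mp hjB, phi_symm F hF j hjF⟩
    · rintro ⟨a, ha, rfl⟩
      refine ⟨phi_mem F hF a, ?_⟩
      rw [key _ (phi_mem F hF a), symm_phi]
      exact ha
  rw [him, Finset.card_image_of_injective _ (phi_inj F hF), hA]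

lemma nat_card_subtype {α : Type*} [Fintype α] (p : α → Prop) :
    Nat.card {x // p x} = (Finset.univ.filter p).card := by
  rw [Nat.card_eq_fintype_card, Fintype.card_subtype]

def goodPred (d : ℕ) (H : Set (Fin d → Bool)) {n : ℕ} (S : Set (Fin n → Bool))
    (p : Finset (Fin n) × (Fin n → Bool)) : Prop :=
  ∃ hF : p.1.card = d, (∀ i ∈ p.1, p.2 i = false) ∧ IsGood H S p.1 hF p.2

lemma goodCount_eq (d : ℕ) (H : Set (Fin d → Bool)) (n : ℕ) (S : Set (Fin n → Bool)) :
    goodCount d H n S = (Finset.univ.filter (goodPred d H S)).card :=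
  nat_card_subtype _

lemma embed_eq_off {n d : ℕ} (F : Finset (Fin n)) (hF : F.card = d) (g : Fin n → Bool)
    (u : Fin d → Bool) (k : Fin n) (hk : k ∉ F) : embed F hF g u k = g k := by
  simp [embed, hk]

lemma embed_phi {n d : ℕ} (F : Finset (Fin n)) (hF : F.card = d) (g : Fin n → Bool)
    (u : Fin d → Bool) (j' : Fin d) : embed F hF g u (phi F hF j') = u j' := by
  simp only [embed, phi_mem F hF j', dif_pos, symm_phi]

lemma isGood_flip {n d i : ℕ} (h1 : 1 ≤ i) (hi : i ≤ d) {S : Set (Fin n → Bool)}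
    {F : Finset (Fin n)} {hF : F.card = d} {g : Fin n → Bool}
    (hG : IsGood (parSet d (Finset.univ.filter fun j : Fin d => (j : ℕ) < i) 0) S F hF g)
    (u : Fin d → Bool) :
    (F ∩ Bset S (embed F hF g u)).card = i := by
  obtain ⟨A, hA, c, hK⟩ := (exactCopy_parSet_iff d i h1 hi _).mp hG
  exact inter_Bset_of_parSet F hF g S A c hK hA u

lemma count_F_le {n d i : ℕ} (B : Finset (Fin n)) :
    (Finset.univ.filter
        (fun Fs : Finset (Fin n) => Fs.card = d ∧ (Fs ∩ B).card = i)).card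
      ≤ B.card.choose i * (n - B.card).choose (d - i) := by
  calc _ ≤ ((B.powersetCard i) ×ˢ (Bᶜ.powersetCard (d - i))).card := ?_
      _ = B.card.choose i * (n - B.card).choose (d - i) := by
        rw [Finset.card_product, Finset.card_powersetCard, Finset.card_powersetCard,
          Finset.card_compl, Fintype.card_fin]
  apply Finset.card_le_card_of_injOn (f := fun Fs : Finset (Fin n) => (Fs ∩ B, Fs \ B))
  · intro Fs hFs
    simp only [Finset.mem_coe, Finset.mem_filter, Finset.mem_univ, true_and] at hFs
    obtain ⟨hcard, hinter⟩ := hFs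
    have hsdiff : (Fs \ B).card = d - i := by
      have := Finset.card_inter_add_card_sdiff Fs B
      omega
    simp only [Finset.mem_coe, Finset.mem_product, Finset.mem_powersetCard]
    exact ⟨⟨Finset.inter_subset_right, hinter⟩,
      ⟨fun x hx => Finset.mem_compl.mpr (Finset.mem_sdiff.mp hx).2, hsdiff⟩⟩
  · intro Fs _ Fs' _ heq
    have h1 : Fs ∩ B = Fs' ∩ B := congrArg Prod.fst heq
    have h2 : Fs \ B = Fs' \ B := congrArg Prod.snd heq
    calc Fs = Fs ∩ B ∪ Fs \ B := (sup_inf_sdiff Fs B).symm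
      _ = Fs' ∩ B ∪ Fs' \ B := by rw [h1, h2]
      _ = Fs' := sup_inf_sdiff Fs' B

lemma goodCount_mul_le (d i : ℕ) (h1 : 1 ≤ i) (hi : i ≤ d) (n : ℕ) (S : Set (Fin n → Bool)) :
    goodCount d (parSet d (Finset.univ.filter fun j : Fin d => (j : ℕ) < i) 0) n S * 2 ^ d
      ≤ ∑ x : Fin n → Bool,
          (Bset S x).card.choose i * (n - (Bset S x).card).choose (d - i) := by
  classical
  set H := parSet d (Finset.univ.filter fun j : Fin d => (j : ℕ) < i) 0 with hH
  set P := Finset.univ.filter (goodPred d H S) with hP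
  set T := (Finset.univ : Finset ((Fin n → Bool) × Finset (Fin n))).filter
    (fun q => q.2.card = d ∧ (q.2 ∩ Bset S q.1).card = i) with hT
  have hstep1 : goodCount d H n S * 2 ^ d = (P ×ˢ (Finset.univ : Finset (Fin d → Bool))).card := by
    rw [Finset.card_product, Finset.card_univ, Fintype.card_fun,
      Fintype.card_bool, Fintype.card_fin, hP, ← goodCount_eq]
  have hstep2 : (P ×ˢ (Finset.univ : Finset (Fin d → Bool))).card ≤ T.card := by
    apply Finset.card_le_card_of_injOn
      (f := fun q => ((if h : q.1.1.card = d then embed q.1.1 h q.1.2 q.2 else q.1.2), q.1.1))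
    · rintro ⟨⟨F, g⟩, u⟩ hq
      simp only [Finset.mem_coe, Finset.mem_product, hP, Finset.mem_filter, Finset.mem_univ, true_and] at hq
      obtain ⟨⟨hF, hnorm, hG⟩, -⟩ := hq
      simp only [Finset.mem_coe, hT, Finset.mem_filter, Finset.mem_univ, true_and, dif_pos hF]
      exact ⟨hF, isGood_flip h1 hi hG u⟩
    · rintro ⟨⟨F, g⟩, u⟩ hq ⟨⟨F', g'⟩, u'⟩ hq' heq
      simp only [Finset.coe_filter, Finset.mem_coe, Finset.mem_product, hP, Finset.mem_filter,
        Finset.mem_univ, true_and, Set.mem_setOf_eq] at hq hq'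
      obtain ⟨⟨hF, hnorm, -⟩, -⟩ := hq
      obtain ⟨⟨hF', hnorm', -⟩, -⟩ := hq'
      have hFF : F = F' := congrArg Prod.snd heq
      subst hFF
      have hx : embed F hF g u = embed F hF' g' u' := by
        have := congrArg Prod.fst heq
        simpa only [dif_pos hF, dif_pos hF'] using this
      have hgg : g = g' := by
        funext k
        by_cases hk : k ∈ F
        · exact (hnorm k hk).trans (hnorm' k hk).symm
        · rw [← embed_eq_off F hF g u k hk, ← embed_eq_off F hF' g' u' k hk, hx]
      have huu : u = u' := by
        funext j'
        rw [← embed_phi F hF g u j', hx, embed_phi]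
      rw [hgg, huu]
  have hstep3 : T.card = ∑ x : Fin n → Bool,
      (Finset.univ.filter
        (fun Fs : Finset (Fin n) => Fs.card = d ∧ (Fs ∩ Bset S x).card = i)).card := by
    rw [Finset.card_eq_sum_card_fiberwise (f := Prod.fst) (t := Finset.univ)
      (fun q _ => Finset.mem_univ _)]
    refine Finset.sum_congr rfl fun x _ => ?_
    apply Finset.card_nbij' (i := fun q => q.2) (j := fun Fs => (x, Fs))
    · intro q hq
      simp only [Finset.mem_coe, hT, Finset.mem_filter, Finset.mem_univ, true_and] at hq
      obtain ⟨⟨h1', h2'⟩, h3'⟩ := hq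
      simp only [Finset.mem_coe, Finset.mem_filter, Finset.mem_univ, true_and]
      rw [h3'] at h2'
      exact ⟨h1', h2'⟩
    · intro Fs hFs
      simp only [Finset.mem_coe, Finset.mem_filter, Finset.mem_univ, true_and] at hFs
      simp only [Finset.mem_coe, hT, Finset.mem_filter, Finset.mem_univ, true_and]
      exact ⟨hFs, trivial⟩
    · intro q hq
      simp only [Finset.mem_coe, Finset.mem_filter] at hq
      rw [← hq.2]
    · intro Fs _
      rfl
  calc goodCount d H n S * 2 ^ d = (P ×ˢ (Finset.univ : Finset (Fin d → Bool))).card := hstep1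
    _ ≤ T.card := hstep2
    _ = _ := hstep3
    _ ≤ _ := Finset.sum_le_sum fun x _ => count_F_le (Bset S x)

def Spar (n m : ℕ) : Set (Fin n → Bool) :=
  {x | ∑ j ∈ Finset.univ.filter (fun j : Fin n => (j : ℕ) < m), bz (x j) = 0}

lemma filter_mem_eq_image {n d m : ℕ} (F : Finset (Fin n)) (hF : F.card = d) :
    (Finset.univ.filter (fun j : Fin n => (j : ℕ) < m)).filter (fun j => j ∈ F)
      = (Finset.univ.filter (fun j' : Fin d => ((phi F hF j' : Fin n) : ℕ) < m)).image
          (phi F hF) := by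
  ext j
  simp only [Finset.mem_filter, Finset.mem_univ, true_and, Finset.mem_image]
  constructor
  · rintro ⟨hjm, hjF⟩
    exact ⟨(F.orderIsoOfFin hF).symm ⟨j, hjF⟩, by rwa [phi_symm], phi_symm F hF j hjF⟩
  · rintro ⟨j', hj', rfl⟩
    exact ⟨hj', phi_mem F hF j'⟩

lemma lower_isGood {n d i m : ℕ} (h1 : 1 ≤ i) (hi : i ≤ d)
    (F : Finset (Fin n)) (hF : F.card = d)
    (hFm : (F.filter (fun j : Fin n => (j : ℕ) < m)).card = i) (g : Fin n → Bool) :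
    IsGood (parSet d (Finset.univ.filter fun j : Fin d => (j : ℕ) < i) 0)
      (Spar n m) F hF g := by
  rw [IsGood, exactCopy_parSet_iff d i h1 hi]
  set A : Finset (Fin d) :=
    Finset.univ.filter (fun j' : Fin d => ((phi F hF j' : Fin n) : ℕ) < m) with hA
  set C : ZMod 2 :=
    ∑ j ∈ (Finset.univ.filter (fun j : Fin n => (j : ℕ) < m)).filter (fun j => ¬ j ∈ F),
      bz (g j) with hC
  have hcardA : A.card = i := by
    have h1' : A.image (phi F hF) = F.filter (fun j : Fin n => (j : ℕ) < m) := by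
      rw [← filter_mem_eq_image F hF]
      ext j
      simp only [Finset.mem_filter, Finset.mem_univ, true_and]
      tauto
    have := Finset.card_image_of_injective A (phi_inj F hF)
    rw [h1', hFm] at this
    exact this.symm
  refine ⟨A, hcardA, C, ?_⟩
  ext u
  have hsplit : ∑ j ∈ Finset.univ.filter (fun j : Fin n => (j : ℕ) < m),
      bz (embed F hF g u j)
      = (∑ j' ∈ A, bz (u j')) + C := by
    rw [← Finset.sum_filter_add_sum_filter_not
      (Finset.univ.filter (fun j : Fin n => (j : ℕ) < m)) (fun j => j ∈ F)]
    congr 1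
    · rw [filter_mem_eq_image F hF,
        Finset.sum_image (fun a _ b _ h => phi_inj F hF h)]
      exact Finset.sum_congr rfl fun j' _ => by rw [embed_phi]
    · exact Finset.sum_congr rfl fun j hj => by
        rw [embed_eq_off F hF g u j (Finset.mem_filter.mp hj).2]
  simp only [Set.mem_setOf_eq, Spar, mem_parSet, hsplit]
  have : ∀ s c : ZMod 2, (s + c = 0 ↔ s = c) := by decide
  exact this _ _

lemma count_g {n d : ℕ} (F : Finset (Fin n)) (hF : F.card = d) :
    (Finset.univ.filter (fun g : Fin n → Bool => ∀ j ∈ F, g j = false)).card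
      = 2 ^ (n - d) := by
  have hcard : (Finset.univ.filter (fun g : Fin n → Bool => ∀ j ∈ F, g j = false)).card
      = (Finset.univ : Finset ({j : Fin n // j ∉ F} → Bool)).card := by
    apply Finset.card_nbij' (i := fun g => fun j => g j.1)
      (j := fun h => fun j => if hj : j ∈ F then false else h ⟨j, hj⟩)
    · intro g _; exact Finset.mem_univ _
    · intro h _
      simp only [Finset.mem_coe, Finset.mem_filter, Finset.mem_univ, true_and]
      intro j hj
      simp [hj]
    · intro g hg
      simp only [Finset.mem_coe, Finset.mem_filter, Finset.mem_univ, true_and] at hg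
      funext k
      by_cases hk : k ∈ F
      · simp [hk, hg k hk]
      · simp [hk]
    · intro h _
      funext j
      simp [j.2]
  rw [hcard, Finset.card_univ, Fintype.card_fun, Fintype.card_bool,
    Fintype.card_subtype_compl, Fintype.card_fin, Fintype.card_coe, hF]

lemma W_lower {n d i m : ℕ} (hi : i ≤ d) (hm : m ≤ n) :
    m.choose i * (n - m).choose (d - i)
      ≤ (Finset.univ.filter (fun F : Finset (Fin n) =>
          F.card = d ∧ (F.filter (fun j : Fin n => (j : ℕ) < m)).card = i)).card := by
  set M : Finset (Fin n) := Finset.univ.filter (fun j : Fin n => (j : ℕ) < m) with hM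
  have hMcard : M.card = m := card_filter_lt n m hm
  have hle : ((M.powersetCard i) ×ˢ (Mᶜ.powersetCard (d - i))).card
      ≤ (Finset.univ.filter (fun F : Finset (Fin n) =>
          F.card = d ∧ (F.filter (fun j : Fin n => (j : ℕ) < m)).card = i)).card := by
    apply Finset.card_le_card_of_injOn (f := fun q => q.1 ∪ q.2)
    · rintro ⟨A, B⟩ hq
      simp only [Finset.mem_coe, Finset.mem_product, Finset.mem_powersetCard] at hq
      obtain ⟨⟨hAM, hAcard⟩, hBM, hBcard⟩ := hq
      have hdisj : Disjoint A B := by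
        refine Finset.disjoint_left.mpr fun a ha hb => ?_
        exact (Finset.mem_compl.mp (hBM hb)) (hAM ha)
      have hunion_filter : (A ∪ B).filter (fun j : Fin n => (j : ℕ) < m) = A := by
        ext j
        simp only [Finset.mem_filter, Finset.mem_union]
        constructor
        · rintro ⟨hj | hj, hjm⟩
          · exact hj
          · exact absurd (by simpa [hM] using hBM hj) (by simpa using hjm)
        · intro hj
          exact ⟨Or.inl hj, by simpa [hM] using hAM hj⟩
      simp only [Finset.mem_coe, Finset.mem_filter, Finset.mem_univ, true_and]
      constructor
      · rw [Finset.card_union_of_disjoint hdisj, hAcard, hBcard]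
        omega
      · rw [hunion_filter, hAcard]
    · rintro ⟨A, B⟩ hq ⟨A', B'⟩ hq' heq
      simp only [Finset.coe_product, Set.mem_prod, Finset.mem_coe,
        Finset.mem_powersetCard] at hq hq'
      obtain ⟨⟨hAM, -⟩, hBM, -⟩ := hq
      obtain ⟨⟨hAM', -⟩, hBM', -⟩ := hq'
      simp only at heq
      have hA : A = A' := by
        have h1 : (A ∪ B) ∩ M = A := by
          ext j
          simp only [Finset.mem_inter, Finset.mem_union]
          constructor
          · rintro ⟨hj | hj, hjM⟩
            · exact hj
            · exact absurd hjM (Finset.mem_compl.mp (hBM hj))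
          · intro hj; exact ⟨Or.inl hj, hAM hj⟩
        have h2 : (A' ∪ B') ∩ M = A' := by
          ext j
          simp only [Finset.mem_inter, Finset.mem_union]
          constructor
          · rintro ⟨hj | hj, hjM⟩
            · exact hj
            · exact absurd hjM (Finset.mem_compl.mp (hBM' hj))
          · intro hj; exact ⟨Or.inl hj, hAM' hj⟩
        rw [← h1, ← h2, heq]
      have hB : B = B' := by
        have h1 : (A ∪ B) \ M = B := by
          ext j
          simp only [Finset.mem_sdiff, Finset.mem_union]
          constructor
          · rintro ⟨hj | hj, hjM⟩
            · exact absurd (hAM hj) hjM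
            · exact hj
          · intro hj
            exact ⟨Or.inr hj, Finset.mem_compl.mp (hBM hj)⟩
        have h2 : (A' ∪ B') \ M = B' := by
          ext j
          simp only [Finset.mem_sdiff, Finset.mem_union]
          constructor
          · rintro ⟨hj | hj, hjM⟩
            · exact absurd (hAM' hj) hjM
            · exact hj
          · intro hj
            exact ⟨Or.inr hj, Finset.mem_compl.mp (hBM' hj)⟩
        rw [← h1, ← h2, heq]
      rw [Prod.mk.injEq]
      exact ⟨hA, hB⟩
  calc m.choose i * (n - m).choose (d - i)
      = ((M.powersetCard i) ×ˢ (Mᶜ.powersetCard (d - i))).card := by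
        rw [Finset.card_product, Finset.card_powersetCard, Finset.card_powersetCard,
          Finset.card_compl, Fintype.card_fin, hMcard]
    _ ≤ _ := hle

lemma goodCount_lower {n d i m : ℕ} (h1 : 1 ≤ i) (hi : i ≤ d) (hm : m ≤ n) :
    m.choose i * (n - m).choose (d - i) * 2 ^ (n - d)
      ≤ goodCount d (parSet d (Finset.univ.filter fun j : Fin d => (j : ℕ) < i) 0) n
          (Spar n m) := by
  rw [goodCount_eq]
  set W : Finset (Finset (Fin n)) := Finset.univ.filter (fun F : Finset (Fin n) =>
    F.card = d ∧ (F.filter (fun j : Fin n => (j : ℕ) < m)).card = i) with hW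
  set P0 : Finset (Finset (Fin n) × (Fin n → Bool)) :=
    Finset.univ.filter (fun p =>
      (p.1.card = d ∧ (p.1.filter (fun j : Fin n => (j : ℕ) < m)).card = i)
        ∧ ∀ j ∈ p.1, p.2 j = false) with hP0
  have hsub : P0 ⊆ Finset.univ.filter (goodPred d (parSet d (Finset.univ.filter fun j : Fin d => (j : ℕ) < i) 0) (Spar n m)) := by
    rw [hP0]
    apply Finset.monotone_filter_right
    rintro p - ⟨⟨hF, hFm⟩, hnorm⟩
    exact ⟨hF, hnorm, lower_isGood h1 hi p.1 hF hFm p.2⟩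
  have hP0card : P0.card = W.card * 2 ^ (n - d) := by
    rw [Finset.card_eq_sum_card_fiberwise (f := Prod.fst) (t := W) ?_]
    · rw [Finset.sum_congr rfl (g := fun F => 2 ^ (n - d)) ?_, Finset.sum_const,
        smul_eq_mul]
      intro F hFW
      simp only [hW, Finset.mem_filter, Finset.mem_univ, true_and] at hFW
      rw [← count_g F hFW.1]
      apply Finset.card_nbij' (i := fun p => p.2) (j := fun g => (F, g))
      · intro p hp
        simp only [Finset.mem_coe, hP0, Finset.mem_filter, Finset.mem_univ, true_and] at hp
        obtain ⟨⟨-, hnorm⟩, hfst⟩ := hp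
        simp only [Finset.mem_coe, Finset.mem_filter, Finset.mem_univ, true_and]
        intro j hj
        exact hnorm j (hfst ▸ hj)
      · intro g hg
        simp only [Finset.mem_coe, Finset.mem_filter, Finset.mem_univ, true_and] at hg
        simp only [Finset.mem_coe, hP0, Finset.mem_filter, Finset.mem_univ, true_and]
        exact ⟨⟨⟨hFW.1, hFW.2⟩, hg⟩, trivial⟩
      · intro p hp
        simp only [Finset.mem_coe, Finset.mem_filter] at hp
        rw [← hp.2]
      · intro g _
        rfl
    · intro p hp
      simp only [Finset.mem_coe, hP0, Finset.mem_filter, Finset.mem_univ, true_and] at hp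
      simp only [Finset.mem_coe, hW, Finset.mem_filter, Finset.mem_univ, true_and]
      exact hp.1
  calc m.choose i * (n - m).choose (d - i) * 2 ^ (n - d)
      ≤ W.card * 2 ^ (n - d) := by
        apply Nat.mul_le_mul_right
        exact W_lower hi hm
    _ = P0.card := hP0card.symm
    _ ≤ _ := Finset.card_le_card hsub

lemma amgm (i j d : ℕ) (hi : 0 < i) (hj : 0 < j) (hd : i + j = d)
    (x y : ℝ) (hx : 0 ≤ x) (hy : 0 ≤ y) :
    x ^ i * y ^ j * (d : ℝ) ^ d ≤ (i : ℝ) ^ i * (j : ℝ) ^ j * (x + y) ^ d := by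
  have hdpos : 0 < d := by omega
  have hdr : (0:ℝ) < d := by exact_mod_cast hdpos
  have hir : (0:ℝ) < i := by exact_mod_cast hi
  have hjr : (0:ℝ) < j := by exact_mod_cast hj
  set w₁ : ℝ := i / d
  set w₂ : ℝ := j / d
  set p₁ : ℝ := d * x / i
  set p₂ : ℝ := d * y / j
  have hp₁ : 0 ≤ p₁ := by positivity
  have hp₂ : 0 ≤ p₂ := by positivity
  have hw : w₁ + w₂ = 1 := by
    simp only [w₁, w₂]
    rw [← add_div, ← Nat.cast_add, hd, div_self (ne_of_gt hdr)]
  have hgm := Real.geom_mean_le_arith_mean2_weighted (le_of_lt (by positivity : (0:ℝ) < w₁))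
    (le_of_lt (by positivity : (0:ℝ) < w₂)) hp₁ hp₂ hw
  have harith : w₁ * p₁ + w₂ * p₂ = x + y := by
    simp only [w₁, w₂, p₁, p₂]
    field_simp
  rw [harith] at hgm
  have hpow := pow_le_pow_left₀ (by positivity) hgm d
  have hlhs : (p₁ ^ w₁ * p₂ ^ w₂) ^ d = p₁ ^ i * p₂ ^ j := by
    rw [mul_pow, ← Real.rpow_natCast (p₁ ^ w₁) d, ← Real.rpow_natCast (p₂ ^ w₂) d,
      ← Real.rpow_mul hp₁, ← Real.rpow_mul hp₂]
    have h1 : w₁ * d = i := by simp only [w₁]; field_simp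
    have h2 : w₂ * d = j := by simp only [w₂]; field_simp
    rw [h1, h2, Real.rpow_natCast, Real.rpow_natCast]
  rw [hlhs] at hpow
  have hexp : p₁ ^ i * p₂ ^ j = (d:ℝ)^i * x^i / (i:ℝ)^i * ((d:ℝ)^j * y^j / (j:ℝ)^j) := by
    rw [div_pow, div_pow, mul_pow, mul_pow]
  rw [hexp] at hpow
  have hdd : (d:ℝ)^i * (d:ℝ)^j = (d:ℝ)^d := by rw [← pow_add, hd]
  have hfin := mul_le_mul_of_nonneg_left hpow
    (by positivity : (0:ℝ) ≤ (i:ℝ)^i * (j:ℝ)^j)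
  calc x ^ i * y ^ j * (d : ℝ) ^ d
      = (i:ℝ)^i * (j:ℝ)^j * ((d:ℝ)^i * x^i / (i:ℝ)^i * ((d:ℝ)^j * y^j / (j:ℝ)^j)) := by
        field_simp
        rw [← hdd]
        ring
    _ ≤ (i : ℝ) ^ i * (j : ℝ) ^ j * (x + y) ^ d := hfin

lemma choose_mul_factorial_le (b k : ℕ) : b.choose k * k.factorial ≤ b ^ k := by
  calc b.choose k * k.factorial = b.descFactorial k := by
        rw [Nat.descFactorial_eq_factorial_mul_choose, mul_comm]
    _ ≤ b ^ k := Nat.descFactorial_le_pow b k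

lemma pow_sub_le_choose_mul_factorial (n d : ℕ) :
    (n - d) ^ d ≤ n.choose d * d.factorial := by
  rw [mul_comm, ← Nat.descFactorial_eq_factorial_mul_choose, Nat.descFactorial_eq_prod_range]
  calc (n - d) ^ d = ∏ _t ∈ Finset.range d, (n - d) := by
        rw [Finset.prod_const, Finset.card_range]
    _ ≤ ∏ t ∈ Finset.range d, (n - t) := by
        apply Finset.prod_le_prod'
        intro t ht
        exact Nat.sub_le_sub_left (le_of_lt (Finset.mem_range.mp ht)) n

lemma gFrac_le (d i : ℕ) (h1 : 1 ≤ i) (h2 : i < d) (n : ℕ) (hn : d < n)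
    (S : Set (Fin n → Bool)) :
    gFrac d (parSet d (Finset.univ.filter fun j : Fin d => (j : ℕ) < i) 0) n S
      ≤ (d.choose i : ℝ) * (i : ℝ) ^ i * ((d - i : ℕ) : ℝ) ^ (d - i) / (d : ℝ) ^ d
          * ((n : ℝ) / ((n : ℝ) - d)) ^ d := by
  set Δ := d - i with hΔ
  have hΔpos : 0 < Δ := by omega
  have hiΔ : i + Δ = d := by omega
  have hnR : (0:ℝ) < n := by exact_mod_cast (by omega : 0 < n)
  have hdltn : (d:ℝ) < n := by exact_mod_cast hn
  have hndR : (0:ℝ) < (n:ℝ) - d := by linarith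
  set G : ℝ := (goodCount d (parSet d (Finset.univ.filter fun j : Fin d => (j : ℕ) < i) 0) n S : ℝ)
    with hG
  have hGnonneg : 0 ≤ G := by positivity
  set Fi : ℝ := (i.factorial : ℝ) with hFi
  set FΔ : ℝ := (Δ.factorial : ℝ) with hFΔ
  set Fd : ℝ := (d.factorial : ℝ) with hFd
  have hFipos : 0 < Fi := by rw [hFi]; exact_mod_cast i.factorial_pos
  have hFΔpos : 0 < FΔ := by rw [hFΔ]; exact_mod_cast Δ.factorial_pos
  have hFdpos : 0 < Fd := by rw [hFd]; exact_mod_cast d.factorial_pos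
  have hdR : (0:ℝ) < d := by exact_mod_cast (by omega : 0 < d)
  set Num0 : ℝ := (i:ℝ)^i * (Δ:ℝ)^Δ with hNum0
  have hNum0pos : 0 < Num0 := by
    have : (0:ℝ) < i := by exact_mod_cast h1
    have : (0:ℝ) < Δ := by exact_mod_cast hΔpos
    positivity
  -- the per-vertex bound
  have hperx : ∀ x : Fin n → Bool,
      (((Bset S x).card.choose i * (n - (Bset S x).card).choose Δ : ℕ) : ℝ)
        * (Fi * FΔ * (d:ℝ)^d) ≤ Num0 * (n:ℝ)^d := by
    intro x
    set b := (Bset S x).card with hb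
    have hbn : b ≤ n := le_trans (Finset.card_le_univ _) (le_of_eq (by simp))
    have t1 : (b.choose i * (n - b).choose Δ) * (i.factorial * Δ.factorial)
        ≤ b ^ i * (n - b) ^ Δ := by
      calc (b.choose i * (n - b).choose Δ) * (i.factorial * Δ.factorial)
          = (b.choose i * i.factorial) * ((n - b).choose Δ * Δ.factorial) := by ring
        _ ≤ b ^ i * (n - b) ^ Δ :=
            Nat.mul_le_mul (choose_mul_factorial_le b i) (choose_mul_factorial_le (n - b) Δ)
    have t1R : ((b.choose i * (n - b).choose Δ : ℕ) : ℝ) * (Fi * FΔ)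
        ≤ (b:ℝ) ^ i * (((n - b : ℕ)):ℝ) ^ Δ := by
      rw [hFi, hFΔ]
      push_cast
      exact_mod_cast (by exact_mod_cast t1 : ((b.choose i * (n - b).choose Δ) *
        (i.factorial * Δ.factorial) : ℕ) ≤ ((b ^ i * (n - b) ^ Δ : ℕ)))
    have t2 : (b:ℝ) ^ i * (((n - b : ℕ)):ℝ) ^ Δ * (d:ℝ)^d ≤ Num0 * (n:ℝ)^d := by
      have hcast : (((n - b : ℕ)):ℝ) = (n:ℝ) - b := by
        rw [Nat.cast_sub hbn]
      have := amgm i Δ d h1 hΔpos hiΔ (b:ℝ) ((n:ℝ) - b) (by positivity)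
        (by rw [← hcast]; positivity)
      rw [hcast]
      calc (b:ℝ) ^ i * ((n:ℝ) - b) ^ Δ * (d:ℝ)^d
          ≤ (i:ℝ)^i * (Δ:ℝ)^Δ * ((b:ℝ) + ((n:ℝ) - b))^d := this
        _ = Num0 * (n:ℝ)^d := by rw [hNum0]; ring_nf
    calc (((Bset S x).card.choose i * (n - (Bset S x).card).choose Δ : ℕ) : ℝ)
        * (Fi * FΔ * (d:ℝ)^d)
        = (((b.choose i * (n - b).choose Δ : ℕ)) : ℝ) * (Fi * FΔ) * (d:ℝ)^d := by
          push_cast; ring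
      _ ≤ (b:ℝ) ^ i * (((n - b : ℕ)):ℝ) ^ Δ * (d:ℝ)^d := by
          apply mul_le_mul_of_nonneg_right t1R (by positivity)
      _ ≤ Num0 * (n:ℝ)^d := t2
  -- global bound
  have hkey : G * 2^d * (Fi * FΔ * (d:ℝ)^d) ≤ 2^n * (Num0 * (n:ℝ)^d) := by
    have hA := goodCount_mul_le d i h1 (le_of_lt h2) n S
    have hAR : G * 2^d ≤ ∑ x : Fin n → Bool,
        (((Bset S x).card.choose i * (n - (Bset S x).card).choose Δ : ℕ) : ℝ) := by
      rw [hG]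
      push_cast
      exact_mod_cast hA
    calc G * 2^d * (Fi * FΔ * (d:ℝ)^d)
        ≤ (∑ x : Fin n → Bool,
            (((Bset S x).card.choose i * (n - (Bset S x).card).choose Δ : ℕ) : ℝ))
            * (Fi * FΔ * (d:ℝ)^d) := by
          apply mul_le_mul_of_nonneg_right hAR (by positivity)
      _ = ∑ x : Fin n → Bool,
            (((Bset S x).card.choose i * (n - (Bset S x).card).choose Δ : ℕ) : ℝ)
            * (Fi * FΔ * (d:ℝ)^d) := by rw [Finset.sum_mul]
      _ ≤ ∑ _x : Fin n → Bool, Num0 * (n:ℝ)^d := Finset.sum_le_sum fun x _ => hperx x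
      _ = 2^n * (Num0 * (n:ℝ)^d) := by
          rw [Finset.sum_const, Finset.card_univ, Fintype.card_fun, Fintype.card_bool,
            Fintype.card_fin, nsmul_eq_mul]
          push_cast
          ring
  -- conclude
  have hChpos : (0:ℝ) < (n.choose d : ℝ) := by exact_mod_cast Nat.choose_pos (le_of_lt hn)
  have hQpos : (0:ℝ) < (2:ℝ)^(n-d) := by positivity
  have h2n : (2:ℝ)^n = 2^d * 2^(n-d) := by
    rw [← pow_add]
    congr 1
    omega
  have hGle : G ≤ 2^(n-d) * (Num0 * (n:ℝ)^d) / (Fi * FΔ * (d:ℝ)^d) := by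
    rw [le_div_iff₀ (mul_pos (mul_pos hFipos hFΔpos) (pow_pos hdR d))]
    have h2d : (0:ℝ) < (2:ℝ)^d := by positivity
    have this2 : (G * (Fi * FΔ * (d:ℝ)^d)) * 2^d ≤ (2^(n-d) * (Num0 * (n:ℝ)^d)) * 2^d :=
      calc (G * (Fi * FΔ * (d:ℝ)^d)) * 2^d = G * 2^d * (Fi * FΔ * (d:ℝ)^d) := by ring
        _ ≤ 2^n * (Num0 * (n:ℝ)^d) := hkey
        _ = (2^(n-d) * (Num0 * (n:ℝ)^d)) * 2^d := by rw [h2n]; ring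
    exact le_of_mul_le_mul_right this2 h2d
  have hChB : ((n:ℝ) - d)^d ≤ (n.choose d : ℝ) * Fd := by
    have := pow_sub_le_choose_mul_factorial n d
    have hcast : (((n - d : ℕ)):ℝ) = (n:ℝ) - d := Nat.cast_sub (le_of_lt hn)
    calc ((n:ℝ) - d)^d = (((n - d : ℕ)):ℝ)^d := by rw [hcast]
      _ ≤ (n.choose d : ℝ) * Fd := by rw [hFd]; exact_mod_cast this
  have hCdi : (d.choose i : ℝ) = Fd / (Fi * FΔ) := by
    rw [hFd, hFi, hFΔ, Nat.cast_choose ℝ (le_of_lt h2)]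
  rw [gFrac]
  rw [div_le_iff₀ (by positivity)]
  have hstep : (d.choose i : ℝ) * (i : ℝ) ^ i * ((d - i : ℕ) : ℝ) ^ (d - i) / (d : ℝ) ^ d
      * ((n : ℝ) / ((n : ℝ) - d)) ^ d * ((n.choose d : ℝ) * 2 ^ (n - d))
      ≥ (d.choose i : ℝ) * Num0 / (d : ℝ) ^ d
      * ((n : ℝ) / ((n : ℝ) - d)) ^ d * ((((n:ℝ) - d)^d / Fd) * 2 ^ (n - d)) := by
    have hmain : (d.choose i : ℝ) * Num0 / (d : ℝ) ^ d * ((n : ℝ) / ((n : ℝ) - d)) ^ d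
        * (2:ℝ) ^ (n - d) ≥ 0 := by
      have h0 : (0:ℝ) ≤ (d.choose i : ℝ) := by positivity
      have h0' : (0:ℝ) < ((n : ℝ) / ((n : ℝ) - d)) ^ d := by positivity
      positivity
    have hch : (((n:ℝ) - d)^d / Fd) ≤ (n.choose d : ℝ) := by
      rw [div_le_iff₀ hFdpos]
      exact hChB
    have hNum0eq : (i : ℝ) ^ i * ((d - i : ℕ) : ℝ) ^ (d - i) = Num0 := by
      rw [hNum0, hΔ]
    calc (d.choose i : ℝ) * (i : ℝ) ^ i * ((d - i : ℕ) : ℝ) ^ (d - i) / (d : ℝ) ^ d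
        * ((n : ℝ) / ((n : ℝ) - d)) ^ d * ((n.choose d : ℝ) * 2 ^ (n - d))
        = ((d.choose i : ℝ) * Num0 / (d : ℝ) ^ d * ((n : ℝ) / ((n : ℝ) - d)) ^ d
            * (2:ℝ)^(n-d)) * (n.choose d : ℝ) := by rw [← hNum0eq]; ring
      _ ≥ ((d.choose i : ℝ) * Num0 / (d : ℝ) ^ d * ((n : ℝ) / ((n : ℝ) - d)) ^ d
            * (2:ℝ)^(n-d)) * (((n:ℝ) - d)^d / Fd) := by
          apply mul_le_mul_of_nonneg_left hch hmain
      _ = (d.choose i : ℝ) * Num0 / (d : ℝ) ^ d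
          * ((n : ℝ) / ((n : ℝ) - d)) ^ d * ((((n:ℝ) - d)^d / Fd) * 2 ^ (n - d)) := by ring
  have hfinaleq : (d.choose i : ℝ) * Num0 / (d : ℝ) ^ d
      * ((n : ℝ) / ((n : ℝ) - d)) ^ d * ((((n:ℝ) - d)^d / Fd) * 2 ^ (n - d))
      = 2^(n-d) * (Num0 * (n:ℝ)^d) / (Fi * FΔ * (d:ℝ)^d) := by
    rw [hCdi, div_pow]
    field_simp
  calc G ≤ 2^(n-d) * (Num0 * (n:ℝ)^d) / (Fi * FΔ * (d:ℝ)^d) := hGle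
    _ = (d.choose i : ℝ) * Num0 / (d : ℝ) ^ d
        * ((n : ℝ) / ((n : ℝ) - d)) ^ d * ((((n:ℝ) - d)^d / Fd) * 2 ^ (n - d)) :=
        hfinaleq.symm
    _ ≤ _ := hstep

lemma bddAbove_gFrac (d : ℕ) (H : Set (Fin d → Bool)) (n : ℕ) :
    BddAbove (Set.range fun S : Set (Fin n → Bool) => gFrac d H n S) :=
  (Set.finite_range _).bddAbove

lemma m_le (d i n : ℕ) (h2 : i < d) : i * n / d ≤ n := by
  calc i * n / d ≤ d * n / d := Nat.div_le_div_right (Nat.mul_le_mul_right n (le_of_lt h2))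
    _ = n := Nat.mul_div_cancel_left n (by omega)

lemma gFrac_ge (d i : ℕ) (h1 : 1 ≤ i) (h2 : i < d) (n : ℕ) (hdn : d ≤ n) :
    ((i * n / d).choose i : ℝ) * ((n - i * n / d).choose (d - i) : ℝ) / (n.choose d : ℝ)
      ≤ exD d (parSet d (Finset.univ.filter fun j : Fin d => (j : ℕ) < i) 0) n := by
  set m := i * n / d with hm
  have hmn : m ≤ n := m_le d i n h2
  have hgood := goodCount_lower (n := n) (m := m) h1 (le_of_lt h2) hmn
  have hChpos : (0:ℝ) < (n.choose d : ℝ) := by exact_mod_cast Nat.choose_pos hdn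
  have hQpos : (0:ℝ) < (2:ℝ)^(n-d) := by positivity
  have hcast : (m.choose i : ℝ) * ((n - m).choose (d - i) : ℝ) * 2^(n-d)
      ≤ (goodCount d (parSet d (Finset.univ.filter fun j : Fin d => (j : ℕ) < i) 0) n
          (Spar n m) : ℝ) := by exact_mod_cast hgood
  have hfrac : (m.choose i : ℝ) * ((n - m).choose (d - i) : ℝ) / (n.choose d : ℝ)
      ≤ gFrac d (parSet d (Finset.univ.filter fun j : Fin d => (j : ℕ) < i) 0) n
          (Spar n m) := by
    rw [gFrac]
    calc (m.choose i : ℝ) * ((n - m).choose (d - i) : ℝ) / (n.choose d : ℝ)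
        = ((m.choose i : ℝ) * ((n - m).choose (d - i) : ℝ) * 2^(n-d))
            / ((n.choose d : ℝ) * 2^(n-d)) := by
          rw [mul_div_mul_right _ _ (ne_of_gt hQpos)]
      _ ≤ _ := (div_le_div_iff_of_pos_right (by positivity)).mpr hcast
  exact le_trans hfrac (le_ciSup (bddAbove_gFrac d _ n) (Spar n m))

lemma exD_le (d i : ℕ) (h1 : 1 ≤ i) (h2 : i < d) (n : ℕ) (hn : d < n) :
    exD d (parSet d (Finset.univ.filter fun j : Fin d => (j : ℕ) < i) 0) n
      ≤ (d.choose i : ℝ) * (i : ℝ) ^ i * ((d - i : ℕ) : ℝ) ^ (d - i) / (d : ℝ) ^ d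
          * ((n : ℝ) / ((n : ℝ) - d)) ^ d :=
  ciSup_le fun S => gFrac_le d i h1 h2 n hn S

lemma cast_choose_df (a k : ℕ) :
    (a.choose k : ℝ) = (a.descFactorial k : ℝ) / (k.factorial : ℝ) := by
  rw [Nat.descFactorial_eq_factorial_mul_choose, Nat.cast_mul, mul_comm,
    mul_div_assoc, div_self (by exact_mod_cast k.factorial_ne_zero : (k.factorial : ℝ) ≠ 0),
    mul_one]

lemma cast_descFactorial_prod (a k : ℕ) :
    (a.descFactorial k : ℝ) = ∏ t ∈ Finset.range k, ((a - t : ℕ) : ℝ) := by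
  rw [Nat.descFactorial_eq_prod_range, Nat.cast_prod]

lemma prod_div_pow (a k n : ℕ) :
    ∏ t ∈ Finset.range k, (((a - t : ℕ) : ℝ) / (n : ℝ))
      = (a.descFactorial k : ℝ) / (n : ℝ) ^ k := by
  rw [Finset.prod_div_distrib, Finset.prod_const, Finset.card_range,
    cast_descFactorial_prod]

lemma tendsto_m_div (d i : ℕ) (hd : 0 < d) :
    Filter.Tendsto (fun n : ℕ => ((i * n / d : ℕ) : ℝ) / (n : ℝ)) Filter.atTop
      (nhds ((i : ℝ) / d)) := by
  have hdR : (0:ℝ) < d := by exact_mod_cast hd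
  apply tendsto_of_tendsto_of_tendsto_of_le_of_le'
    (g := fun n : ℕ => (i : ℝ) / d - 1 / n) (h := fun _ : ℕ => (i : ℝ) / d)
  · have h0 : Filter.Tendsto (fun n : ℕ => 1 / (n:ℝ)) Filter.atTop (nhds 0) :=
      tendsto_one_div_atTop_nhds_zero_nat
    simpa using (tendsto_const_nhds (x := (i : ℝ) / d)).sub h0
  · exact tendsto_const_nhds
  · filter_upwards [Filter.eventually_ge_atTop 1] with n hn
    have hnR : (0:ℝ) < n := by exact_mod_cast hn
    have hdiv := Nat.div_add_mod (i * n) d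
    have hr : (i * n) % d < d := Nat.mod_lt _ hd
    have hnat : i * n < d * (i * n / d) + d := by
      conv_lhs => rw [← hdiv]
      exact Nat.add_lt_add_left hr _
    have hnat' : i * n < d * (i * n / d + 1) := by
      have : d * (i * n / d) + d = d * (i * n / d + 1) := by ring
      rw [← this]
      exact hnat
    have hcast : (i:ℝ) * n < (d:ℝ) * (((i * n / d : ℕ):ℝ) + 1) := by exact_mod_cast hnat'
    rw [sub_le_iff_le_add, ← add_div, div_le_div_iff₀ hdR hnR]
    linarith
  · filter_upwards [Filter.eventually_ge_atTop 1] with n hn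
    have hnR : (0:ℝ) < n := by exact_mod_cast hn
    have hnat : (i * n / d) * d ≤ i * n := Nat.div_mul_le_self (i * n) d
    have hcast : ((i * n / d : ℕ):ℝ) * d ≤ (i:ℝ) * n := by exact_mod_cast hnat
    rw [div_le_div_iff₀ hnR hdR]
    linarith

lemma eventually_t_le_m (d i t : ℕ) (h1 : 1 ≤ i) (hd : 0 < d) :
    ∀ᶠ n : ℕ in Filter.atTop, t ≤ i * n / d := by
  filter_upwards [Filter.eventually_ge_atTop (d * t)] with n hn
  have h1' : n / d ≤ i * n / d := Nat.div_le_div_right (Nat.le_mul_of_pos_left n h1)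
  have h2' : t ≤ n / d := (Nat.le_div_iff_mul_le hd).mpr (by rw [Nat.mul_comm]; exact hn)
  exact le_trans h2' h1'

lemma eventually_t_le_nm (d i t : ℕ) (h2 : i < d) :
    ∀ᶠ n : ℕ in Filter.atTop, i * n / d + t ≤ n := by
  filter_upwards [Filter.eventually_ge_atTop (d * t)] with n hn
  set m := i * n / d with hm
  have hd : 0 < d := by omega
  have hmd : m * d ≤ i * n := Nat.div_mul_le_self (i * n) d
  have hin : i * n + n ≤ d * n := by
    calc i * n + n = (i + 1) * n := by ring
      _ ≤ d * n := Nat.mul_le_mul_right n (by omega)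
  have h5 : (m + t) * d ≤ n * d := by
    calc (m + t) * d = m * d + t * d := by ring
      _ ≤ i * n + (d * t) := by
          apply Nat.add_le_add hmd
          exact Nat.le_of_eq (Nat.mul_comm t d)
      _ ≤ i * n + n := by omega
      _ ≤ d * n := hin
      _ = n * d := by ring
  exact Nat.le_of_mul_le_mul_right h5 hd

/-- factor A -/
lemma tendsto_factor_A (d i t : ℕ) (h1 : 1 ≤ i) (hd : 0 < d) :
    Filter.Tendsto (fun n : ℕ => ((i * n / d - t : ℕ) : ℝ) / (n : ℝ)) Filter.atTop
      (nhds ((i : ℝ) / d)) := by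
  have hmain : Filter.Tendsto
      (fun n : ℕ => ((i * n / d : ℕ) : ℝ) / (n : ℝ) - (t : ℝ) / (n : ℝ)) Filter.atTop
      (nhds ((i : ℝ) / d - 0)) :=
    (tendsto_m_div d i hd).sub (tendsto_const_div_atTop_nhds_zero_nat (t : ℝ))
  rw [sub_zero] at hmain
  apply Filter.Tendsto.congr' ?_ hmain
  filter_upwards [eventually_t_le_m d i t h1 hd] with n hn
  rw [Nat.cast_sub hn, sub_div]

/-- factor B -/
lemma tendsto_factor_B (d i t : ℕ) (h1 : 1 ≤ i) (h2 : i < d) :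
    Filter.Tendsto (fun n : ℕ => ((n - i * n / d - t : ℕ) : ℝ) / (n : ℝ)) Filter.atTop
      (nhds (1 - (i : ℝ) / d)) := by
  have hd : 0 < d := by omega
  have hmain : Filter.Tendsto
      (fun n : ℕ => (n : ℝ) / (n : ℝ) - ((i * n / d : ℕ) : ℝ) / (n : ℝ) - (t : ℝ) / (n : ℝ))
      Filter.atTop (nhds (1 - (i : ℝ) / d - 0)) := by
    apply Filter.Tendsto.sub ?_ (tendsto_const_div_atTop_nhds_zero_nat (t : ℝ))
    apply Filter.Tendsto.sub ?_ (tendsto_m_div d i hd)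
    apply Filter.Tendsto.congr' ?_ (tendsto_const_nhds (x := (1:ℝ)))
    filter_upwards [Filter.eventually_ge_atTop 1] with n hn
    have hnR : (0:ℝ) < n := by exact_mod_cast hn
    rw [div_self (ne_of_gt hnR)]
  rw [sub_zero] at hmain
  apply Filter.Tendsto.congr' ?_ hmain
  filter_upwards [eventually_t_le_nm d i t h2] with n hn
  have hmn : i * n / d ≤ n := by omega
  have htnm : t ≤ n - i * n / d := by omega
  rw [Nat.cast_sub htnm, Nat.cast_sub hmn, sub_div, sub_div]

/-- factor C -/
lemma tendsto_factor_C (t : ℕ) :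
    Filter.Tendsto (fun n : ℕ => ((n - t : ℕ) : ℝ) / (n : ℝ)) Filter.atTop (nhds 1) := by
  have hmain : Filter.Tendsto
      (fun n : ℕ => (n : ℝ) / (n : ℝ) - (t : ℝ) / (n : ℝ)) Filter.atTop (nhds (1 - 0)) := by
    apply Filter.Tendsto.sub ?_ (tendsto_const_div_atTop_nhds_zero_nat (t : ℝ))
    apply Filter.Tendsto.congr' ?_ (tendsto_const_nhds (x := (1:ℝ)))
    filter_upwards [Filter.eventually_ge_atTop 1] with n hn
    have hnR : (0:ℝ) < n := by exact_mod_cast hn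
    rw [div_self (ne_of_gt hnR)]
  rw [sub_zero] at hmain
  apply Filter.Tendsto.congr' ?_ hmain
  filter_upwards [Filter.eventually_ge_atTop t] with n hn
  rw [Nat.cast_sub hn, sub_div]

lemma tendsto_lowChoose (d i : ℕ) (h1 : 1 ≤ i) (h2 : i < d) :
    Filter.Tendsto (fun n : ℕ =>
        ((i * n / d).choose i : ℝ) * ((n - i * n / d).choose (d - i) : ℝ) / (n.choose d : ℝ))
      Filter.atTop
      (nhds ((d.choose i : ℝ) * (i : ℝ) ^ i * ((d - i : ℕ) : ℝ) ^ (d - i) / (d : ℝ) ^ d)) := by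
  have hd : 0 < d := by omega
  have hdR : (0:ℝ) < d := by exact_mod_cast hd
  set Δ := d - i with hΔ
  have hiΔ : i + Δ = d := by omega
  set lowSeq : ℕ → ℝ := fun n =>
    (d.choose i : ℝ)
      * (∏ t ∈ Finset.range i, ((i * n / d - t : ℕ) : ℝ) / (n : ℝ))
      * (∏ t ∈ Finset.range Δ, ((n - i * n / d - t : ℕ) : ℝ) / (n : ℝ))
      * (∏ t ∈ Finset.range d, ((n - t : ℕ) : ℝ) / (n : ℝ))⁻¹ with hlowSeq
  have hT : Filter.Tendsto lowSeq Filter.atTop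
      (nhds ((d.choose i : ℝ) * ((i:ℝ)/d) ^ i * (1 - (i:ℝ)/d) ^ Δ * (1:ℝ)⁻¹)) := by
    have hP1 : Filter.Tendsto
        (fun n : ℕ => ∏ t ∈ Finset.range i, ((i * n / d - t : ℕ) : ℝ) / (n : ℝ))
        Filter.atTop (nhds (((i:ℝ)/d) ^ i)) := by
      have := tendsto_finset_prod (f := fun (t : ℕ) (n : ℕ) => ((i * n / d - t : ℕ) : ℝ) / (n : ℝ))
        (a := fun _ => (i:ℝ)/d) (Finset.range i)
        (fun t _ => tendsto_factor_A d i t h1 hd)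
      simpa [Finset.prod_const, Finset.card_range, div_pow] using this
    have hP2 : Filter.Tendsto
        (fun n : ℕ => ∏ t ∈ Finset.range Δ, ((n - i * n / d - t : ℕ) : ℝ) / (n : ℝ))
        Filter.atTop (nhds ((1 - (i:ℝ)/d) ^ Δ)) := by
      have := tendsto_finset_prod (f := fun (t : ℕ) (n : ℕ) => ((n - i * n / d - t : ℕ) : ℝ) / (n : ℝ))
        (a := fun _ => 1 - (i:ℝ)/d) (Finset.range Δ)
        (fun t _ => tendsto_factor_B d i t h1 h2)
      simpa [Finset.prod_const, Finset.card_range] using this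
    have hP3 : Filter.Tendsto
        (fun n : ℕ => ∏ t ∈ Finset.range d, ((n - t : ℕ) : ℝ) / (n : ℝ))
        Filter.atTop (nhds 1) := by
      have := tendsto_finset_prod (f := fun (t : ℕ) (n : ℕ) => ((n - t : ℕ) : ℝ) / (n : ℝ))
        (a := fun _ => (1:ℝ)) (Finset.range d)
        (fun t _ => tendsto_factor_C t)
      simpa using this
    exact ((tendsto_const_nhds.mul hP1).mul hP2).mul (hP3.inv₀ one_ne_zero)
  have hval : (d.choose i : ℝ) * ((i:ℝ)/d) ^ i * (1 - (i:ℝ)/d) ^ Δ * (1:ℝ)⁻¹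
      = (d.choose i : ℝ) * (i : ℝ) ^ i * ((d - i : ℕ) : ℝ) ^ (d - i) / (d : ℝ) ^ d := by
    have h1' : 1 - (i:ℝ)/d = ((d - i : ℕ) : ℝ) / d := by
      rw [Nat.cast_sub (le_of_lt h2)]
      field_simp
    rw [h1', inv_one, mul_one, div_pow, div_pow, ← hΔ]
    have hdd : (d:ℝ)^i * (d:ℝ)^Δ = (d:ℝ)^d := by rw [← pow_add, hiΔ]
    have hstep : (d.choose i : ℝ) * ((i:ℝ)^i/(d:ℝ)^i) * ((Δ:ℝ)^Δ/(d:ℝ)^Δ)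
        = (d.choose i : ℝ) * (i:ℝ)^i * (Δ:ℝ)^Δ / ((d:ℝ)^i * (d:ℝ)^Δ) := by ring
    rw [hstep, hdd]
  rw [hval] at hT
  apply Filter.Tendsto.congr' ?_ hT
  filter_upwards [Filter.eventually_ge_atTop (d + 1)] with n hn
  have hnR : (0:ℝ) < n := by exact_mod_cast (by omega : 0 < n)
  have hdn : d ≤ n := by omega
  have hDFn : (n.descFactorial d : ℝ) ≠ 0 := by
    have : ¬ (n < d) := by omega
    exact_mod_cast fun h =>
      this (Nat.descFactorial_eq_zero_iff_lt.mp (by exact_mod_cast h))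
  have hFi : (i.factorial : ℝ) ≠ 0 := by exact_mod_cast i.factorial_ne_zero
  have hFΔ : (Δ.factorial : ℝ) ≠ 0 := by exact_mod_cast Δ.factorial_ne_zero
  have hFd : (d.factorial : ℝ) ≠ 0 := by exact_mod_cast d.factorial_ne_zero
  have hCdi : (d.choose i : ℝ) = (d.factorial : ℝ) / ((i.factorial : ℝ) * (Δ.factorial : ℝ)) :=
    Nat.cast_choose ℝ (le_of_lt h2)
  simp only [hlowSeq]
  rw [prod_div_pow, prod_div_pow, prod_div_pow,
    cast_choose_df (i * n / d) i, cast_choose_df (n - i * n / d) Δ, cast_choose_df n d,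
    hCdi]
  have hnd : (n:ℝ)^i * (n:ℝ)^Δ = (n:ℝ)^d := by rw [← pow_add, hiΔ]
  field_simp
  rw [← hnd]
  ring

lemma tendsto_upper (d : ℕ) (hd : 0 < d) (L : ℝ) :
    Filter.Tendsto (fun n : ℕ => L * ((n : ℝ) / ((n : ℝ) - d)) ^ d) Filter.atTop (nhds L) := by
  have hat : Filter.Tendsto (fun n : ℕ => (n:ℝ) - d) Filter.atTop Filter.atTop := by
    have h1 := Filter.tendsto_atTop_add_const_right Filter.atTop (-(d:ℝ))
      (tendsto_natCast_atTop_atTop (R := ℝ))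
    exact h1.congr fun n => by ring
  have hdiv0 : Filter.Tendsto (fun n : ℕ => (d:ℝ)/((n:ℝ) - d)) Filter.atTop (nhds 0) :=
    Filter.Tendsto.div_atTop tendsto_const_nhds hat
  have hbase : Filter.Tendsto (fun n : ℕ => (n:ℝ)/((n:ℝ) - d)) Filter.atTop (nhds 1) := by
    have hplus : Filter.Tendsto (fun n : ℕ => 1 + (d:ℝ)/((n:ℝ) - d)) Filter.atTop
        (nhds (1 + 0)) := Filter.Tendsto.add tendsto_const_nhds hdiv0
    rw [add_zero] at hplus
    apply Filter.Tendsto.congr' ?_ hplus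
    filter_upwards [Filter.eventually_ge_atTop (d + 1)] with n hn
    have hne : (n:ℝ) - d ≠ 0 := by
      have : (d:ℝ) + 1 ≤ n := by exact_mod_cast hn
      intro h
      nlinarith
    field_simp
    ring
  have := Filter.Tendsto.mul (tendsto_const_nhds (x := L)) (hbase.pow d)
  simpa using this

end CDProof

/-- λ(H(d,i), d) = C(d,i) · iⁱ · (d−i)^{d−i} / d^d, where
`H(d,i) = {v ∈ {0,1}^d : v₁ + ⋯ + v_i is even}`. -/
theorem dCubeDensity_H_d_i (d i : ℕ) (h1 : 1 ≤ i) (h2 : i < d) :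
    Filter.Tendsto
      (fun n => CubeDensity.exD d
        {v : Fin d → Bool |
          Even (∑ j ∈ Finset.univ.filter (fun j : Fin d => (j : ℕ) < i), (v j).toNat)} n)
      Filter.atTop
      (nhds ((d.choose i : ℝ) * (i : ℝ) ^ i * ((d - i : ℕ) : ℝ) ^ (d - i) / (d : ℝ) ^ d)) := by
  have hd : 0 < d := by omega
  simp only [CDProof.H_eq_parSet d i]
  apply tendsto_of_tendsto_of_tendsto_of_le_of_le'
    (g := fun n : ℕ => ((i * n / d).choose i : ℝ) * ((n - i * n / d).choose (d - i) : ℝ)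
      / (n.choose d : ℝ))
    (h := fun n : ℕ => (d.choose i : ℝ) * (i : ℝ) ^ i * ((d - i : ℕ) : ℝ) ^ (d - i) / (d : ℝ) ^ d
      * ((n : ℝ) / ((n : ℝ) - d)) ^ d)
  · exact CDProof.tendsto_lowChoose d i h1 h2
  · exact CDProof.tendsto_upper d hd _
  · filter_upwards [Filter.eventually_ge_atTop d] with n hn
    exact CDProof.gFrac_ge d i h1 h2 n hn
  · filter_upwards [Filter.eventually_ge_atTop (d + 1)] with n hn
    exact CDProof.exD_le d i h1 h2 n (by omega)
end

section
/- Let H ⊆ {0,1}^d be a configuration in Q_d. Then the local d-cube density π(H,d) equals 1 if and only if H is layered. -/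
open Filter

namespace CubeDensity

/-- The number of `H`-good sub-`d`-cubes of `Q_n` containing the vertex `v` (such a
sub-`d`-cube is determined by its set `F` of flip coordinates, its fixed values outside
`F` being those of `v`). -/
noncomputable def goodCountAt (d : ℕ) (H : Set (Fin d → Bool)) {n : ℕ}
    (S : Set (Fin n → Bool)) (v : Fin n → Bool) : ℕ :=
  Nat.card {F : Finset (Fin n) // ∃ hF : F.card = d, IsGood H S F hF v}

/-- The fraction of the `C(n,d)` sub-`d`-cubes of `Q_n` containing `v` that are
`H`-good for `S`. -/
noncomputable def gLocal (d : ℕ) (H : Set (Fin d → Bool)) {n : ℕ}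
    (S : Set (Fin n → Bool)) (v : Fin n → Bool) : ℝ :=
  (goodCountAt d H S v : ℝ) / (n.choose d : ℝ)

/-- `π_in(H,d,n)`: the maximum of the local `H`-good density over all pairs `v ∈ S`. -/
noncomputable def piIn (d : ℕ) (H : Set (Fin d → Bool)) (n : ℕ) : ℝ :=
  ⨆ (S : Set (Fin n → Bool)) (v : Fin n → Bool) (_ : v ∈ S), gLocal d H S v

/-- `π_out(H,d,n)`: the maximum of the local `H`-good density over all pairs `v ∉ S`. -/
noncomputable def piOut (d : ℕ) (H : Set (Fin d → Bool)) (n : ℕ) : ℝ :=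
  ⨆ (S : Set (Fin n → Bool)) (v : Fin n → Bool) (_ : v ∉ S), gLocal d H S v

/-- A configuration `H` in `Q_d` is layered if it is an exact copy of a configuration
determined by a set of Hamming weights. -/
def Layered (d : ℕ) (H : Set (Fin d → Bool)) : Prop :=
  ∃ W : Set ℕ, ExactCopy d {v : Fin d → Bool | (∑ j, (v j).toNat) ∈ W} H

end CubeDensity
namespace CubeDensity

open Finset

variable {d : ℕ}

lemma autMap_comp (σ₂ σ₁ : Equiv.Perm (Fin d)) (ε₂ ε₁ : Fin d → Bool) :
    autMap d σ₂ ε₂ ∘ autMap d σ₁ ε₁ =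
      autMap d (σ₂ * σ₁) (fun i => xor (ε₁ (σ₂⁻¹ i)) (ε₂ i)) := by
  funext v i
  simp [autMap, mul_inv_rev, Equiv.Perm.mul_apply, Bool.xor_assoc]

lemma autMap_one : autMap d 1 (fun _ => false) = id := by
  funext v i
  simp [autMap]

lemma ExactCopy.refl (H : Set (Fin d → Bool)) : ExactCopy d H H :=
  ⟨1, fun _ => false, by rw [autMap_one, Set.image_id]⟩

lemma ExactCopy.trans {X Y Z : Set (Fin d → Bool)} (h₁ : ExactCopy d X Y)
    (h₂ : ExactCopy d Y Z) : ExactCopy d X Z := by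
  obtain ⟨σ₁, ε₁, rfl⟩ := h₁
  obtain ⟨σ₂, ε₂, rfl⟩ := h₂
  exact ⟨σ₂ * σ₁, _, by rw [← autMap_comp, Set.image_comp]⟩

lemma ExactCopy.symm {X Y : Set (Fin d → Bool)} (h : ExactCopy d X Y) :
    ExactCopy d Y X := by
  obtain ⟨σ, ε, rfl⟩ := h
  refine ⟨σ⁻¹, fun i => ε (σ i), ?_⟩
  rw [← Set.image_comp, autMap_comp]
  have : autMap d (σ⁻¹ * σ) (fun i => xor (ε (σ⁻¹⁻¹ i)) (ε (σ i))) = id := by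
    funext v i
    simp [autMap]
  rw [this, Set.image_id]

lemma ExactCopy.image {X Y : Set (Fin d → Bool)} (h : ExactCopy d X Y)
    (σ : Equiv.Perm (Fin d)) (ε : Fin d → Bool) :
    ExactCopy d X (autMap d σ ε '' Y) :=
  h.trans ⟨σ, ε, rfl⟩

end CubeDensity
namespace CubeDensity

open Finset

variable {n R d : ℕ}

lemma embed_orderEmb (F : Finset (Fin n)) (hF : F.card = d) (g : Fin n → Bool)
    (u : Fin d → Bool) (k : Fin d) :
    embed F hF g u (F.orderEmbOfFin hF k) = u k := by
  have hmem : F.orderEmbOfFin hF k ∈ F := Finset.orderEmbOfFin_mem F hF k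
  have h2 : (F.orderIsoOfFin hF).symm ⟨F.orderEmbOfFin hF k, hmem⟩ = k := by
    apply (F.orderIsoOfFin hF).injective
    rw [OrderIso.apply_symm_apply]
    ext
    simp [Finset.coe_orderIsoOfFin_apply]
  simp [embed, hmem, h2]

lemma embed_not_mem (F : Finset (Fin n)) (hF : F.card = d) (g : Fin n → Bool)
    (u : Fin d → Bool) {i : Fin n} (hi : i ∉ F) :
    embed F hF g u i = g i := by
  simp [embed, hi]

/-- the `d`-subset of `Fin n` corresponding to a `d`-subset of `Fin R` under the
order embedding of an `R`-set `A`. -/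
def liftF (A : Finset (Fin n)) (hA : A.card = R) (F' : Finset (Fin R)) : Finset (Fin n) :=
  F'.image (A.orderEmbOfFin hA)

lemma liftF_card (A : Finset (Fin n)) (hA : A.card = R) (F' : Finset (Fin R)) :
    (liftF A hA F').card = F'.card :=
  Finset.card_image_of_injective _ (A.orderEmbOfFin hA).injective

lemma liftF_subset (A : Finset (Fin n)) (hA : A.card = R) (F' : Finset (Fin R)) :
    liftF A hA F' ⊆ A := by
  intro i hi
  obtain ⟨j, _, rfl⟩ := Finset.mem_image.1 hi
  exact Finset.orderEmbOfFin_mem A hA j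

lemma orderEmb_liftF (A : Finset (Fin n)) (hA : A.card = R) (F' : Finset (Fin R))
    (hF' : F'.card = d) (k : Fin d) :
    (liftF A hA F').orderEmbOfFin ((liftF_card A hA F').trans hF') k =
      A.orderEmbOfFin hA (F'.orderEmbOfFin hF' k) := by
  have := Finset.orderEmbOfFin_unique ((liftF_card A hA F').trans hF')
    (f := fun k => A.orderEmbOfFin hA (F'.orderEmbOfFin hF' k))
    (fun k => Finset.mem_image_of_mem _ (Finset.orderEmbOfFin_mem F' hF' k))
    ((A.orderEmbOfFin hA).strictMono.comp (F'.orderEmbOfFin hF').strictMono)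
  exact (congrFun this k).symm

lemma embed_liftF (A : Finset (Fin n)) (hA : A.card = R) (F' : Finset (Fin R))
    (hF' : F'.card = d) (g : Fin n → Bool) (u : Fin d → Bool) :
    embed A hA g (embed F' hF' (fun j => g (A.orderEmbOfFin hA j)) u) =
      embed (liftF A hA F') ((liftF_card A hA F').trans hF') g u := by
  have hinj := (A.orderEmbOfFin hA).injective
  funext i
  by_cases hiA : i ∈ A
  · -- i = A.orderEmbOfFin hA j for j := iso.symm
    obtain ⟨j, rfl⟩ : ∃ j, A.orderEmbOfFin hA j = i := by
      refine ⟨(A.orderIsoOfFin hA).symm ⟨i, hiA⟩, ?_⟩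
      have := (A.orderIsoOfFin hA).apply_symm_apply ⟨i, hiA⟩
      calc A.orderEmbOfFin hA ((A.orderIsoOfFin hA).symm ⟨i, hiA⟩)
          = ((A.orderIsoOfFin hA) ((A.orderIsoOfFin hA).symm ⟨i, hiA⟩) : Fin n) := rfl
        _ = i := by rw [this]
    rw [embed_orderEmb]
    by_cases hjF : j ∈ F'
    · obtain ⟨k, rfl⟩ : ∃ k, F'.orderEmbOfFin hF' k = j := by
        refine ⟨(F'.orderIsoOfFin hF').symm ⟨j, hjF⟩, ?_⟩
        have := (F'.orderIsoOfFin hF').apply_symm_apply ⟨j, hjF⟩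
        calc F'.orderEmbOfFin hF' ((F'.orderIsoOfFin hF').symm ⟨j, hjF⟩)
            = ((F'.orderIsoOfFin hF') ((F'.orderIsoOfFin hF').symm ⟨j, hjF⟩) : Fin R) := rfl
          _ = j := by rw [this]
      rw [embed_orderEmb, ← orderEmb_liftF A hA F' hF', embed_orderEmb]
    · have hnotin : A.orderEmbOfFin hA j ∉ liftF A hA F' := by
        intro hmem
        obtain ⟨j', hj', hj'eq⟩ := Finset.mem_image.1 hmem
        exact hjF (hinj hj'eq ▸ hj')
      rw [embed_not_mem _ _ _ _ hjF, embed_not_mem _ _ _ _ hnotin]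
  · have hnotin : i ∉ liftF A hA F' := fun h => hiA (liftF_subset A hA F' h)
    rw [embed_not_mem _ _ _ _ hiA, embed_not_mem _ _ _ _ hnotin]

lemma config_liftF (A : Finset (Fin n)) (hA : A.card = R) (F' : Finset (Fin R))
    (hF' : F'.card = d) (g : Fin n → Bool) (S : Set (Fin n → Bool)) :
    {u : Fin d → Bool | embed F' hF' (fun j => g (A.orderEmbOfFin hA j)) u
        ∈ (embed A hA g) ⁻¹' S} =
      {u : Fin d → Bool | embed (liftF A hA F') ((liftF_card A hA F').trans hF') g u ∈ S} := by
  ext u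
  simp only [Set.mem_setOf_eq, Set.mem_preimage, embed_liftF]

end CubeDensity
namespace CubeDensity

open Finset
open scoped Classical

variable {n d : ℕ}

lemma goodCountAt_eq_card (H : Set (Fin d → Bool)) (S : Set (Fin n → Bool))
    (v : Fin n → Bool) :
    goodCountAt d H S v =
      (Finset.univ.filter
        (fun F : Finset (Fin n) => ∃ hF : F.card = d, IsGood H S F hF v)).card := by
  classical
  rw [goodCountAt, Nat.card_eq_fintype_card, Fintype.card_subtype]

lemma goodCountAt_le (H : Set (Fin d → Bool)) (S : Set (Fin n → Bool))
    (v : Fin n → Bool) : goodCountAt d H S v ≤ n.choose d := by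
  classical
  rw [goodCountAt_eq_card]
  have h1 : (Finset.univ.filter
      (fun F : Finset (Fin n) => ∃ hF : F.card = d, IsGood H S F hF v)) ⊆
      Finset.univ.filter (fun F : Finset (Fin n) => F.card = d) := by
    apply Finset.monotone_filter_right
    rintro F _ ⟨hF, _⟩
    exact hF
  have h2 : (Finset.univ.filter (fun F : Finset (Fin n) => F.card = d)) =
      Finset.powersetCard d (Finset.univ : Finset (Fin n)) := by
    ext F
    simp [Finset.mem_powersetCard_univ]
  calc _ ≤ (Finset.univ.filter (fun F : Finset (Fin n) => F.card = d)).card :=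
        Finset.card_le_card h1
    _ = n.choose d := by rw [h2, Finset.card_powersetCard, Finset.card_univ, Fintype.card_fin]

lemma gLocal_nonneg (H : Set (Fin d → Bool)) (S : Set (Fin n → Bool)) (v : Fin n → Bool) :
    0 ≤ gLocal d H S v :=
  div_nonneg (Nat.cast_nonneg _) (Nat.cast_nonneg _)

lemma gLocal_le_one (H : Set (Fin d → Bool)) (S : Set (Fin n → Bool)) (v : Fin n → Bool) :
    gLocal d H S v ≤ 1 := by
  rcases Nat.eq_zero_or_pos (n.choose d) with h | h
  · simp [gLocal, h]
  · rw [gLocal, div_le_one (by exact_mod_cast h)]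
    exact_mod_cast goodCountAt_le H S v

lemma piIn_le_one (H : Set (Fin d → Bool)) : piIn d H n ≤ 1 := by
  refine Real.iSup_le (fun S => Real.iSup_le (fun v => Real.iSup_le (fun _ => ?_) zero_le_one)
    zero_le_one) zero_le_one
  exact gLocal_le_one H S v

lemma piOut_le_one (H : Set (Fin d → Bool)) : piOut d H n ≤ 1 := by
  refine Real.iSup_le (fun S => Real.iSup_le (fun v => Real.iSup_le (fun _ => ?_) zero_le_one)
    zero_le_one) zero_le_one
  exact gLocal_le_one H S v

lemma le_piIn {H : Set (Fin d → Bool)} {S : Set (Fin n → Bool)} {v : Fin n → Bool}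
    (hv : v ∈ S) : gLocal d H S v ≤ piIn d H n := by
  have bdd1 : ∀ (S : Set (Fin n → Bool)) (v : Fin n → Bool),
      (⨆ (_ : v ∈ S), gLocal d H S v) ≤ 1 := fun S v =>
    Real.iSup_le (fun _ => gLocal_le_one H S v) zero_le_one
  have bdd2 : ∀ S : Set (Fin n → Bool),
      (⨆ (v : Fin n → Bool) (_ : v ∈ S), gLocal d H S v) ≤ 1 := fun S =>
    Real.iSup_le (fun v => bdd1 S v) zero_le_one
  have h1 : gLocal d H S v = ⨆ (_ : v ∈ S), gLocal d H S v := by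
    haveI : Nonempty (v ∈ S) := ⟨hv⟩
    rw [ciSup_const]
  rw [h1]
  calc (⨆ (_ : v ∈ S), gLocal d H S v)
      ≤ ⨆ (v : Fin n → Bool) (_ : v ∈ S), gLocal d H S v :=
        le_ciSup (f := fun v => ⨆ (_ : v ∈ S), gLocal d H S v)
          ⟨1, by rintro x ⟨v, rfl⟩; exact bdd1 S v⟩ v
    _ ≤ piIn d H n :=
        le_ciSup (f := fun S => ⨆ (v : Fin n → Bool) (_ : v ∈ S), gLocal d H S v)
          ⟨1, by rintro x ⟨S, rfl⟩; exact bdd2 S⟩ S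

lemma le_piOut {H : Set (Fin d → Bool)} {S : Set (Fin n → Bool)} {v : Fin n → Bool}
    (hv : v ∉ S) : gLocal d H S v ≤ piOut d H n := by
  have bdd1 : ∀ (S : Set (Fin n → Bool)) (v : Fin n → Bool),
      (⨆ (_ : v ∉ S), gLocal d H S v) ≤ 1 := fun S v =>
    Real.iSup_le (fun _ => gLocal_le_one H S v) zero_le_one
  have bdd2 : ∀ S : Set (Fin n → Bool),
      (⨆ (v : Fin n → Bool) (_ : v ∉ S), gLocal d H S v) ≤ 1 := fun S =>
    Real.iSup_le (fun v => bdd1 S v) zero_le_one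
  have h1 : gLocal d H S v = ⨆ (_ : v ∉ S), gLocal d H S v := by
    haveI : Nonempty (v ∉ S) := ⟨hv⟩
    rw [ciSup_const]
  rw [h1]
  calc (⨆ (_ : v ∉ S), gLocal d H S v)
      ≤ ⨆ (v : Fin n → Bool) (_ : v ∉ S), gLocal d H S v :=
        le_ciSup (f := fun v => ⨆ (_ : v ∉ S), gLocal d H S v)
          ⟨1, by rintro x ⟨v, rfl⟩; exact bdd1 S v⟩ v
    _ ≤ piOut d H n :=
        le_ciSup (f := fun S => ⨆ (v : Fin n → Bool) (_ : v ∉ S), gLocal d H S v)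
          ⟨1, by rintro x ⟨S, rfl⟩; exact bdd2 S⟩ S

/-- Extraction: if the max of the two suprema is `> 1 - ε` then some pair has large
local density. -/
lemma exists_gLocal_gt {H : Set (Fin d → Bool)} {ε : ℝ} (hε : 0 ≤ 1 - ε)
    (h : 1 - ε < max (piIn d H n) (piOut d H n)) :
    ∃ (S : Set (Fin n → Bool)) (v : Fin n → Bool), 1 - ε < gLocal d H S v := by
  by_contra hcon
  push_neg at hcon
  have hIn : piIn d H n ≤ 1 - ε :=
    Real.iSup_le (fun S => Real.iSup_le (fun v => Real.iSup_le (fun _ => hcon S v) hε) hε) hε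
  have hOut : piOut d H n ≤ 1 - ε :=
    Real.iSup_le (fun S => Real.iSup_le (fun v => Real.iSup_le (fun _ => hcon S v) hε) hε) hε
  exact absurd (max_le hIn hOut) (not_le.2 h)

end CubeDensity
namespace CubeDensity

open Finset Filter

variable {n d : ℕ}

lemma image_orderEmbOfFin (F : Finset (Fin n)) (hF : F.card = d) :
    Finset.image (F.orderEmbOfFin hF) Finset.univ = F := by
  apply Finset.eq_of_subset_of_card_le
  · intro i hi
    obtain ⟨k, _, rfl⟩ := Finset.mem_image.1 hi
    exact Finset.orderEmbOfFin_mem F hF k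
  · rw [Finset.card_image_of_injective _ (F.orderEmbOfFin hF).injective,
      Finset.card_univ, Fintype.card_fin, hF]

lemma wt_embed_zero (F : Finset (Fin n)) (hF : F.card = d) (u : Fin d → Bool) :
    (∑ i, (embed F hF (fun _ => false) u i).toNat) = ∑ j, (u j).toNat := by
  have h1 : (∑ i ∈ F, (embed F hF (fun _ => false) u i).toNat)
      = ∑ i, (embed F hF (fun _ => false) u i).toNat := by
    apply Finset.sum_subset (Finset.subset_univ F)
    intro i _ hi
    rw [embed_not_mem _ _ _ _ hi]
    rfl
  rw [← h1,
    Finset.sum_congr (image_orderEmbOfFin F hF).symm (fun _ _ => rfl),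
    Finset.sum_image (fun a _ b _ h => (F.orderEmbOfFin hF).injective h)]
  exact Finset.sum_congr rfl fun k _ => by rw [embed_orderEmb]

lemma forward_direction (hd : 1 ≤ d) {H : Set (Fin d → Bool)} (hL : Layered d H) :
    Filter.Tendsto (fun n => max (piIn d H n) (piOut d H n))
      Filter.atTop (nhds (1 : ℝ)) := by
  classical
  obtain ⟨W, hW⟩ := hL
  apply tendsto_atTop_of_eventually_const (i₀ := d)
  intro n hn
  set S : Set (Fin n → Bool) := {x | (∑ i, (x i).toNat) ∈ W} with hS
  set v : Fin n → Bool := fun _ => false with hv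
  have hgood : ∀ (F : Finset (Fin n)) (hF : F.card = d), IsGood H S F hF v := by
    intro F hF
    have hconf : {u : Fin d → Bool | embed F hF v u ∈ S}
        = {u : Fin d → Bool | (∑ j, (u j).toNat) ∈ W} := by
      ext u
      simp only [hS, Set.mem_setOf_eq, hv, wt_embed_zero]
    rw [IsGood, hconf]
    exact hW.symm
  have hcount : goodCountAt d H S v = n.choose d := by
    apply le_antisymm (goodCountAt_le H S v)
    rw [goodCountAt_eq_card]
    have heq : (Finset.univ.filter
        (fun F : Finset (Fin n) => ∃ hF : F.card = d, IsGood H S F hF v)) =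
        Finset.univ.filter (fun F : Finset (Fin n) => F.card = d) := by
      ext F
      simp only [Finset.mem_filter, Finset.mem_univ, true_and]
      exact ⟨fun ⟨h, _⟩ => h, fun h => ⟨h, hgood F h⟩⟩
    rw [heq]
    have h2 : (Finset.univ.filter (fun F : Finset (Fin n) => F.card = d)) =
        Finset.powersetCard d (Finset.univ : Finset (Fin n)) := by
      ext F
      simp [Finset.mem_powersetCard_univ]
    rw [h2, Finset.card_powersetCard, Finset.card_univ, Fintype.card_fin]
  have hpos : (0 : ℝ) < (n.choose d : ℝ) := by
    exact_mod_cast Nat.choose_pos hn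
  have hg1 : gLocal d H S v = 1 := by
    rw [gLocal, hcount, div_self hpos.ne']
  apply le_antisymm (max_le (piIn_le_one H) (piOut_le_one H))
  by_cases h0 : v ∈ S
  · exact le_max_of_le_left (hg1 ▸ le_piIn h0)
  · exact le_max_of_le_right (hg1 ▸ le_piOut h0)

end CubeDensity
namespace CubeDensity

open Finset

variable {n R d : ℕ}

open scoped Classical in
lemma card_supersets (hd : d ≤ R) (F : Finset (Fin n)) (hF : F.card = d) :
    (((Finset.univ : Finset (Fin n)).powersetCard R).filter (fun A => F ⊆ A)).card
      = (n - d).choose (R - d) := by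
  have key : (((Finset.univ : Finset (Fin n)).powersetCard R).filter (fun A => F ⊆ A)).card
      = ((Finset.univ \ F).powersetCard (R - d)).card := by
    apply Finset.card_nbij' (fun A => A \ F) (fun B => B ∪ F)
    · intro A hA
      simp only [Finset.mem_coe, Finset.mem_filter, Finset.mem_powersetCard_univ] at hA
      rw [Finset.mem_coe, Finset.mem_powersetCard]
      refine ⟨Finset.sdiff_subset_sdiff (Finset.subset_univ A) le_rfl, ?_⟩
      rw [Finset.card_sdiff_of_subset hA.2, hA.1, hF]
    · intro B hB
      rw [Finset.mem_coe, Finset.mem_powersetCard] at hB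
      have hdisj : Disjoint B F := by
        refine Finset.disjoint_left.2 fun x hx hxF => ?_
        have := hB.1 hx
        simp only [Finset.mem_sdiff] at this
        exact this.2 hxF
      simp only [Finset.mem_coe, Finset.mem_filter, Finset.mem_powersetCard_univ]
      constructor
      · rw [Finset.card_union_of_disjoint hdisj, hB.2, hF, Nat.sub_add_cancel hd]
      · exact Finset.subset_union_right
    · intro A hA
      simp only [Finset.mem_coe, Finset.mem_filter] at hA
      exact Finset.sdiff_union_of_subset hA.2
    · intro B hB
      rw [Finset.mem_coe, Finset.mem_powersetCard] at hB
      have hdisj : Disjoint B F := by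
        refine Finset.disjoint_left.2 fun x hx hxF => ?_
        have := hB.1 hx
        simp only [Finset.mem_sdiff] at this
        exact this.2 hxF
      dsimp only
      rw [Finset.union_sdiff_distrib, Finset.sdiff_self, Finset.union_empty,
        Finset.sdiff_eq_self_of_disjoint hdisj]
  rw [key, Finset.card_powersetCard, Finset.card_sdiff_of_subset (Finset.subset_univ F),
    Finset.card_univ, Fintype.card_fin, hF]

open scoped Classical in
lemma sum_filter_subset_card (hd : d ≤ R) (T : Finset (Finset (Fin n)))
    (hT : ∀ F ∈ T, F.card = d) :
    (∑ A ∈ (Finset.univ : Finset (Fin n)).powersetCard R, (T.filter (· ⊆ A)).card)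
      = T.card * (n - d).choose (R - d) := by
  have h1 : ∀ A, (T.filter (· ⊆ A)).card = ∑ F ∈ T, if F ⊆ A then 1 else 0 := by
    intro A
    rw [Finset.card_filter]
  simp only [h1]
  rw [Finset.sum_comm]
  have h2 : ∀ F ∈ T, (∑ A ∈ (Finset.univ : Finset (Fin n)).powersetCard R,
      if F ⊆ A then 1 else 0) = (n - d).choose (R - d) := by
    intro F hF
    rw [← Finset.card_filter]
    exact card_supersets hd F (hT F hF)
  rw [Finset.sum_congr rfl h2, Finset.sum_const, smul_eq_mul]

open scoped Classical in
/-- If the local density exceeds `1 - 1/(2 * C(R,d))` then there is an `R`-window all of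
whose `d`-subcubes are good. -/
lemma exists_allgood_window {H : Set (Fin d → Bool)} {S : Set (Fin n → Bool)}
    {v : Fin n → Bool} (hd : d ≤ R) (hR : R ≤ n)
    (h : 1 - 1 / (2 * (R.choose d : ℝ)) < gLocal d H S v) :
    ∃ A : Finset (Fin n), A.card = R ∧
      ∀ (F : Finset (Fin n)), F ⊆ A → ∀ (hF : F.card = d), IsGood H S F hF v := by
  set P : Finset (Fin n) → Prop := fun F => ∃ hF : F.card = d, IsGood H S F hF v with hP
  set D : Finset (Finset (Fin n)) := (Finset.univ : Finset (Fin n)).powersetCard d with hD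
  set bad : Finset (Finset (Fin n)) := D.filter (fun F => ¬ P F) with hbad
  have hDcard : D.card = n.choose d := by
    rw [hD, Finset.card_powersetCard, Finset.card_univ, Fintype.card_fin]
  have hgoodcard : goodCountAt d H S v = (D.filter P).card := by
    rw [goodCountAt_eq_card]
    congr 1
    ext F
    simp only [Finset.mem_filter, Finset.mem_univ, true_and, hD,
      Finset.mem_powersetCard_univ, hP]
    exact ⟨fun h => ⟨h.choose, h⟩, fun h => h.2⟩
  have hsplit : (D.filter P).card + bad.card = n.choose d := by
    rw [hbad, Finset.card_filter_add_card_filter_not, hDcard]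
  -- numeric step
  have hC : (0 : ℝ) < (R.choose d : ℝ) := by exact_mod_cast Nat.choose_pos hd
  have hN : (0 : ℝ) < (n.choose d : ℝ) := by exact_mod_cast Nat.choose_pos (hd.trans hR)
  have hkey : (bad.card : ℝ) * (R.choose d : ℝ) < (n.choose d : ℝ) := by
    rw [gLocal] at h
    have hglez : (goodCountAt d H S v : ℝ) = (n.choose d : ℝ) - bad.card := by
      rw [hgoodcard]
      have : ((D.filter P).card : ℝ) + bad.card = (n.choose d : ℝ) := by
        exact_mod_cast congrArg (fun x : ℕ => (x : ℝ)) hsplit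
      linarith
    rw [hglez] at h
    have hmul := (lt_div_iff₀ hN).mp h
    have hexp : (1 - 1 / (2 * (R.choose d : ℝ))) * (n.choose d : ℝ)
        = (n.choose d : ℝ) - 1 / (2 * (R.choose d : ℝ)) * (n.choose d : ℝ) := by ring
    have hb : (bad.card : ℝ) < 1 / (2 * (R.choose d : ℝ)) * (n.choose d : ℝ) := by
      rw [hexp] at hmul
      linarith
    have h3 : 1 / (2 * (R.choose d : ℝ)) * (n.choose d : ℝ) * (R.choose d : ℝ)
        = (n.choose d : ℝ) / 2 := by
      field_simp
    have h4 := mul_lt_mul_of_pos_right hb hC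
    rw [h3] at h4
    linarith
  have hkeyN : bad.card * R.choose d < n.choose d := by exact_mod_cast hkey
  -- identity : n.choose R * R.choose d = n.choose d * (n-d).choose (R-d)
  have hid : (n.choose R) * (R.choose d) = (n.choose d) * ((n - d).choose (R - d)) := by
    have hall := sum_filter_subset_card (n := n) hd D (fun F hF => by
      rwa [hD, Finset.mem_powersetCard_univ] at hF)
    have h4 : ∀ A ∈ (Finset.univ : Finset (Fin n)).powersetCard R,
        (D.filter (· ⊆ A)).card = R.choose d := by
      intro A hA
      rw [Finset.mem_powersetCard_univ] at hA
      have : D.filter (· ⊆ A) = A.powersetCard d := by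
        ext F
        rw [Finset.mem_filter, hD, Finset.mem_powersetCard_univ, Finset.mem_powersetCard]
        tauto
      rw [this, Finset.card_powersetCard, hA]
    rw [Finset.sum_congr rfl h4, Finset.sum_const, smul_eq_mul,
      Finset.card_powersetCard, Finset.card_univ, Fintype.card_fin, hDcard] at hall
    exact hall
  -- suppose every R-window contains a bad subcube
  by_contra hcon
  push_neg at hcon
  have hbadsum := sum_filter_subset_card (n := n) hd bad (fun F hF => by
    rw [hbad, Finset.mem_filter, hD, Finset.mem_powersetCard_univ] at hF
    exact hF.1)
  have hlower : ((Finset.univ : Finset (Fin n)).powersetCard R).card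
      ≤ ∑ A ∈ (Finset.univ : Finset (Fin n)).powersetCard R, (bad.filter (· ⊆ A)).card := by
    rw [Finset.card_eq_sum_ones ((Finset.univ : Finset (Fin n)).powersetCard R)]
    apply Finset.sum_le_sum
    intro A hA
    rw [Finset.mem_powersetCard_univ] at hA
    obtain ⟨F, hFA, hFd, hFbad⟩ := hcon A hA
    have : F ∈ bad.filter (· ⊆ A) := by
      rw [Finset.mem_filter, hbad, Finset.mem_filter, hD, Finset.mem_powersetCard_univ]
      exact ⟨⟨hFd, fun ⟨hF', hg⟩ => hFbad hg⟩, hFA⟩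
    exact Finset.card_pos.2 ⟨F, this⟩
  rw [hbadsum, Finset.card_powersetCard, Finset.card_univ, Fintype.card_fin] at hlower
  -- n.choose R ≤ bad.card * (n-d).choose (R-d), and bad.card * R.choose d < n.choose d
  have hQpos : 0 < (n - d).choose (R - d) := Nat.choose_pos (Nat.sub_le_sub_right hR d)
  have hfinal : n.choose R * R.choose d < n.choose d * (n - d).choose (R - d) := by
    calc n.choose R * R.choose d ≤ (bad.card * (n - d).choose (R - d)) * R.choose d :=
          Nat.mul_le_mul_right _ hlower
      _ = (bad.card * R.choose d) * (n - d).choose (R - d) := by ring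
      _ < n.choose d * (n - d).choose (R - d) := (Nat.mul_lt_mul_right hQpos).mpr hkeyN
  rw [hid] at hfinal
  exact lt_irrefl _ hfinal

end CubeDensity
namespace CubeDensity

open Finset

/-- Finite multicolour hypergraph Ramsey theorem: for every uniformity `k`, finite colour
type `κ` and target size `t`, there is `N` such that every colouring of the `k`-subsets of
a linearly ordered set of size at least `N` admits a monochromatic subset of size `t`. -/
theorem hyper_ramsey (k : ℕ) (κ : Type) [Fintype κ]
    [DecidableEq κ] :
    ∀ t : ℕ, ∃ N : ℕ, ∀ (α : Type) [LinearOrder α] (V : Finset α) (c : Finset α → κ),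
      N ≤ V.card →
      ∃ A : Finset α, A ⊆ V ∧ A.card = t ∧ ∃ k₀ : κ,
        ∀ F : Finset α, F ⊆ A → F.card = k → c F = k₀ := by
  classical
  induction k with
  | zero =>
    intro t
    refine ⟨t, fun α _ V c hV => ?_⟩
    obtain ⟨A, hAV, hAcard⟩ := Finset.exists_subset_card_eq hV
    refine ⟨A, hAV, hAcard, c ∅, fun F _ hF => ?_⟩
    rw [Finset.card_eq_zero.1 hF]
  | succ k IH =>
    intro t
    set Rk : ℕ → ℕ := fun t' => (IH t').choose with hRkdef
    have hRk : ∀ (t' : ℕ) (α : Type) [LinearOrder α] (V : Finset α) (c : Finset α → κ),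
        Rk t' ≤ V.card →
        ∃ A : Finset α, A ⊆ V ∧ A.card = t' ∧ ∃ k₀ : κ,
          ∀ F : Finset α, F ⊆ A → F.card = k → c F = k₀ := fun t' => (IH t').choose_spec
    -- sizes for the chain construction
    set sizes : ℕ → ℕ := fun j => Nat.rec 0 (fun _ x => Rk x + 1) j with hsizes
    have hsizes_succ : ∀ j, sizes (j + 1) = Rk (sizes j) + 1 := fun j => rfl
    set L := Fintype.card κ * (t - 1) + 1 with hL
    refine ⟨sizes L, ?_⟩
    intro α _ V c hV
    -- chain construction
    have chain : ∀ (j : ℕ) (V : Finset α) (c : Finset α → κ), sizes j ≤ V.card →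
        ∃ B : Finset α, B ⊆ V ∧ B.card = j ∧ ∃ colf : α → κ,
          ∀ x ∈ B, ∀ F : Finset α, F ⊆ B.filter (x < ·) → F.card = k →
            c (insert x F) = colf x := by
      intro j
      induction j with
      | zero =>
        intro V c _
        exact ⟨∅, Finset.empty_subset V, Finset.card_empty, fun _ => c ∅, fun x hx => by
          simp at hx⟩
      | succ j IHj =>
        intro V c hV
        rw [hsizes_succ] at hV
        have hVne : V.Nonempty := Finset.card_pos.1 (by omega)
        set a₀ := V.min' hVne with ha₀
        have hmem₀ : a₀ ∈ V := V.min'_mem hVne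
        set V' := V.erase a₀ with hV'
        have hV'card : Rk (sizes j) ≤ V'.card := by
          rw [hV', Finset.card_erase_of_mem hmem₀]
          omega
        obtain ⟨A, hAV', hAcard, k₀, hk₀⟩ := hRk (sizes j) α V' (fun F => c (insert a₀ F)) hV'card
        obtain ⟨B, hBA, hBcard, colf, hcolf⟩ := IHj A c (le_of_eq hAcard.symm)
        have ha₀B : a₀ ∉ B := fun h =>
          (Finset.mem_erase.1 (hAV' (hBA h))).1 rfl
        have hlt : ∀ x ∈ B, a₀ < x := by
          intro x hx
          have hxV' := hAV' (hBA hx)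
          rw [hV', Finset.mem_erase] at hxV'
          exact lt_of_le_of_ne (V.min'_le x hxV'.2) (Ne.symm hxV'.1)
        refine ⟨insert a₀ B, ?_, ?_, Function.update colf a₀ k₀, ?_⟩
        · intro x hx
          rcases Finset.mem_insert.1 hx with rfl | hx
          · exact hmem₀
          · exact Finset.erase_subset _ _ (hAV' (hBA hx))
        · rw [Finset.card_insert_of_notMem ha₀B, hBcard]
        · intro x hx F hF hFcard
          rcases Finset.mem_insert.1 hx with rfl | hx
          · -- x = a₀
            have hfilter : (insert a₀ B).filter (a₀ < ·) = B.filter (a₀ < ·) := by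
              rw [Finset.filter_insert, if_neg (lt_irrefl a₀)]
            rw [hfilter] at hF
            have hFA : F ⊆ A := fun y hy => hBA (Finset.mem_filter.1 (hF hy)).1
            rw [Function.update_self]
            exact hk₀ F hFA hFcard
          · -- x ∈ B
            have hxa : x ≠ a₀ := fun h => ha₀B (h ▸ hx)
            have hfilter : (insert a₀ B).filter (x < ·) = B.filter (x < ·) := by
              rw [Finset.filter_insert, if_neg (not_lt.2 (hlt x hx).le)]
            rw [hfilter] at hF
            rw [Function.update_of_ne hxa]
            exact hcolf x hx F hF hFcard
    -- main argument via pigeonhole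
    obtain ⟨B, hBV, hBcard, colf, hcolf⟩ := chain L V c hV
    haveI : Nonempty κ := ⟨c ∅⟩
    have hpig : ∃ k₀ ∈ (Finset.univ : Finset κ),
        (t - 1) < (B.filter (fun x => colf x = k₀)).card := by
      apply Finset.exists_lt_card_fiber_of_mul_lt_card_of_maps_to
      · intro x _; exact Finset.mem_univ _
      · rw [hBcard, Finset.card_univ]
        omega
    obtain ⟨k₀, _, hk₀⟩ := hpig
    have htle : t ≤ (B.filter (fun x => colf x = k₀)).card := by omega
    obtain ⟨A, hAfib, hAcard⟩ :=
      Finset.exists_subset_card_eq htle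
    have hAB : A ⊆ B := hAfib.trans (Finset.filter_subset _ _)
    refine ⟨A, hAB.trans hBV, hAcard, k₀, ?_⟩
    intro F hFA hFcard
    have hFne : F.Nonempty := Finset.card_pos.1 (by omega)
    set x := F.min' hFne with hx
    have hxF : x ∈ F := F.min'_mem hFne
    have hxB : x ∈ B := hAB (hFA hxF)
    have hxfib : colf x = k₀ := (Finset.mem_filter.1 (hAfib (hFA hxF))).2
    have hrest : F.erase x ⊆ B.filter (x < ·) := by
      intro y hy
      rw [Finset.mem_erase] at hy
      rw [Finset.mem_filter]
      exact ⟨hAB (hFA hy.2), lt_of_le_of_ne (F.min'_le y hy.2) (Ne.symm hy.1)⟩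
    have hrestcard : (F.erase x).card = k := by
      rw [Finset.card_erase_of_mem hxF, hFcard]
      omega
    have := hcolf x hxB (F.erase x) hrest hrestcard
    rw [Finset.insert_erase hxF] at this
    rw [this, hxfib]

end CubeDensity
namespace CubeDensity

open Finset

variable {M d : ℕ}

lemma exists_orderEmbOfFin_eq {α : Type*} [LinearOrder α] {s : Finset α} {m : ℕ}
    (h : s.card = m) {p : α} (hp : p ∈ s) : ∃ k : Fin m, s.orderEmbOfFin h k = p := by
  refine ⟨(s.orderIsoOfFin h).symm ⟨p, hp⟩, ?_⟩
  have := (s.orderIsoOfFin h).apply_symm_apply ⟨p, hp⟩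
  calc s.orderEmbOfFin h ((s.orderIsoOfFin h).symm ⟨p, hp⟩)
      = ((s.orderIsoOfFin h) ((s.orderIsoOfFin h).symm ⟨p, hp⟩) : α) := rfl
    _ = p := by rw [this]

open scoped Classical in
lemma card_filter_lt_fin {m : ℕ} (j : Fin m) :
    ((Finset.univ : Finset (Fin m)).filter (fun j' => j' < j)).card = (j : ℕ) := by
  have h : (Finset.univ : Finset (Fin m)).filter (fun j' => j' < j) = Finset.Iio j := by
    ext j'
    simp
  rw [h, Fin.card_Iio]

lemma wt_eq_card (y : Fin d → Bool) :
    (∑ j, (y j).toNat) = ((Finset.univ : Finset (Fin d)).filter (fun j => y j = true)).card := by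
  classical
  rw [Finset.card_filter]
  exact Finset.sum_congr rfl fun j _ => by cases h : y j <;> simp [h]

open scoped Classical in
/-- Core combinatorial lemma: if every sub-`d`-cube of `Q_M` through the origin induces
the *same* configuration `K`, and `M ≥ d(d+1)`, then `K` is weight-determined. -/
theorem config_weight_determined (hd : 1 ≤ d) (hM : d * (d + 1) ≤ M)
    {S : Set (Fin M → Bool)} {K : Set (Fin d → Bool)}
    (hall : ∀ (F : Finset (Fin M)) (hF : F.card = d),
      {u : Fin d → Bool | embed F hF (fun _ => false) u ∈ S} = K)
    {y y' : Fin d → Bool} (hw : (∑ j, (y j).toNat) = ∑ j, (y' j).toNat) :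
    y ∈ K ↔ y' ∈ K := by
  -- the common witness vertex of a given weight
  have claim : ∀ y : Fin d → Bool, (y ∈ K ↔
      (fun i : Fin M => decide ((i : ℕ) % (d + 1) = d ∧ (i : ℕ) / (d + 1)
        < (∑ j, (y j).toNat))) ∈ S) := by
    clear hw y y'
    intro y
    set w := ∑ j, (y j).toNat with hwdef
    set P : Finset (Fin d) := Finset.univ.filter (fun j => y j = true) with hP
    have hwP : P.card = w := (wt_eq_card y).symm
    have hwle : w ≤ d := by
      rw [← hwP]
      calc P.card ≤ (Finset.univ : Finset (Fin d)).card :=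
            Finset.card_le_card (Finset.filter_subset _ _)
        _ = d := by rw [Finset.card_univ, Fintype.card_fin]
    set cnt : Fin d → ℕ := fun j => (P.filter (· < j)).card with hcnt
    have hcnt_le : ∀ j, cnt j ≤ (j : ℕ) := by
      intro j
      calc cnt j ≤ ((Finset.univ : Finset (Fin d)).filter (fun j' => j' < j)).card :=
            Finset.card_le_card (Finset.filter_subset_filter _ (Finset.subset_univ P))
        _ = (j : ℕ) := card_filter_lt_fin j
    have hcnt_lt : ∀ j ∈ P, cnt j < w := by
      intro j hj
      rw [← hwP]
      have hsub : insert j (P.filter (· < j)) ⊆ P := by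
        intro x hx
        rcases Finset.mem_insert.1 hx with rfl | hx
        · exact hj
        · exact (Finset.mem_filter.1 hx).1
      have : (insert j (P.filter (· < j))).card = cnt j + 1 :=
        Finset.card_insert_of_notMem (fun h => lt_irrefl j (Finset.mem_filter.1 h).2)
      calc cnt j < cnt j + 1 := Nat.lt_succ_self _
        _ = (insert j (P.filter (· < j))).card := this.symm
        _ ≤ P.card := Finset.card_le_card hsub
    have hcnt_mono : ∀ {j j' : Fin d}, j ≤ j' → cnt j ≤ cnt j' := by
      intro j j' hjj
      exact Finset.card_le_card (Finset.monotone_filter_right P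
        (fun x _ hx => lt_of_lt_of_le hx hjj))
    have hcnt_strict : ∀ j ∈ P, ∀ j' : Fin d, j < j' → cnt j + 1 ≤ cnt j' := by
      intro j hj j' hjj
      have hsub : insert j (P.filter (· < j)) ⊆ P.filter (· < j') := by
        intro x hx
        rcases Finset.mem_insert.1 hx with rfl | hx
        · exact Finset.mem_filter.2 ⟨hj, hjj⟩
        · have := Finset.mem_filter.1 hx
          exact Finset.mem_filter.2 ⟨this.1, this.2.trans hjj⟩
      have hins : (insert j (P.filter (· < j))).card = cnt j + 1 :=
        Finset.card_insert_of_notMem (fun h => lt_irrefl j (Finset.mem_filter.1 h).2)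
      rw [← hins]
      exact Finset.card_le_card hsub
    set fnat : Fin d → ℕ := fun j =>
      if y j = true then (d + 1) * cnt j + d else (j : ℕ) + (d + 1) * cnt j with hfnat
    have hbound : ∀ j, fnat j < M := by
      intro j
      apply lt_of_lt_of_le _ hM
      simp only [hfnat]
      split_ifs with hyj
      · have h1 : cnt j + 1 ≤ d := hcnt_lt j (Finset.mem_filter.2 ⟨Finset.mem_univ j, hyj⟩)
          |>.trans_le hwle
        have h2 : (d + 1) * (cnt j + 1) ≤ (d + 1) * d := Nat.mul_le_mul_left _ h1
        have h3 : (d + 1) * (cnt j + 1) = (d + 1) * cnt j + d + 1 := by ring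
        have h4 : (d + 1) * d = d * (d + 1) := by ring
        omega
      · have h0 : (j : ℕ) < d := j.isLt
        have h1 : cnt j + 1 ≤ d := by
          have := hcnt_le j
          omega
        have h2 : (d + 1) * (cnt j + 1) ≤ (d + 1) * d := Nat.mul_le_mul_left _ h1
        have h3 : (d + 1) * (cnt j + 1) = (d + 1) * cnt j + d + 1 := by ring
        have h4 : (d + 1) * d = d * (d + 1) := by ring
        omega
    set f : Fin d → Fin M := fun j => ⟨fnat j, hbound j⟩ with hf
    have hsm : StrictMono f := by
      intro j j' hjj
      show fnat j < fnat j'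
      rw [hfnat]
      have h0 : (j : ℕ) < d := j.isLt
      have h0' : (j' : ℕ) < d := j'.isLt
      have hjj' : (j : ℕ) < (j' : ℕ) := hjj
      have hmono := hcnt_mono hjj.le
      have hmul : (d + 1) * cnt j ≤ (d + 1) * cnt j' := Nat.mul_le_mul_left _ hmono
      dsimp only
      split_ifs with hyj hyj' hyj'
      · have hs := hcnt_strict j (Finset.mem_filter.2 ⟨Finset.mem_univ j, hyj⟩) j' hjj
        have : (d + 1) * (cnt j + 1) ≤ (d + 1) * cnt j' := Nat.mul_le_mul_left _ hs
        have he : (d + 1) * (cnt j + 1) = (d + 1) * cnt j + d + 1 := by ring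
        omega
      · have hs := hcnt_strict j (Finset.mem_filter.2 ⟨Finset.mem_univ j, hyj⟩) j' hjj
        have : (d + 1) * (cnt j + 1) ≤ (d + 1) * cnt j' := Nat.mul_le_mul_left _ hs
        have he : (d + 1) * (cnt j + 1) = (d + 1) * cnt j + d + 1 := by ring
        omega
      · omega
      · omega
    have hinj : Function.Injective f := hsm.injective
    set F : Finset (Fin M) := Finset.univ.image f with hF
    have hFcard : F.card = d := by
      rw [hF, Finset.card_image_of_injective _ hinj, Finset.card_univ, Fintype.card_fin]
    have hfemb : ∀ k, F.orderEmbOfFin hFcard k = f k := by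
      intro k
      have := Finset.orderEmbOfFin_unique hFcard
        (f := f) (fun x => Finset.mem_image_of_mem f (Finset.mem_univ x)) hsm
      exact (congrFun this k).symm
    have hembed : embed F hFcard (fun _ => false) y =
        fun i : Fin M => decide ((i : ℕ) % (d + 1) = d ∧ (i : ℕ) / (d + 1) < w) := by
      funext i
      by_cases hiF : i ∈ F
      · obtain ⟨j, _, rfl⟩ := Finset.mem_image.1 hiF
        have hval : embed F hFcard (fun _ => false) y (f j) = y j := by
          rw [← hfemb j, embed_orderEmb]
        rw [hval]
        have hcoe : ((f j : Fin M) : ℕ) = fnat j := rfl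
        cases hyj : y j with
        | true =>
          have hfj : fnat j = (d + 1) * cnt j + d := by rw [hfnat]; simp [hyj]
          have hmod : (fnat j) % (d + 1) = d := by
            rw [hfj, Nat.mul_add_mod]
            exact Nat.mod_eq_of_lt (by omega)
          have hdiv : (fnat j) / (d + 1) = cnt j := by
            rw [hfj, Nat.mul_add_div (by omega)]
            simp [Nat.div_eq_of_lt (by omega : d < d + 1)]
          have hlt : cnt j < w := hcnt_lt j (Finset.mem_filter.2 ⟨Finset.mem_univ j, hyj⟩)
          simp [hcoe, hmod, hdiv, hlt]
        | false =>
          have hfj : fnat j = (j : ℕ) + (d + 1) * cnt j := by rw [hfnat]; simp [hyj]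
          have hmod : (fnat j) % (d + 1) = (j : ℕ) := by
            rw [hfj, Nat.add_mul_mod_self_left]
            exact Nat.mod_eq_of_lt (by omega)
          have hne : (j : ℕ) ≠ d := by have := j.isLt; omega
          simp [hcoe, hmod, hne]
      · rw [embed_not_mem _ _ _ _ hiF]
        by_contra hcon
        have hprop : (i : ℕ) % (d + 1) = d ∧ (i : ℕ) / (d + 1) < w := by
          by_contra hp
          rw [decide_eq_false hp] at hcon
          exact hcon rfl
        obtain ⟨hmod, hdiv⟩ := hprop
        -- construct the preimage index j
        set k : Fin w := ⟨(i : ℕ) / (d + 1), hdiv⟩ with hk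
        set j : Fin d := P.orderEmbOfFin hwP k with hj
        have hjP : j ∈ P := Finset.orderEmbOfFin_mem P hwP k
        have hyj : y j = true := (Finset.mem_filter.1 hjP).2
        have hcntj : cnt j = (k : ℕ) := by
          have himg : P.filter (· < j) =
              (Finset.univ.filter (fun k' : Fin w => k' < k)).image (P.orderEmbOfFin hwP) := by
            ext p
            constructor
            · intro hp
              have hp1 := (Finset.mem_filter.1 hp).1
              have hp2 := (Finset.mem_filter.1 hp).2
              obtain ⟨k', hk'⟩ := exists_orderEmbOfFin_eq hwP hp1
              refine Finset.mem_image.2 ⟨k', Finset.mem_filter.2 ⟨Finset.mem_univ _, ?_⟩, hk'⟩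
              rw [← hk'] at hp2
              exact (P.orderEmbOfFin hwP).strictMono.lt_iff_lt.1 hp2
            · intro hp
              obtain ⟨k', hk', rfl⟩ := Finset.mem_image.1 hp
              have hk'2 := (Finset.mem_filter.1 hk').2
              exact Finset.mem_filter.2 ⟨Finset.orderEmbOfFin_mem P hwP k',
                (P.orderEmbOfFin hwP).strictMono hk'2⟩
          rw [hcnt]
          dsimp only
          rw [himg, Finset.card_image_of_injective _ (P.orderEmbOfFin hwP).injective,
            card_filter_lt_fin]
        have hival : (i : ℕ) = fnat j := by
          have hdm := Nat.div_add_mod (i : ℕ) (d + 1)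
          have hkval : ((k : Fin w) : ℕ) = (i : ℕ) / (d + 1) := rfl
          simp only [hfnat, hyj, if_true]
          rw [hcntj, hkval]
          omega
        have : i = f j := by
          apply Fin.ext
          rw [hival]
        rw [this] at hiF
        exact hiF (Finset.mem_image_of_mem f (Finset.mem_univ j))
    have hKF := hall F hFcard
    rw [← hKF]
    simp only [Set.mem_setOf_eq, hembed]
  rw [claim y, claim y', hw]

end CubeDensity
namespace CubeDensity

open Finset Filter

variable {n d : ℕ}

lemma autMap_xor_apply (ε : Fin d → Bool) (x : Fin d → Bool) :
    autMap d 1 ε (autMap d 1 ε x) = x := by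
  funext i
  simp [autMap]

lemma preimage_autMap (ε : Fin d → Bool) (T : Set (Fin d → Bool)) :
    autMap d 1 ε ⁻¹' T = autMap d 1 ε '' T := by
  ext x
  constructor
  · intro hx
    exact ⟨autMap d 1 ε x, hx, autMap_xor_apply ε x⟩
  · rintro ⟨t, ht, rfl⟩
    show autMap d 1 ε (autMap d 1 ε t) ∈ T
    rw [autMap_xor_apply ε t]
    exact ht

lemma config_xor (F : Finset (Fin n)) (hF : F.card = d) (v : Fin n → Bool)
    (S : Set (Fin n → Bool)) :
    {u : Fin d → Bool |
        embed F hF (fun _ => false) u ∈ {x | (fun i => xor (x i) (v i)) ∈ S}} =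
      autMap d 1 (fun k => v (F.orderEmbOfFin hF k)) '' {u | embed F hF v u ∈ S} := by
  have key : ∀ u : Fin d → Bool,
      (fun i => xor (embed F hF (fun _ => false) u i) (v i)) =
        embed F hF v (autMap d 1 (fun k => v (F.orderEmbOfFin hF k)) u) := by
    intro u
    funext i
    by_cases hiF : i ∈ F
    · obtain ⟨k, rfl⟩ := exists_orderEmbOfFin_eq hF hiF
      rw [embed_orderEmb, embed_orderEmb]
      simp [autMap]
    · rw [embed_not_mem _ _ _ _ hiF, embed_not_mem _ _ _ _ hiF]
      simp
  ext u
  rw [← preimage_autMap]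
  simp only [Set.mem_setOf_eq, Set.mem_preimage]
  rw [key u]

theorem reverse_direction (hd : 1 ≤ d) {H : Set (Fin d → Bool)}
    (hT : Filter.Tendsto (fun n => max (piIn d H n) (piOut d H n))
      Filter.atTop (nhds (1 : ℝ))) : Layered d H := by
  classical
  set M := d * (d + 1) with hMdef
  obtain ⟨N, hN⟩ := hyper_ramsey d (Finset (Fin d → Bool)) M
  set R := N + d with hRdef
  have hdR : d ≤ R := by omega
  have hC1 : (1 : ℝ) ≤ (R.choose d : ℝ) := by exact_mod_cast Nat.choose_pos hdR
  set ε : ℝ := 1 / (2 * (R.choose d : ℝ)) with hεdef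
  have hεpos : 0 < ε := by positivity
  have hεle : ε ≤ 1 / 2 := by
    rw [hεdef, div_le_div_iff₀ (by linarith) (by norm_num)]
    linarith
  have hε01 : 0 ≤ 1 - ε := by linarith
  have hev : ∀ᶠ m in atTop, 1 - ε < max (piIn d H m) (piOut d H m) :=
    hT.eventually (eventually_gt_nhds (by linarith))
  obtain ⟨n, hmax, hnR⟩ := (hev.and (eventually_ge_atTop R)).exists
  obtain ⟨S, v, hg⟩ := exists_gLocal_gt hε01 hmax
  obtain ⟨A, hAcard, hAgood⟩ := exists_allgood_window hdR hnR (by rw [hεdef] at hg; exact hg)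
  -- the normalized configuration of a d-subcube
  set normConfig : ∀ (F : Finset (Fin n)), F.card = d → Set (Fin d → Bool) :=
    fun F hF => autMap d 1 (fun k => v (F.orderEmbOfFin hF k)) ''
      {u | embed F hF v u ∈ S} with hnormdef
  -- Ramsey colouring
  set c : Finset (Fin n) → Finset (Fin d → Bool) := fun F =>
    if h : F.card = d then (Set.toFinite (normConfig F h)).toFinset else ∅ with hcdef
  obtain ⟨A₂, hA₂A, hA₂card, k₀, hmono⟩ := hN (Fin n) A c (by rw [hAcard]; omega)
  set K : Set (Fin d → Bool) := ↑k₀ with hKdef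
  -- goodness of each normalized config within A
  have hnormgood : ∀ (F : Finset (Fin n)) (hF : F.card = d), F ⊆ A →
      ExactCopy d H (normConfig F hF) := by
    intro F hF hFA
    exact (hAgood F hFA hF).image 1 _
  -- monochromatic: configs of subsets of A₂ all equal K
  have hK : ∀ (F : Finset (Fin n)) (hF : F.card = d), F ⊆ A₂ → normConfig F hF = K := by
    intro F hF hFA₂
    have := hmono F hFA₂ hF
    rw [hcdef] at this
    simp only [hF, dif_pos] at this
    rw [hKdef, ← this, Set.Finite.coe_toFinset]
  -- translate S to the origin
  set S0 : Set (Fin n → Bool) := {x | (fun i => xor (x i) (v i)) ∈ S} with hS0def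
  -- restrict to the M-window A₂
  set S3 : Set (Fin M → Bool) := (embed A₂ hA₂card (fun _ => false)) ⁻¹' S0 with hS3def
  have hall : ∀ (F₃ : Finset (Fin M)) (hF₃ : F₃.card = d),
      {u : Fin d → Bool | embed F₃ hF₃ (fun _ => false) u ∈ S3} = K := by
    intro F₃ hF₃
    have hlift := config_liftF A₂ hA₂card F₃ hF₃ (fun _ => false) S0
    have hF : (liftF A₂ hA₂card F₃).card = d := (liftF_card A₂ hA₂card F₃).trans hF₃
    have hxor := config_xor (liftF A₂ hA₂card F₃) hF v S
    have hsub : liftF A₂ hA₂card F₃ ⊆ A₂ := liftF_subset A₂ hA₂card F₃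
    calc {u : Fin d → Bool | embed F₃ hF₃ (fun _ => false) u ∈ S3}
        = {u : Fin d → Bool | embed (liftF A₂ hA₂card F₃) hF (fun _ => false) u ∈ S0} :=
          hlift
      _ = normConfig (liftF A₂ hA₂card F₃) hF := hxor
      _ = K := hK _ hF hsub
  -- some d-subset exists, so K is an exact copy of H
  have hdM : d ≤ M := by
    rw [hMdef]
    exact Nat.le_mul_of_pos_right d (by omega)
  have hHK : ExactCopy d H K := by
    obtain ⟨F₃, _, hF₃card⟩ := Finset.exists_subset_card_eq
      (s := (Finset.univ : Finset (Fin M))) (n := d)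
      (by rw [Finset.card_univ, Fintype.card_fin]; exact hdM)
    have hF : (liftF A₂ hA₂card F₃).card = d := (liftF_card A₂ hA₂card F₃).trans hF₃card
    have hgood := hnormgood (liftF A₂ hA₂card F₃) hF
      ((liftF_subset A₂ hA₂card F₃).trans hA₂A)
    rwa [hK _ hF (liftF_subset A₂ hA₂card F₃)] at hgood
  -- K is weight-determined, hence H is layered
  have hM : d * (d + 1) ≤ M := le_of_eq hMdef.symm
  set W : Set ℕ := {m | ∃ y : Fin d → Bool, y ∈ K ∧ (∑ j, (y j).toNat) = m} with hWdef
  have hKeq : {y : Fin d → Bool | (∑ j, (y j).toNat) ∈ W} = K := by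
    ext y
    simp only [Set.mem_setOf_eq, hWdef]
    constructor
    · rintro ⟨y₀, hy₀K, hy₀w⟩
      exact (config_weight_determined hd hM hall hy₀w).1 hy₀K
    · intro hy
      exact ⟨y, hy, rfl⟩
  refine ⟨W, ?_⟩
  rw [hKeq]
  exact hHK.symm

end CubeDensity
/-- The local `d`-cube density `π(H,d) = max{π_in(H,d), π_out(H,d)}` equals `1` if and
only if `H` is layered.  (Here `π(H,d)` is the limit as `n → ∞` of
`max{π_in(H,d,n), π_out(H,d,n)}`.) -/
theorem localDensity_eq_one_iff_layered (d : ℕ) (hd : 1 ≤ d) (H : Set (Fin d → Bool)) :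
    Filter.Tendsto (fun n => max (CubeDensity.piIn d H n) (CubeDensity.piOut d H n))
      Filter.atTop (nhds (1 : ℝ)) ↔ CubeDensity.Layered d H := by
  exact ⟨fun h => CubeDensity.reverse_direction hd h,
    fun h => CubeDensity.forward_direction hd h⟩
end

section
/- Let G be a simple graph with n vertices, where n is even, and with e edges. Then the number of 3-element subsets of V(G) that induce a subgraph isomorphic to K_{1,2} (the path on 3 vertices) is at most min{ n·C(n/2,2), (e/2)·(n−2) }. -/
open Finset SimpleGraph

private lemma consec_bound (m d k : ℤ) (hd : 0 ≤ d) (hk : 0 ≤ k)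
    (h : d + k = 2 * m + 1) : d * k ≤ (m + 1) * m := by
  rcases le_or_gt d m with h1 | h1
  · nlinarith
  · nlinarith

private lemma eq_of_edge_vertex {V : Type} [DecidableEq V] {x y w x' y' w' : V}
    (h : s(x,y) = s(x',y')) (hw : w = w') : ({x,y,w} : Finset V) = {x',y',w'} := by
  rw [Sym2.eq_iff] at h
  subst hw
  rcases h with ⟨rfl, rfl⟩ | ⟨rfl, rfl⟩
  · rfl
  · ext z; simp; tauto

private lemma perm3 {V : Type} [DecidableEq V] (a b c : V) :
    ({a, c, b} : Finset V) = {a, b, c} := by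
  ext z; simp; tauto

private lemma k12_structure {V : Type} [DecidableEq V] (G : SimpleGraph V) {s : Finset V}
    (h3 : s.card = 3)
    (h : Nonempty (G.induce (s : Set V) ≃g completeBipartiteGraph (Fin 1) (Fin 2))) :
    ∃ a b c : V, a ≠ b ∧ a ≠ c ∧ b ≠ c ∧ s = {a, b, c} ∧
      G.Adj a b ∧ G.Adj a c ∧ ¬ G.Adj b c := by
  classical
  obtain ⟨e⟩ := h
  have hinj := e.symm.toEquiv.injective
  set u0 := e.symm (Sum.inl 0) with hu0
  set u1 := e.symm (Sum.inr 0) with hu1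
  set u2 := e.symm (Sum.inr 1) with hu2
  have hadj : ∀ x y, (G.induce (s:Set V)).Adj (e.symm x) (e.symm y) ↔
      (completeBipartiteGraph (Fin 1) (Fin 2)).Adj x y := fun x y => e.symm.map_adj_iff
  have h01 : u0.1 ≠ u1.1 := fun hv => by
    have := hinj (Subtype.ext hv); simp at this
  have h02 : u0.1 ≠ u2.1 := fun hv => by
    have := hinj (Subtype.ext hv); simp at this
  have h12 : u1.1 ≠ u2.1 := fun hv => by
    have := hinj (Subtype.ext hv); simp at this
  refine ⟨u0.1, u1.1, u2.1, h01, h02, h12, ?_, ?_, ?_, ?_⟩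
  · refine (Finset.eq_of_subset_of_card_le ?_ ?_).symm
    · intro x hx
      simp only [Finset.mem_insert, Finset.mem_singleton] at hx
      rcases hx with h | h | h <;> subst h
      · exact u0.2
      · exact u1.2
      · exact u2.2
    · rw [h3, Finset.card_insert_of_notMem (by simp [h01, h02]),
        Finset.card_insert_of_notMem (by simp [h12]), Finset.card_singleton]
  · have := (hadj (Sum.inl 0) (Sum.inr 0)).mpr (by simp)
    simpa [comap_adj] using this
  · have := (hadj (Sum.inl 0) (Sum.inr 1)).mpr (by simp)
    simpa [comap_adj] using this
  · intro hbc
    have := (hadj (Sum.inr 0) (Sum.inr 1)).mp (by simpa [comap_adj] using hbc)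
    simp at this

/-- A graph with `n` vertices (`n` even) and `e` edges has at most
`min{n·C(n/2,2), (e/2)·(n−2)}` induced copies of `K_{1,2}`. -/
theorem count_induced_K12_le {V : Type} [Fintype V] (G : SimpleGraph V)
    (hV : Even (Fintype.card V)) :
    (Nat.card {s : Finset V // s.card = 3 ∧
        Nonempty (G.induce (s : Set V) ≃g completeBipartiteGraph (Fin 1) (Fin 2))} : ℝ) ≤
      min ((Fintype.card V : ℝ) * ((Fintype.card V / 2 : ℕ).choose 2 : ℕ))
        ((Nat.card G.edgeSet : ℝ) / 2 * ((Fintype.card V : ℝ) - 2)) := by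
  classical
  rcases isEmpty_or_nonempty V with hV0 | hV1
  · have hc : Fintype.card V = 0 := Fintype.card_eq_zero
    have hsub : IsEmpty {s : Finset V // s.card = 3 ∧
        Nonempty (G.induce (s : Set V) ≃g completeBipartiteGraph (Fin 1) (Fin 2))} := by
      constructor
      rintro ⟨s, hs, -⟩
      have : s.card ≤ 0 := by
        calc s.card ≤ (univ : Finset V).card := Finset.card_le_card (Finset.subset_univ s)
          _ = 0 := by rw [Finset.card_univ, hc]
      omega
    have hes : IsEmpty G.edgeSet := by
      constructor
      rintro ⟨p, hp⟩
      induction p with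
      | _ x y => exact hV0.elim x
    rw [Nat.card_of_isEmpty, Nat.card_of_isEmpty, hc]
    norm_num
  · -- main case
    have hn2 : 2 ≤ Fintype.card V := by
      have h1 : 0 < Fintype.card V := Fintype.card_pos
      rcases hV with ⟨m, hm⟩; omega
    set n := Fintype.card V with hn
    set P : Finset V → Prop := fun s => s.card = 3 ∧
        Nonempty (G.induce (s : Set V) ≃g completeBipartiteGraph (Fin 1) (Fin 2)) with hPdef
    have hcard : Nat.card {s : Finset V // P s} = (univ.filter P).card := by
      rw [Nat.card_eq_fintype_card, Fintype.card_subtype]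
    set F := univ.filter P with hF
    -- choose decompositions
    have hQ' : ∀ s : Finset V, ∃ tc : V × V × V, s ∈ F →
        (tc.1 ≠ tc.2.1 ∧ tc.1 ≠ tc.2.2 ∧ tc.2.1 ≠ tc.2.2 ∧ s = {tc.1, tc.2.1, tc.2.2} ∧
          G.Adj tc.1 tc.2.1 ∧ G.Adj tc.1 tc.2.2 ∧ ¬ G.Adj tc.2.1 tc.2.2) := by
      intro s
      by_cases hs : s ∈ F
      · have hs' := hs
        rw [hF, mem_filter] at hs'
        obtain ⟨a, b, c, h⟩ := k12_structure G hs'.2.1 hs'.2.2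
        exact ⟨(a, b, c), fun _ => h⟩
      · exact ⟨(hV1.some, hV1.some, hV1.some), fun h => absurd h hs⟩
    choose tr htr using hQ'
    -- second bound: 2 * F.card ≤ e * (n - 2)
    have key2 : 2 * F.card ≤ G.edgeFinset.card * (n - 2) := by
      set f : Finset V × Bool → (_ : Sym2 V) × V := fun p =>
        if p.2 then ⟨s((tr p.1).1, (tr p.1).2.2), (tr p.1).2.1⟩
        else ⟨s((tr p.1).1, (tr p.1).2.1), (tr p.1).2.2⟩ with hf
      have hffalse : ∀ s : Finset V, f (s, false) =
          ⟨s((tr s).1, (tr s).2.1), (tr s).2.2⟩ := by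
        intro s; rw [hf]; exact if_neg Bool.false_ne_true
      have hftrue : ∀ s : Finset V, f (s, true) =
          ⟨s((tr s).1, (tr s).2.2), (tr s).2.1⟩ := by
        intro s; rw [hf]; exact if_pos rfl
      have hmaps : ∀ p ∈ F ×ˢ (univ : Finset Bool),
          f p ∈ G.edgeFinset.sigma fun e => univ.filter (fun w => ¬ w ∈ e) := by
        rintro ⟨s, b⟩ hp
        rw [Finset.mem_product] at hp
        obtain ⟨hab, hac, hbc, hs, hadjb, hadjc, hnadj⟩ := htr s hp.1
        cases b
        · rw [hffalse]
          simp only [Finset.mem_sigma, mem_edgeFinset, mem_edgeSet, Finset.mem_filter,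
            Finset.mem_univ, true_and, Sym2.mem_iff, not_or]
          exact ⟨hadjb, fun h => hac h.symm, fun h => hbc h.symm⟩
        · rw [hftrue]
          simp only [Finset.mem_sigma, mem_edgeFinset, mem_edgeSet, Finset.mem_filter,
            Finset.mem_univ, true_and, Sym2.mem_iff, not_or]
          exact ⟨hadjc, fun h => hab h.symm, fun h => hbc h⟩
      have hinj : Set.InjOn f ↑(F ×ˢ (univ : Finset Bool)) := by
        rintro ⟨s, b⟩ hp ⟨s', b'⟩ hq hfeq
        simp only [Finset.coe_product, Set.mem_prod, Finset.mem_coe] at hp hq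
        obtain ⟨hab, hac, hbc, hs, hadjb, hadjc, hnadj⟩ := htr s hp.1
        obtain ⟨hab', hac', hbc', hs', hadjb', hadjc', hnadj'⟩ := htr s' hq.1
        cases b <;> cases b'
        · rw [hffalse, hffalse] at hfeq
          injection hfeq with he hw'
          have hss' : s = s' := by rw [hs, hs']; exact eq_of_edge_vertex he hw'
          rw [hss']
        · rw [hffalse, hftrue] at hfeq
          injection hfeq with he hw'
          have hss' : s = s' := by
            rw [hs, hs', ← perm3 (tr s').1 (tr s').2.1 (tr s').2.2]
            exact eq_of_edge_vertex he hw'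
          subst hss'
          exact absurd hw' hbc.symm
        · rw [hftrue, hffalse] at hfeq
          injection hfeq with he hw'
          have hss' : s = s' := by
            rw [hs, hs', ← eq_of_edge_vertex he hw']
            exact (perm3 _ _ _).symm
          subst hss'
          exact absurd hw' hbc
        · rw [hftrue, hftrue] at hfeq
          injection hfeq with he hw'
          have hss' : s = s' := by
            rw [hs, hs', ← perm3 (tr s).1 (tr s).2.1 (tr s).2.2,
              ← perm3 (tr s').1 (tr s').2.1 (tr s').2.2]
            exact eq_of_edge_vertex he hw'
          rw [hss']
      calc 2 * F.card = (F ×ˢ (univ : Finset Bool)).card := by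
            rw [Finset.card_product, Finset.card_univ, Fintype.card_bool, Nat.mul_comm]
        _ ≤ (G.edgeFinset.sigma fun e => univ.filter (fun w => ¬ w ∈ e)).card :=
            Finset.card_le_card_of_injOn f hmaps hinj
        _ ≤ G.edgeFinset.card * (n - 2) := by
            rw [Finset.card_sigma]
            have hbd : ∀ ed ∈ G.edgeFinset,
                (univ.filter (fun w => ¬ w ∈ ed)).card ≤ n - 2 := by
              intro ed hed
              have hd : ¬ ed.IsDiag := G.not_isDiag_of_mem_edgeSet (mem_edgeFinset.mp hed)
              induction ed with
              | _ u v =>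
                have huv : u ≠ v := by simpa [Sym2.mk_isDiag_iff] using hd
                calc (univ.filter (fun w => ¬ w ∈ s(u, v))).card
                    ≤ ((univ : Finset V) \ {u, v}).card := by
                      apply Finset.card_le_card
                      intro x hx
                      simp only [Finset.mem_filter, Sym2.mem_iff, not_or] at hx
                      simp [hx.2.1, hx.2.2]
                  _ = n - 2 := by
                      rw [Finset.card_sdiff_of_subset (Finset.subset_univ _), Finset.card_univ,
                        Finset.card_pair huv]
            simpa using Finset.sum_le_card_nsmul _ _ _ hbd
    -- first bound: 2 * F.card ≤ n * (2 * choose (n/2) 2)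
    have key1 : 2 * F.card ≤ n * (2 * Nat.choose (n / 2) 2) := by
      set f : Finset V × Bool → (_ : V) × V × V := fun p =>
        if p.2 then ⟨(tr p.1).2.2, ((tr p.1).1, (tr p.1).2.1)⟩
        else ⟨(tr p.1).2.1, ((tr p.1).1, (tr p.1).2.2)⟩ with hf
      have hffalse : ∀ s : Finset V, f (s, false) =
          ⟨(tr s).2.1, ((tr s).1, (tr s).2.2)⟩ := by
        intro s; rw [hf]; exact if_neg Bool.false_ne_true
      have hftrue : ∀ s : Finset V, f (s, true) =
          ⟨(tr s).2.2, ((tr s).1, (tr s).2.1)⟩ := by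
        intro s; rw [hf]; exact if_pos rfl
      have hmaps : ∀ p ∈ F ×ˢ (univ : Finset Bool),
          f p ∈ (univ : Finset V).sigma fun x =>
            G.neighborFinset x ×ˢ ((univ : Finset V) \ insert x (G.neighborFinset x)) := by
        rintro ⟨s, b⟩ hp
        rw [Finset.mem_product] at hp
        obtain ⟨hab, hac, hbc, hs, hadjb, hadjc, hnadj⟩ := htr s hp.1
        cases b
        · rw [hffalse]
          simp only [Finset.mem_sigma, Finset.mem_univ, true_and, Finset.mem_product,
            mem_neighborFinset, Finset.mem_sdiff, Finset.mem_insert, not_or]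
          exact ⟨hadjb.symm, fun h => hbc h.symm, fun h => hnadj h⟩
        · rw [hftrue]
          simp only [Finset.mem_sigma, Finset.mem_univ, true_and, Finset.mem_product,
            mem_neighborFinset, Finset.mem_sdiff, Finset.mem_insert, not_or]
          exact ⟨hadjc.symm, hbc, fun h => hnadj h.symm⟩
      have hinj : Set.InjOn f ↑(F ×ˢ (univ : Finset Bool)) := by
        rintro ⟨s, b⟩ hp ⟨s', b'⟩ hq hfeq
        simp only [Finset.coe_product, Set.mem_prod, Finset.mem_coe] at hp hq
        obtain ⟨hab, hac, hbc, hs, hadjb, hadjc, hnadj⟩ := htr s hp.1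
        obtain ⟨hab', hac', hbc', hs', hadjb', hadjc', hnadj'⟩ := htr s' hq.1
        cases b <;> cases b'
        · rw [hffalse, hffalse] at hfeq
          injection hfeq with h1 h2
          injection h2 with ha hc
          have hss' : s = s' := by rw [hs, hs', h1, ha, hc]
          rw [hss']
        · rw [hffalse, hftrue] at hfeq
          injection hfeq with h1 h2
          injection h2 with ha hc
          have hss' : s = s' := by
            rw [hs, hs', h1, ha, hc]
            exact perm3 _ _ _
          subst hss'
          exact absurd h1 hbc
        · rw [hftrue, hffalse] at hfeq
          injection hfeq with h1 h2
          injection h2 with ha hc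
          have hss' : s = s' := by
            rw [hs, hs', h1, ha, hc]
            exact (perm3 _ _ _).symm
          subst hss'
          exact absurd h1 hbc.symm
        · rw [hftrue, hftrue] at hfeq
          injection hfeq with h1 h2
          injection h2 with ha hb
          have hss' : s = s' := by rw [hs, hs', h1, ha, hb]
          rw [hss']
      have hterm : ∀ x : V, G.degree x * (n - (G.degree x + 1)) ≤
          2 * Nat.choose (n / 2) 2 := by
        intro x
        obtain ⟨m, hm⟩ := hV
        have hmn : n = 2 * m := by omega
        have hm1 : 1 ≤ m := by omega
        have hn2' : n / 2 = m := by omega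
        have hdeg : G.degree x < n := G.degree_lt_card_verts x
        have hchoose : 2 * Nat.choose (n / 2) 2 = m * (m - 1) := by
          rw [hn2', Nat.choose_two_right]
          have hev : 2 ∣ m * (m - 1) := by
            rcases Nat.even_or_odd m with he | ho
            · exact Dvd.dvd.mul_right he.two_dvd _
            · obtain ⟨k, hk⟩ := ho
              have h1 : m - 1 = 2 * k := by omega
              rw [h1]
              exact Dvd.dvd.mul_left ⟨k, rfl⟩ _
          omega
        rw [hchoose]
        have hsum : G.degree x + (n - (G.degree x + 1)) = 2 * (m - 1) + 1 := by omega
        have hcb := consec_bound ((m : ℤ) - 1) (G.degree x) ((n - (G.degree x + 1) : ℕ))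
          (by positivity) (by positivity)
          (by
            have : ((G.degree x : ℤ)) + ((n - (G.degree x + 1) : ℕ) : ℤ) =
                ((G.degree x + (n - (G.degree x + 1)) : ℕ) : ℤ) := by push_cast; ring
            rw [this, hsum]
            push_cast [Nat.cast_sub hm1]
            ring)
        have hcast : ((m : ℤ) - 1 + 1) * ((m : ℤ) - 1) = ((m * (m - 1) : ℕ) : ℤ) := by
          push_cast [Nat.cast_sub hm1]; ring
        rw [hcast] at hcb
        exact_mod_cast hcb
      calc 2 * F.card = (F ×ˢ (univ : Finset Bool)).card := by
            rw [Finset.card_product, Finset.card_univ, Fintype.card_bool, Nat.mul_comm]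
        _ ≤ ((univ : Finset V).sigma fun x =>
              G.neighborFinset x ×ˢ ((univ : Finset V) \ insert x (G.neighborFinset x))).card :=
            Finset.card_le_card_of_injOn f hmaps hinj
        _ ≤ n * (2 * Nat.choose (n / 2) 2) := by
            rw [Finset.card_sigma]
            have hbd : ∀ x ∈ (univ : Finset V),
                (G.neighborFinset x ×ˢ ((univ : Finset V) \ insert x (G.neighborFinset x))).card
                  ≤ 2 * Nat.choose (n / 2) 2 := by
              intro x _
              rw [Finset.card_product, Finset.card_sdiff_of_subset (Finset.subset_univ _),
                Finset.card_univ, Finset.card_insert_of_notMem (by simp),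
                SimpleGraph.card_neighborFinset_eq_degree]
              exact hterm x
            have hfin := Finset.sum_le_card_nsmul _ _ _ hbd
            simpa [Finset.card_univ] using hfin
    -- conclude
    rw [hcard]
    have hkey1 : F.card ≤ n * Nat.choose (n / 2) 2 := by
      have h2 : n * (2 * Nat.choose (n / 2) 2) = 2 * (n * Nat.choose (n / 2) 2) := by ring
      rw [h2] at key1
      omega
    have hedge : Nat.card G.edgeSet = G.edgeFinset.card := by
      rw [Nat.card_eq_fintype_card, SimpleGraph.edgeFinset_card]
    refine le_min ?_ ?_
    · exact_mod_cast hkey1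
    · rw [hedge]
      have h2 : ((2 * F.card : ℕ) : ℝ) ≤ ((G.edgeFinset.card * (n - 2) : ℕ) : ℝ) :=
        Nat.cast_le.mpr key2
      push_cast [Nat.cast_sub hn2] at h2
      linarith
end
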